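/- arXiv:2002.04536 — 12 statements merged into one kernel-verified Lean document; each statement's English description precedes it below -/
import Mathlib

section
/- Let r : ℕ → ℕ with r n ≥ 1 for all n, and for each n ∈ ℕ let A_n be an r(n)×r(n+1) real matrix, B_n an r(n)×r(n) real matrix, and (for n ≥ 1) C_n an r(n)×r(n−1) real matrix. Suppose there exist symmetric real matrices Π_n of size r(n)×r(n) such that for all n: (i) Π_n·A_n = C_{n+1}ᵀ·Π_{n+1}; (ii) Π_n·B_n = B_nᵀ·Π_n; and the stochasticity conditions hold: B_0·e + A_0·e = e, and C_n·e + B_n·e + A_n·e = e for all n ≥ 1, where e denotes the all-ones column vector of the appropriate size. Then the row vector π whose n-th block is (Π_n e)ᵀ is invariant for the block tridiagonal matrix P with diagonal blocks B_n, upper blocks A_n and lower blocks C_n; explicitly, eᵀΠ_0 B_0 + eᵀΠ_1 C_1 = eᵀΠ_0, and for every n ≥ 1, eᵀΠ_{n−1} A_{n−1} + eᵀΠ_n B_n + eᵀΠ_{n+1} C_{n+1} = eᵀΠ_n. -/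
open Matrix

/-- Invariant measure for a discrete-time QBD process: if the block tridiagonal
stochastic matrix `P = tridiag(C_{n+1}, B_n, A_n)` (rows summing to one) admits
symmetric matrices `Π_n` with `Π_n A_n = C_{n+1}ᵀ Π_{n+1}` and `Π_n B_n = B_nᵀ Π_n`,
then the row vector `π` with blocks `(Π_n e)ᵀ` satisfies `π P = π`.
Here `C n` denotes the block `C_{n+1}` of size `r(n+1) × r(n)`. -/
theorem stmt_1 (r : ℕ → ℕ) (hr : ∀ n, 1 ≤ r n)
    (A : (n : ℕ) → Matrix (Fin (r n)) (Fin (r (n + 1))) ℝ)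
    (B : (n : ℕ) → Matrix (Fin (r n)) (Fin (r n)) ℝ)
    (C : (n : ℕ) → Matrix (Fin (r (n + 1))) (Fin (r n)) ℝ)
    (Pi : (n : ℕ) → Matrix (Fin (r n)) (Fin (r n)) ℝ)
    (hPisymm : ∀ n, (Pi n)ᵀ = Pi n)
    (hsym1 : ∀ n, Pi n * A n = (C n)ᵀ * Pi (n + 1))
    (hsym2 : ∀ n, Pi n * B n = (B n)ᵀ * Pi n)
    (hstoch0 : B 0 *ᵥ (fun _ => (1 : ℝ)) + A 0 *ᵥ (fun _ => (1 : ℝ)) = fun _ => (1 : ℝ))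
    (hstoch : ∀ n, C n *ᵥ (fun _ => (1 : ℝ)) + B (n + 1) *ᵥ (fun _ => (1 : ℝ))
      + A (n + 1) *ᵥ (fun _ => (1 : ℝ)) = fun _ => (1 : ℝ)) :
    ((fun _ => (1 : ℝ)) ᵥ* (Pi 0 * B 0) + (fun _ => (1 : ℝ)) ᵥ* (Pi 1 * C 0)
        = (fun _ => (1 : ℝ)) ᵥ* Pi 0)
    ∧ ∀ n, (fun _ => (1 : ℝ)) ᵥ* (Pi n * A n)
        + (fun _ => (1 : ℝ)) ᵥ* (Pi (n + 1) * B (n + 1))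
        + (fun _ => (1 : ℝ)) ᵥ* (Pi (n + 2) * C (n + 1))
        = (fun _ => (1 : ℝ)) ᵥ* Pi (n + 1) := by
  have key : ∀ n, Pi (n + 1) * C n = (A n)ᵀ * Pi n := by
    intro n
    have h := congrArg Matrix.transpose (hsym1 n)
    simpa [Matrix.transpose_mul, hPisymm] using h.symm
  constructor
  · rw [hsym2 0, key 0]
    simp only [← Matrix.vecMul_vecMul, Matrix.vecMul_transpose]
    rw [← Matrix.add_vecMul, hstoch0]
  · intro n
    rw [hsym1 n, hsym2 (n + 1), key (n + 1)]
    simp only [← Matrix.vecMul_vecMul, Matrix.vecMul_transpose]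
    rw [← Matrix.add_vecMul, ← Matrix.add_vecMul, hstoch n]
end

section
/- Let α, β, γ, δ > −1 be real numbers and let S = (0,1)×(0,1). (i) For every τ with 0 < τ < 1, the integral ∫_S x^α(1−x)^β y^γ(1−y)^δ / (1 − τx − (1−τ)y) dx dy is infinite if and only if β + δ ≤ −1. (ii) For τ = 1, the integral ∫_S x^α(1−x)^{β−1} y^γ(1−y)^δ dx dy is infinite if and only if β ≤ 0. (iii) For τ = 0, the integral ∫_S x^α(1−x)^β y^γ(1−y)^{δ−1} dx dy is infinite if and only if δ ≤ 0. -/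
open MeasureTheory Set
open scoped ENNReal NNReal

namespace QBDstmt3

/-! ### One-dimensional auxiliary results -/

/-- lower bound for rpow on an interval `[c*u, c]`. -/
lemma rpow_ge_min {t c u : ℝ} (hc : 0 < c) (h1 : c * u ≤ t) (h2 : t ≤ c)
    (hu : 0 < u) (hu1 : u ≤ 1) (e : ℝ) : c ^ e * min 1 (u ^ e) ≤ t ^ e := by
  have ht : 0 < t := lt_of_lt_of_le (by positivity) h1
  rcases le_or_gt 0 e with he | he
  · calc c ^ e * min 1 (u ^ e) ≤ c ^ e * u ^ e := by
          have : (0:ℝ) ≤ c ^ e := Real.rpow_nonneg hc.le e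
          exact mul_le_mul_of_nonneg_left (min_le_right _ _) this
    _ = (c * u) ^ e := (Real.mul_rpow hc.le hu.le).symm
    _ ≤ t ^ e := Real.rpow_le_rpow (by positivity) h1 he
  · have h1' : (1:ℝ) ≤ u ^ e := Real.one_le_rpow_of_pos_of_le_one_of_nonpos hu hu1 he.le
    calc c ^ e * min 1 (u ^ e) ≤ c ^ e * 1 := by
          have : (0:ℝ) ≤ c ^ e := Real.rpow_nonneg hc.le e
          exact mul_le_mul_of_nonneg_left (min_le_left _ _) this
    _ = c ^ e := mul_one _
    _ ≤ t ^ e := Real.rpow_le_rpow_of_nonpos ht h2 he.le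

/-- upper bound for rpow on `[u,1]`. -/
lemma rpow_le_max {t u : ℝ} (hu : 0 < u) (h1 : u ≤ t) (h2 : t ≤ 1) (e : ℝ) :
    t ^ e ≤ max 1 (u ^ e) := by
  rcases le_or_gt 0 e with he | he
  · exact le_max_of_le_left (Real.rpow_le_one (by linarith) h2 he)
  · exact le_max_of_le_right (Real.rpow_le_rpow_of_nonpos hu h1 he.le)

lemma f_mble (a b : ℝ) : Measurable fun x : ℝ => x ^ a * (1 - x) ^ b := by fun_prop

noncomputable def J (a b : ℝ) : ℝ≥0∞ :=
  ∫⁻ x in Ioo (0:ℝ) 1, ENNReal.ofReal (x ^ a * (1 - x) ^ b)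

lemma beta_integrableOn {a b : ℝ} (ha : -1 < a) (hb : -1 < b) :
    IntegrableOn (fun x : ℝ => x ^ a * (1 - x) ^ b) (Ioo 0 1) := by
  have h1 : IntegrableOn (fun x : ℝ => x ^ a) (Ioc 0 (1/2)) :=
    (intervalIntegral.intervalIntegrable_rpow' (a := 0) (b := 1/2) ha).1
  have h2' := (intervalIntegral.intervalIntegrable_rpow' (a := (1:ℝ)/2) (b := 0) hb).comp_sub_left 1
  norm_num at h2'
  have h2 : IntegrableOn (fun x : ℝ => (1 - x) ^ b) (Ioc (1/2) 1) := h2'.1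
  have hm := (f_mble a b)
  have p1 : IntegrableOn (fun x : ℝ => x ^ a * (1 - x) ^ b) (Ioc 0 (1/2)) := by
    refine Integrable.mono' (h1.const_mul (max 1 ((1/2:ℝ) ^ b)))
      hm.aestronglyMeasurable ?_
    filter_upwards [ae_restrict_mem measurableSet_Ioc] with x hx
    have hx0 : (0:ℝ) < x := hx.1
    have hx1 : (0:ℝ) < 1 - x := by simp only [mem_Ioc] at hx; linarith
    rw [Real.norm_eq_abs, abs_of_nonneg (by positivity)]
    rw [mul_comm (max 1 ((1/2:ℝ) ^ b)) _]
    refine mul_le_mul_of_nonneg_left ?_ (Real.rpow_nonneg hx0.le a)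
    exact rpow_le_max (by norm_num) (by simp only [mem_Ioc] at hx; linarith)
      (by linarith) b
  have p2 : IntegrableOn (fun x : ℝ => x ^ a * (1 - x) ^ b) (Ioc (1/2) 1) := by
    refine Integrable.mono' (h2.const_mul (max 1 ((1/2:ℝ) ^ a)))
      hm.aestronglyMeasurable ?_
    filter_upwards [ae_restrict_mem measurableSet_Ioc] with x hx
    simp only [mem_Ioc] at hx
    have hx0 : (0:ℝ) < x := by linarith
    have hx1 : (0:ℝ) ≤ 1 - x := by linarith
    rw [Real.norm_eq_abs, abs_of_nonneg (by positivity)]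
    rw [mul_comm (max 1 ((1/2:ℝ) ^ a)) _, mul_comm (x ^ a) _]
    refine mul_le_mul_of_nonneg_left ?_ (Real.rpow_nonneg hx1 b)
    exact rpow_le_max (by norm_num) hx.1.le hx.2 a
  have h3 : IntegrableOn (fun x : ℝ => x ^ a * (1 - x) ^ b) (Ioc 0 (1/2) ∪ Ioc (1/2) 1) :=
    p1.union p2
  have hsub : Ioo (0:ℝ) 1 ⊆ Ioc 0 (1/2) ∪ Ioc (1/2) 1 := by
    rw [Set.Ioc_union_Ioc_eq_Ioc (by norm_num) (by norm_num)]
    exact Ioo_subset_Ioc_self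
  exact h3.mono_set hsub

lemma J_ne_top {a b : ℝ} (ha : -1 < a) (hb : -1 < b) : J a b ≠ ⊤ := by
  rw [J]
  rw [lintegral_ofReal_ne_top_iff_integrable (f_mble a b).aestronglyMeasurable ?_]
  · exact beta_integrableOn ha hb
  · filter_upwards [ae_restrict_mem measurableSet_Ioo] with x hx
    have h1 : (0:ℝ) < x := hx.1
    have h2 : (0:ℝ) < 1 - x := by simp only [mem_Ioo] at hx; linarith
    positivity

lemma rpow_lint_top {e : ℝ} (he : e ≤ -1) :
    ∫⁻ x in Ioo (0:ℝ) (1/2), ENNReal.ofReal (x ^ e) = ⊤ := by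
  by_contra h
  have hm : Measurable fun x : ℝ => x ^ e := by fun_prop
  have hi : IntegrableOn (fun x : ℝ => x ^ e) (Ioo 0 (1/2)) := by
    refine (lintegral_ofReal_ne_top_iff_integrable hm.aestronglyMeasurable ?_).1 h
    filter_upwards [ae_restrict_mem measurableSet_Ioo] with x hx
    exact Real.rpow_nonneg hx.1.le e
  rw [intervalIntegral.integrableOn_Ioo_rpow_iff (by norm_num : (0:ℝ) < 1/2)] at hi
  linarith

noncomputable def reflHomeo : ℝ ≃ₜ ℝ where
  toFun := fun x => 1 - x
  invFun := fun x => 1 - x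
  left_inv := fun x => by ring
  right_inv := fun x => by ring
  continuous_toFun := continuous_const.sub continuous_id
  continuous_invFun := continuous_const.sub continuous_id

lemma refl_emb : MeasurableEmbedding (fun x : ℝ => 1 - x) :=
  reflHomeo.isClosedEmbedding.measurableEmbedding

lemma refl_mp : MeasurePreserving (fun x : ℝ => 1 - x) volume volume :=
  Measure.measurePreserving_sub_left volume 1

lemma J_symm (a b : ℝ) : J a b = J b a := by
  have h := refl_mp.setLIntegral_comp_emb refl_emb
    (fun y => ENNReal.ofReal (y ^ b * (1 - y) ^ a)) (Ioo 0 1)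
  rw [show (fun x : ℝ => 1 - x) '' Ioo 0 1 = Ioo 0 1 by
    rw [Set.image_const_sub_Ioo]; norm_num] at h
  rw [J, J, ← h]
  apply lintegral_congr_ae
  filter_upwards [] with x
  rw [sub_sub_cancel, mul_comm]

lemma refl_rpow_top {e : ℝ} (he : e ≤ -1) :
    ∫⁻ x in Ioo ((1:ℝ)/2) 1, ENNReal.ofReal ((1 - x) ^ e) = ⊤ := by
  have h := refl_mp.setLIntegral_comp_emb refl_emb
    (fun v => ENNReal.ofReal (v ^ e)) (Ioo (1/2) 1)
  rw [show (fun x : ℝ => 1 - x) '' Ioo (1/2) 1 = Ioo 0 (1/2) by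
    rw [Set.image_const_sub_Ioo]; norm_num] at h
  rw [h]
  exact rpow_lint_top he

lemma J_top_left {a : ℝ} (b : ℝ) (ha : a ≤ -1) : J a b = ⊤ := by
  rw [J, eq_top_iff]
  set c := min 1 ((1/2:ℝ) ^ b) with hc
  have hcpos : 0 < c := lt_min one_pos (Real.rpow_pos_of_pos (by norm_num) b)
  calc (⊤ : ℝ≥0∞) = ENNReal.ofReal c * ⊤ :=
        (ENNReal.mul_top (ENNReal.ofReal_pos.2 hcpos).ne').symm
  _ = ENNReal.ofReal c * ∫⁻ x in Ioo (0:ℝ) (1/2), ENNReal.ofReal (x ^ a) := by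
        rw [rpow_lint_top ha]
  _ = ∫⁻ x in Ioo (0:ℝ) (1/2), ENNReal.ofReal c * ENNReal.ofReal (x ^ a) := by
        rw [lintegral_const_mul _ (by fun_prop)]
  _ ≤ ∫⁻ x in Ioo (0:ℝ) (1/2), ENNReal.ofReal (x ^ a * (1 - x) ^ b) := by
        refine setLIntegral_mono (by fun_prop) ?_
        intro x hx
        simp only [mem_Ioo] at hx
        rw [← ENNReal.ofReal_mul hcpos.le]
        apply ENNReal.ofReal_le_ofReal
        rw [mul_comm c _]
        refine mul_le_mul_of_nonneg_left ?_ (Real.rpow_nonneg hx.1.le a)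
        rcases le_or_gt 0 b with hb | hb
        · calc c ≤ (1/2:ℝ) ^ b := min_le_right _ _
            _ ≤ (1 - x) ^ b := Real.rpow_le_rpow (by norm_num) (by linarith) hb
        · calc c ≤ 1 := min_le_left _ _
            _ ≤ (1 - x) ^ b :=
              Real.one_le_rpow_of_pos_of_le_one_of_nonpos (by linarith) (by linarith) hb.le
  _ ≤ ∫⁻ x in Ioo (0:ℝ) 1, ENNReal.ofReal (x ^ a * (1 - x) ^ b) :=
        lintegral_mono_set (Ioo_subset_Ioo le_rfl (by norm_num))

lemma J_eq_top_iff (a b : ℝ) : J a b = ⊤ ↔ a ≤ -1 ∨ b ≤ -1 := by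
  constructor
  · intro h
    by_contra hc
    push_neg at hc
    exact J_ne_top (by linarith [hc.1]) (by linarith [hc.2]) h
  · rintro (h | h)
    · exact J_top_left b h
    · rw [J_symm]; exact J_top_left a h

lemma J_ne_zero (a b : ℝ) : J a b ≠ 0 := by
  rw [J]
  intro h
  have hm : Measurable fun x : ℝ => ENNReal.ofReal (x ^ a * (1 - x) ^ b) := by fun_prop
  have hpos := (lintegral_pos_iff_support (μ := volume.restrict (Ioo 0 1)) hm).2 ?_
  · exact hpos.ne' h
  · have hsub : Ioo (0:ℝ) 1 ⊆ Function.support fun x => ENNReal.ofReal (x ^ a * (1 - x) ^ b) := by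
      intro x hx
      simp only [Function.mem_support, ne_eq, ENNReal.ofReal_eq_zero, not_le]
      have h1 : (0:ℝ) < x := hx.1
      have h2 : (0:ℝ) < 1 - x := by simp only [mem_Ioo] at hx; linarith
      positivity
    calc (0:ℝ≥0∞) < volume.restrict (Ioo (0:ℝ) 1) (Ioo 0 1) := by
          rw [Measure.restrict_apply_self]; simp
    _ ≤ _ := measure_mono hsub

/-! ### Two-dimensional auxiliary results -/

lemma prod_lintegral_fun (f g : ℝ → ℝ≥0∞) (hf : Measurable f) (hg : Measurable g) :
    (∫⁻ p : ℝ × ℝ in Ioo (0:ℝ) 1 ×ˢ Ioo (0:ℝ) 1, f p.1 * g p.2) =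
    (∫⁻ x in Ioo (0:ℝ) 1, f x) * ∫⁻ y in Ioo (0:ℝ) 1, g y := by
  rw [Measure.volume_eq_prod, ← Measure.prod_restrict]
  exact lintegral_prod_mul hf.aemeasurable hg.aemeasurable

lemma prod_lintegral (a b c d : ℝ) :
    (∫⁻ p : ℝ × ℝ in Ioo (0:ℝ) 1 ×ˢ Ioo (0:ℝ) 1,
      ENNReal.ofReal (p.1 ^ a * (1 - p.1) ^ b * p.2 ^ c * (1 - p.2) ^ d)) =
    J a b * J c d := by
  have h1 : (∫⁻ p : ℝ × ℝ in Ioo (0:ℝ) 1 ×ˢ Ioo (0:ℝ) 1,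
      ENNReal.ofReal (p.1 ^ a * (1 - p.1) ^ b * p.2 ^ c * (1 - p.2) ^ d)) =
      ∫⁻ p : ℝ × ℝ in Ioo (0:ℝ) 1 ×ˢ Ioo (0:ℝ) 1,
        ENNReal.ofReal (p.1 ^ a * (1 - p.1) ^ b) * ENNReal.ofReal (p.2 ^ c * (1 - p.2) ^ d) := by
    apply lintegral_congr_ae
    filter_upwards [ae_restrict_mem (measurableSet_Ioo.prod measurableSet_Ioo)] with p hp
    have hx : p.1 ∈ Ioo (0:ℝ) 1 := hp.1
    have hnn : (0:ℝ) ≤ p.1 ^ a * (1 - p.1) ^ b := by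
      have h1 : (0:ℝ) < p.1 := hx.1
      have h2 : (0:ℝ) < 1 - p.1 := by simp only [mem_Ioo] at hx; linarith
      positivity
    rw [← ENNReal.ofReal_mul hnn]
    ring_nf
  rw [h1]
  exact prod_lintegral_fun (fun x => ENNReal.ofReal (x ^ a * (1 - x) ^ b))
    (fun y => ENNReal.ofReal (y ^ c * (1 - y) ^ d)) (by fun_prop) (by fun_prop)

/-- Divergence in the interior case. -/
lemma interior_top {α β γ δ τ : ℝ} (hτ0 : 0 < τ) (hτ1 : τ < 1) (hsum : β + δ ≤ -1) :
    (∫⁻ p : ℝ × ℝ in Ioo (0 : ℝ) 1 ×ˢ Ioo (0 : ℝ) 1,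
        ENNReal.ofReal (p.1 ^ α * (1 - p.1) ^ β * p.2 ^ γ * (1 - p.2) ^ δ /
          (1 - τ * p.1 - (1 - τ) * p.2))) = ⊤ := by
  set mα := min 1 ((1/2:ℝ) ^ α) with hmα
  set mγ := min 1 ((1/2:ℝ) ^ γ) with hmγ
  set kδ := min 1 ((1/2:ℝ) ^ δ) with hkδ
  have hmαpos : 0 < mα := lt_min one_pos (Real.rpow_pos_of_pos (by norm_num) α)
  have hmγpos : 0 < mγ := lt_min one_pos (Real.rpow_pos_of_pos (by norm_num) γ)
  have hkδpos : 0 < kδ := lt_min one_pos (Real.rpow_pos_of_pos (by norm_num) δ)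
  set c1 := mα * mγ * kδ with hc1
  have hc1pos : 0 < c1 := by positivity
  have hmeas : Measurable fun p : ℝ × ℝ =>
      ENNReal.ofReal (p.1 ^ α * (1 - p.1) ^ β * p.2 ^ γ * (1 - p.2) ^ δ /
        (1 - τ * p.1 - (1 - τ) * p.2)) := by fun_prop
  -- the key inner-integral lower bound
  have key : ∀ x ∈ Ioo ((1:ℝ)/2) 1,
      ENNReal.ofReal (c1/2) * ENNReal.ofReal ((1 - x) ^ (β + δ)) ≤
      ∫⁻ y in Ioo (0:ℝ) 1,
        ENNReal.ofReal (x ^ α * (1 - x) ^ β * y ^ γ * (1 - y) ^ δ /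
          (1 - τ * x - (1 - τ) * y)) := by
    intro x hx
    simp only [mem_Ioo] at hx
    have hx1pos : (0:ℝ) < 1 - x := by linarith
    have hsub : Ioo x ((1+x)/2) ⊆ Ioo (0:ℝ) 1 := by
      intro y hy; simp only [mem_Ioo] at hy ⊢
      constructor <;> [linarith; linarith]
    have hpt : ∀ y ∈ Ioo x ((1+x)/2),
        ENNReal.ofReal (c1 * (1 - x) ^ (β + δ - 1)) ≤
        ENNReal.ofReal (x ^ α * (1 - x) ^ β * y ^ γ * (1 - y) ^ δ /
          (1 - τ * x - (1 - τ) * y)) := by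
      intro y hy
      simp only [mem_Ioo] at hy
      have hy0 : (0:ℝ) < y := by linarith
      have hy1 : y < 1 := by nlinarith
      have hy1pos : (0:ℝ) < 1 - y := by linarith
      have hyx : 1 - y ≤ 1 - x := by linarith
      have hyx2 : (1 - x) * (1/2) ≤ 1 - y := by nlinarith
      apply ENNReal.ofReal_le_ofReal
      have hdpos : 0 < 1 - τ * x - (1 - τ) * y := by nlinarith
      have hdle : 1 - τ * x - (1 - τ) * y ≤ 1 - x := by nlinarith
      have bα : mα ≤ x ^ α := by
        have h := rpow_ge_min (c := 1) (u := 1/2) (t := x) one_pos (by linarith) hx.2.le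
          (by norm_num) (by norm_num) α
        rwa [Real.one_rpow, one_mul] at h
      have bγ : mγ ≤ y ^ γ := by
        have h := rpow_ge_min (c := 1) (u := 1/2) (t := y) one_pos (by linarith) hy1.le
          (by norm_num) (by norm_num) γ
        rwa [Real.one_rpow, one_mul] at h
      have bδ : (1 - x) ^ δ * kδ ≤ (1 - y) ^ δ :=
        rpow_ge_min hx1pos hyx2 hyx (by norm_num) (by norm_num) δ
      have h1 : (0:ℝ) ≤ (1 - x) ^ β := Real.rpow_nonneg hx1pos.le β
      have h2 : (0:ℝ) ≤ (1 - x) ^ δ := Real.rpow_nonneg hx1pos.le δ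
      have h3 : (0:ℝ) ≤ x ^ α := Real.rpow_nonneg (by linarith : (0:ℝ) ≤ x) α
      have h4 : (0:ℝ) ≤ y ^ γ := Real.rpow_nonneg hy0.le γ
      have hw : c1 * ((1 - x) ^ β * (1 - x) ^ δ) ≤
          x ^ α * (1 - x) ^ β * y ^ γ * (1 - y) ^ δ := by
        calc c1 * ((1 - x) ^ β * (1 - x) ^ δ)
            = mα * ((1 - x) ^ β) * mγ * ((1 - x) ^ δ * kδ) := by rw [hc1]; ring
        _ ≤ x ^ α * (1 - x) ^ β * y ^ γ * (1 - y) ^ δ := by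
            apply mul_le_mul ?_ bδ (by positivity) (by positivity)
            apply mul_le_mul ?_ bγ hmγpos.le (by positivity)
            exact mul_le_mul bα le_rfl h1 h3
      have hwnn : (0:ℝ) ≤ x ^ α * (1 - x) ^ β * y ^ γ * (1 - y) ^ δ := by positivity
      calc c1 * (1 - x) ^ (β + δ - 1)
          = c1 * ((1 - x) ^ β * (1 - x) ^ δ) / (1 - x) := by
            rw [← Real.rpow_add hx1pos]
            rw [show (1 - x) ^ (β + δ - 1) = (1 - x) ^ (β + δ) / (1 - x) by
              rw [← Real.rpow_sub_one hx1pos.ne']]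
            ring
      _ ≤ (x ^ α * (1 - x) ^ β * y ^ γ * (1 - y) ^ δ) / (1 - x) :=
            div_le_div_of_nonneg_right hw hx1pos.le
      _ ≤ (x ^ α * (1 - x) ^ β * y ^ γ * (1 - y) ^ δ) /
            (1 - τ * x - (1 - τ) * y) :=
            div_le_div_of_nonneg_left hwnn hdpos hdle
    calc ENNReal.ofReal (c1/2) * ENNReal.ofReal ((1 - x) ^ (β + δ))
        = ENNReal.ofReal (c1 * (1 - x) ^ (β + δ - 1)) * ENNReal.ofReal ((1 - x)/2) := by
          rw [← ENNReal.ofReal_mul (by positivity), ← ENNReal.ofReal_mul (by positivity)]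
          congr 1
          have hxx : (1 - x) ^ (β + δ - 1) * (1 - x) = (1 - x) ^ (β + δ) := by
            rw [← Real.rpow_add_one hx1pos.ne' (β + δ - 1)]
            ring_nf
          calc c1/2 * (1 - x) ^ (β + δ)
              = c1 * ((1 - x) ^ (β + δ - 1) * (1 - x)) / 2 := by rw [hxx]; ring
          _ = c1 * (1 - x) ^ (β + δ - 1) * ((1 - x)/2) := by ring
    _ = ENNReal.ofReal (c1 * (1 - x) ^ (β + δ - 1)) * volume (Ioo x ((1+x)/2)) := by
          rw [Real.volume_Ioo]
          congr 1
          ring_nf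
    _ = ∫⁻ _ in Ioo x ((1+x)/2), ENNReal.ofReal (c1 * (1 - x) ^ (β + δ - 1)) := by
          rw [setLIntegral_const]
    _ ≤ ∫⁻ y in Ioo x ((1+x)/2),
          ENNReal.ofReal (x ^ α * (1 - x) ^ β * y ^ γ * (1 - y) ^ δ /
            (1 - τ * x - (1 - τ) * y)) := by
          apply lintegral_mono_ae
          filter_upwards [ae_restrict_mem measurableSet_Ioo] with y hy
          exact hpt y hy
    _ ≤ ∫⁻ y in Ioo (0:ℝ) 1,
          ENNReal.ofReal (x ^ α * (1 - x) ^ β * y ^ γ * (1 - y) ^ δ /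
            (1 - τ * x - (1 - τ) * y)) := lintegral_mono_set hsub
  rw [Measure.volume_eq_prod, ← Measure.prod_restrict,
    lintegral_prod _ hmeas.aemeasurable]
  rw [eq_top_iff]
  calc (⊤:ℝ≥0∞) = ENNReal.ofReal (c1/2) * ⊤ :=
        (ENNReal.mul_top (ENNReal.ofReal_pos.2 (by positivity)).ne').symm
  _ = ENNReal.ofReal (c1/2) * ∫⁻ x in Ioo ((1:ℝ)/2) 1, ENNReal.ofReal ((1 - x) ^ (β + δ)) := by
        rw [refl_rpow_top (by linarith : β + δ ≤ -1)]
  _ = ∫⁻ x in Ioo ((1:ℝ)/2) 1,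
        ENNReal.ofReal (c1/2) * ENNReal.ofReal ((1 - x) ^ (β + δ)) := by
        rw [lintegral_const_mul _ (by fun_prop)]
  _ ≤ ∫⁻ x in Ioo ((1:ℝ)/2) 1, ∫⁻ y in Ioo (0:ℝ) 1,
        ENNReal.ofReal (x ^ α * (1 - x) ^ β * y ^ γ * (1 - y) ^ δ /
          (1 - τ * x - (1 - τ) * y)) := by
        apply lintegral_mono_ae
        filter_upwards [ae_restrict_mem measurableSet_Ioo] with x hx
        exact key x hx
  _ ≤ ∫⁻ x in Ioo (0:ℝ) 1, ∫⁻ y in Ioo (0:ℝ) 1,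
        ENNReal.ofReal (x ^ α * (1 - x) ^ β * y ^ γ * (1 - y) ^ δ /
          (1 - τ * x - (1 - τ) * y)) :=
        lintegral_mono_set (Ioo_subset_Ioo (by norm_num) le_rfl)


/-- Finiteness in the interior case. -/
lemma interior_fin {α β γ δ τ : ℝ} (hα : -1 < α) (hβ : -1 < β) (hγ : -1 < γ) (hδ : -1 < δ)
    (hτ0 : 0 < τ) (hτ1 : τ < 1) (hsum : -1 < β + δ) :
    (∫⁻ p : ℝ × ℝ in Ioo (0 : ℝ) 1 ×ˢ Ioo (0 : ℝ) 1,
        ENNReal.ofReal (p.1 ^ α * (1 - p.1) ^ β * p.2 ^ γ * (1 - p.2) ^ δ /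
          (1 - τ * p.1 - (1 - τ) * p.2))) ≠ ⊤ := by
  have hτ1pos : (0:ℝ) < 1 - τ := by linarith
  set s := (max 0 (-δ) + min 1 (β+1))/2 with hs
  have hlt : max 0 (-δ) < min 1 (β+1) :=
    max_lt (lt_min one_pos (by linarith)) (lt_min (by linarith) (by linarith))
  have hs0 : 0 ≤ s := by
    have h1 := le_max_left 0 (-δ)
    simp only [hs]; linarith
  have hs1 : s ≤ 1 := by
    have h1 := min_le_left 1 (β+1)
    simp only [hs]; linarith
  have hsβ : s < β + 1 := by
    have h1 := min_le_right 1 (β+1)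
    simp only [hs]; linarith
  have hsδ : -δ < s := by
    have h1 := le_max_right 0 (-δ)
    simp only [hs]; linarith
  set C := τ ^ (-s) * (1-τ) ^ (-(1-s)) with hC
  have hCpos : 0 < C := by positivity
  have hbound : (∫⁻ p : ℝ × ℝ in Ioo (0 : ℝ) 1 ×ˢ Ioo (0 : ℝ) 1,
      ENNReal.ofReal (p.1 ^ α * (1 - p.1) ^ β * p.2 ^ γ * (1 - p.2) ^ δ /
        (1 - τ * p.1 - (1 - τ) * p.2))) ≤
      ∫⁻ p : ℝ × ℝ in Ioo (0 : ℝ) 1 ×ˢ Ioo (0 : ℝ) 1,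
        ENNReal.ofReal C * (ENNReal.ofReal (p.1 ^ α * (1 - p.1) ^ (β - s)) *
          ENNReal.ofReal (p.2 ^ γ * (1 - p.2) ^ (δ - (1 - s)))) := by
    apply lintegral_mono_ae
    filter_upwards [ae_restrict_mem (measurableSet_Ioo.prod measurableSet_Ioo)] with p hp
    obtain ⟨hp1, hp2⟩ := hp
    simp only [mem_Ioo] at hp1 hp2
    set x := p.1
    set y := p.2
    have hx0 : (0:ℝ) < x := hp1.1
    have hx1 : (0:ℝ) < 1 - x := by linarith [hp1.2]
    have hy0 : (0:ℝ) < y := hp2.1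
    have hy1 : (0:ℝ) < 1 - y := by linarith [hp2.2]
    have hdpos : 0 < 1 - τ * x - (1 - τ) * y := by nlinarith
    have hGMpos : 0 < (τ * (1-x)) ^ s * ((1-τ) * (1-y)) ^ (1-s) := by positivity
    have hgm : (τ * (1-x)) ^ s * ((1-τ) * (1-y)) ^ (1-s) ≤ 1 - τ * x - (1 - τ) * y := by
      have h := Real.geom_mean_le_arith_mean2_weighted hs0 (by linarith : (0:ℝ) ≤ 1 - s)
        (mul_nonneg hτ0.le hx1.le) (mul_nonneg hτ1pos.le hy1.le) (by ring)
      nlinarith [mul_nonneg (mul_nonneg hs0 hτ1pos.le) hy1.le,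
        mul_nonneg (mul_nonneg (by linarith : (0:ℝ) ≤ 1 - s) hτ0.le) hx1.le]
    have hwnn : (0:ℝ) ≤ x ^ α * (1 - x) ^ β * y ^ γ * (1 - y) ^ δ := by positivity
    have hkey : x ^ α * (1 - x) ^ β * y ^ γ * (1 - y) ^ δ / (1 - τ * x - (1 - τ) * y) ≤
        C * ((x ^ α * (1 - x) ^ (β - s)) * (y ^ γ * (1 - y) ^ (δ - (1 - s)))) := by
      have step1 : x ^ α * (1 - x) ^ β * y ^ γ * (1 - y) ^ δ / (1 - τ * x - (1 - τ) * y) ≤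
          x ^ α * (1 - x) ^ β * y ^ γ * (1 - y) ^ δ /
            ((τ * (1-x)) ^ s * ((1-τ) * (1-y)) ^ (1-s)) :=
        div_le_div_of_nonneg_left hwnn hGMpos hgm
      have ne1 : τ ^ s ≠ 0 := (Real.rpow_pos_of_pos hτ0 s).ne'
      have ne2 : (1-τ) ^ (1-s) ≠ 0 := (Real.rpow_pos_of_pos hτ1pos (1-s)).ne'
      have ne3 : (1-x) ^ s ≠ 0 := (Real.rpow_pos_of_pos hx1 s).ne'
      have ne4 : (1-y) ^ (1-s) ≠ 0 := (Real.rpow_pos_of_pos hy1 (1-s)).ne'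
      have hmain : C * ((x ^ α * (1 - x) ^ (β - s)) * (y ^ γ * (1 - y) ^ (δ - (1 - s)))) *
          ((τ * (1-x)) ^ s * ((1-τ) * (1-y)) ^ (1-s)) =
          x ^ α * (1 - x) ^ β * y ^ γ * (1 - y) ^ δ := by
        rw [Real.mul_rpow hτ0.le hx1.le, Real.mul_rpow hτ1pos.le hy1.le, hC]
        rw [show τ ^ (-s) * (1-τ) ^ (-(1-s)) *
            ((x ^ α * (1 - x) ^ (β - s)) * (y ^ γ * (1 - y) ^ (δ - (1 - s)))) *
            (τ ^ s * (1-x) ^ s * ((1-τ) ^ (1-s) * (1-y) ^ (1-s))) =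
            (τ ^ (-s) * τ ^ s) * ((1-τ) ^ (-(1-s)) * (1-τ) ^ (1-s)) * x ^ α *
            ((1-x) ^ (β-s) * (1-x) ^ s) * y ^ γ *
            ((1-y) ^ (δ-(1-s)) * (1-y) ^ (1-s)) from by ring]
        rw [← Real.rpow_add hτ0, ← Real.rpow_add hτ1pos, ← Real.rpow_add hx1,
          ← Real.rpow_add hy1]
        simp only [neg_add_cancel, sub_add_cancel, Real.rpow_zero, one_mul]
      have step2 : x ^ α * (1 - x) ^ β * y ^ γ * (1 - y) ^ δ /
          ((τ * (1-x)) ^ s * ((1-τ) * (1-y)) ^ (1-s)) =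
          C * ((x ^ α * (1 - x) ^ (β - s)) * (y ^ γ * (1 - y) ^ (δ - (1 - s)))) := by
        rw [div_eq_iff hGMpos.ne', ← hmain]
      linarith [step1, step2.le, step2.ge]
    calc ENNReal.ofReal (x ^ α * (1 - x) ^ β * y ^ γ * (1 - y) ^ δ /
          (1 - τ * x - (1 - τ) * y))
        ≤ ENNReal.ofReal (C * ((x ^ α * (1 - x) ^ (β - s)) *
            (y ^ γ * (1 - y) ^ (δ - (1 - s))))) := ENNReal.ofReal_le_ofReal hkey
    _ = ENNReal.ofReal C * ENNReal.ofReal ((x ^ α * (1 - x) ^ (β - s)) *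
            (y ^ γ * (1 - y) ^ (δ - (1 - s)))) := ENNReal.ofReal_mul hCpos.le
    _ = ENNReal.ofReal C * (ENNReal.ofReal (x ^ α * (1 - x) ^ (β - s)) *
            ENNReal.ofReal (y ^ γ * (1 - y) ^ (δ - (1 - s)))) := by
          rw [ENNReal.ofReal_mul (show (0:ℝ) ≤ x ^ α * (1 - x) ^ (β - s) by positivity)]
  have heq : (∫⁻ p : ℝ × ℝ in Ioo (0 : ℝ) 1 ×ˢ Ioo (0 : ℝ) 1,
      ENNReal.ofReal C * (ENNReal.ofReal (p.1 ^ α * (1 - p.1) ^ (β - s)) *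
        ENNReal.ofReal (p.2 ^ γ * (1 - p.2) ^ (δ - (1 - s))))) =
      ENNReal.ofReal C * (J α (β - s) * J γ (δ - (1 - s))) := by
    rw [lintegral_const_mul _ (by fun_prop)]
    congr 1
    exact prod_lintegral_fun (fun x => ENNReal.ofReal (x ^ α * (1 - x) ^ (β - s)))
      (fun y => ENNReal.ofReal (y ^ γ * (1 - y) ^ (δ - (1 - s)))) (by fun_prop) (by fun_prop)
  rw [heq] at hbound
  have hfin : ENNReal.ofReal C * (J α (β - s) * J γ (δ - (1 - s))) ≠ ⊤ :=
    ENNReal.mul_ne_top ENNReal.ofReal_ne_top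
      (ENNReal.mul_ne_top (J_ne_top hα (by linarith)) (J_ne_top hγ (by linarith)))
  exact fun h => hfin (eq_top_iff.2 (h ▸ hbound))

end QBDstmt3

open QBDstmt3 in
/-- Recurrence criterion for the discrete-time QBD processes associated with the
product Jacobi polynomials on the unit square: the Lebesgue integral of the weight
divided by `1 − τx − (1−τ)y` over the open square is infinite iff `β + δ ≤ −1`
(for `0 < τ < 1`), iff `β ≤ 0` when `τ = 1` and iff `δ ≤ 0` when `τ = 0`. -/
theorem stmt_3 (α β γ δ : ℝ) (hα : -1 < α) (hβ : -1 < β) (hγ : -1 < γ) (hδ : -1 < δ) :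
    (∀ τ : ℝ, 0 < τ → τ < 1 →
      ((∫⁻ p : ℝ × ℝ in Ioo (0 : ℝ) 1 ×ˢ Ioo (0 : ℝ) 1,
          ENNReal.ofReal (p.1 ^ α * (1 - p.1) ^ β * p.2 ^ γ * (1 - p.2) ^ δ /
            (1 - τ * p.1 - (1 - τ) * p.2))) = ⊤ ↔ β + δ ≤ -1)) ∧
    ((∫⁻ p : ℝ × ℝ in Ioo (0 : ℝ) 1 ×ˢ Ioo (0 : ℝ) 1,
        ENNReal.ofReal (p.1 ^ α * (1 - p.1) ^ (β - 1) * p.2 ^ γ * (1 - p.2) ^ δ)) = ⊤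
      ↔ β ≤ 0) ∧
    ((∫⁻ p : ℝ × ℝ in Ioo (0 : ℝ) 1 ×ˢ Ioo (0 : ℝ) 1,
        ENNReal.ofReal (p.1 ^ α * (1 - p.1) ^ β * p.2 ^ γ * (1 - p.2) ^ (δ - 1))) = ⊤
      ↔ δ ≤ 0) := by
  refine ⟨fun τ hτ0 hτ1 => ⟨fun h => ?_, fun h => interior_top hτ0 hτ1 h⟩, ?_, ?_⟩
  · by_contra hc
    push_neg at hc
    exact interior_fin hα hβ hγ hδ hτ0 hτ1 hc h
  · rw [prod_lintegral, ENNReal.mul_eq_top]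
    constructor
    · rintro (⟨-, h⟩ | ⟨h, -⟩)
      · rcases (J_eq_top_iff _ _).1 h with h' | h' <;> linarith
      · rcases (J_eq_top_iff _ _).1 h with h' | h' <;> linarith
    · intro h
      exact Or.inr ⟨(J_eq_top_iff _ _).2 (Or.inr (by linarith)), J_ne_zero _ _⟩
  · rw [prod_lintegral, ENNReal.mul_eq_top]
    constructor
    · rintro (⟨-, h⟩ | ⟨h, -⟩)
      · rcases (J_eq_top_iff _ _).1 h with h' | h' <;> linarith
      · rcases (J_eq_top_iff _ _).1 h with h' | h' <;> linarith
    · intro h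
      exact Or.inl ⟨J_ne_zero _ _, (J_eq_top_iff _ _).2 (Or.inr (by linarith))⟩
end

section
/- Let α, β > −1 be real numbers and let C = (0,∞)×(0,∞). (i) For every τ₁ > 0 and τ₂ > 0, the integral ∫_C x^α y^β e^{−x−y} / (τ₁x + τ₂y) dx dy is infinite if and only if α + β ≤ −1. (ii) For τ₁ = 0 and τ₂ > 0, the integral ∫_C x^α y^{β−1} e^{−x−y} dx dy is infinite if and only if β ≤ 0; symmetrically for τ₂ = 0, τ₁ > 0 it is infinite if and only if α ≤ 0. -/
open MeasureTheory Set Real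

lemma gammaFin (s : ℝ) (hs : -1 < s) :
    ∫⁻ x in Ioi (0:ℝ), ENNReal.ofReal (x ^ s * Real.exp (-x)) < ⊤ := by
  have h := Real.GammaIntegral_convergent (s := s + 1) (by linarith)
  simp only [add_sub_cancel_right] at h
  have h2 : IntegrableOn (fun x : ℝ => x ^ s * Real.exp (-x)) (Ioi 0) := by
    simpa [mul_comm] using h
  exact h2.setLIntegral_lt_top

lemma rpowTop (s : ℝ) (hs : s ≤ -1) :
    ∫⁻ x in Ioo (0:ℝ) 1, ENNReal.ofReal (x ^ s) = ⊤ := by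
  by_contra h
  have hne : ∫⁻ x in Ioo (0:ℝ) 1, ENNReal.ofReal (x ^ s) < ⊤ := lt_top_iff_ne_top.2 h
  have hnn : 0 ≤ᵐ[volume.restrict (Ioo (0:ℝ) 1)] fun x => x ^ s := by
    filter_upwards [ae_restrict_mem measurableSet_Ioo] with x hx
    exact Real.rpow_nonneg hx.1.le s
  have hint : IntegrableOn (fun x : ℝ => x ^ s) (Ioo 0 1) := by
    refine ⟨(Measurable.aestronglyMeasurable (by fun_prop)), ?_⟩
    rw [hasFiniteIntegral_iff_ofReal hnn]
    exact hne
  rw [intervalIntegral.integrableOn_Ioo_rpow_iff zero_lt_one] at hint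
  linarith

lemma expTop (s c k : ℝ) (hs : s ≤ -1) (hc : 0 < c) (hk : 0 ≤ k) :
    ∫⁻ x in Ioi (0:ℝ), ENNReal.ofReal (c * (x ^ s * Real.exp (-(k * x)))) = ⊤ := by
  rw [eq_top_iff]
  calc (⊤ : ENNReal) = ENNReal.ofReal (c * Real.exp (-k)) * ∫⁻ x in Ioo (0:ℝ) 1, ENNReal.ofReal (x ^ s) := by
        rw [rpowTop s hs, ENNReal.mul_top (by positivity)]
    _ = ∫⁻ x in Ioo (0:ℝ) 1, ENNReal.ofReal (c * Real.exp (-k)) * ENNReal.ofReal (x ^ s) := by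
        rw [lintegral_const_mul' _ _ ENNReal.ofReal_ne_top]
    _ ≤ ∫⁻ x in Ioo (0:ℝ) 1, ENNReal.ofReal (c * (x ^ s * Real.exp (-(k * x)))) := by
        refine setLIntegral_mono_ae (by fun_prop) ?_
        filter_upwards with x hx
        rw [← ENNReal.ofReal_mul (by positivity)]
        apply ENNReal.ofReal_le_ofReal
        have h1 : Real.exp (-k) ≤ Real.exp (-(k * x)) := by
          apply Real.exp_le_exp.2
          nlinarith [hx.1, hx.2]
        have h2 : (0:ℝ) ≤ x ^ s := Real.rpow_nonneg hx.1.le s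
        rw [show c * Real.exp (-k) * x ^ s = c * (x ^ s * Real.exp (-k)) by ring]
        exact mul_le_mul_of_nonneg_left (mul_le_mul_of_nonneg_left h1 h2) hc.le
    _ ≤ _ := lintegral_mono_set Ioo_subset_Ioi_self

lemma gammaTop (s : ℝ) (hs : s ≤ -1) :
    ∫⁻ x in Ioi (0:ℝ), ENNReal.ofReal (x ^ s * Real.exp (-x)) = ⊤ := by
  rw [← expTop s 1 1 hs one_pos zero_le_one]
  refine lintegral_congr fun x => ?_
  norm_num

lemma innerEval (a : ℝ) (ha : -1 < a) {y : ℝ} (hy : 0 < y) :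
    ∫⁻ x in Ioo (0:ℝ) y, ENNReal.ofReal (x ^ a) = ENNReal.ofReal (y ^ (a+1) / (a+1)) := by
  have hint : IntegrableOn (fun x : ℝ => x ^ a) (Ioo 0 y) :=
    (intervalIntegral.integrableOn_Ioo_rpow_iff hy).2 ha
  have hnn : 0 ≤ᵐ[volume.restrict (Ioo (0:ℝ) y)] fun x => x ^ a := by
    filter_upwards [ae_restrict_mem measurableSet_Ioo] with x hx
    exact Real.rpow_nonneg hx.1.le a
  rw [← ofReal_integral_eq_lintegral_ofReal hint hnn]
  congr 1
  rw [← integral_Ioc_eq_integral_Ioo, ← intervalIntegral.integral_of_le hy.le,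
    integral_rpow (Or.inl ha), Real.zero_rpow (by linarith), sub_zero]

lemma gammaEq (s : ℝ) (hs : -1 < s) :
    ∫⁻ x in Ioi (0:ℝ), ENNReal.ofReal (x ^ s * Real.exp (-x))
      = ENNReal.ofReal (Real.Gamma (s+1)) := by
  have h := Real.GammaIntegral_convergent (s := s + 1) (by linarith)
  simp only [add_sub_cancel_right] at h
  have h2 : IntegrableOn (fun x : ℝ => x ^ s * Real.exp (-x)) (Ioi 0) := by
    simpa [mul_comm] using h
  have hnn : 0 ≤ᵐ[volume.restrict (Ioi (0:ℝ))] fun x => x ^ s * Real.exp (-x) := by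
    filter_upwards [ae_restrict_mem measurableSet_Ioi] with x hx
    exact mul_nonneg (Real.rpow_nonneg (le_of_lt hx) s) (Real.exp_nonneg _)
  rw [← ofReal_integral_eq_lintegral_ofReal h2 hnn]
  congr 1
  rw [Real.Gamma_eq_integral (by linarith)]
  simp only [add_sub_cancel_right]
  exact setIntegral_congr_fun measurableSet_Ioi (fun x hx => mul_comm _ _)

lemma sliceA (f : ℝ × ℝ → ENNReal) (hf : Measurable f) :
    ∫⁻ p in {p : ℝ × ℝ | p.1 ∈ Ioo 0 p.2}, f p
      = ∫⁻ y in Ioi (0:ℝ), ∫⁻ x in Ioo 0 y, f (x, y) := by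
  have hA : MeasurableSet {p : ℝ × ℝ | p.1 ∈ Ioo 0 p.2} :=
    (measurableSet_lt measurable_const measurable_fst).inter
      (measurableSet_lt measurable_fst measurable_snd)
  rw [← lintegral_indicator hA]
  rw [Measure.volume_eq_prod, lintegral_prod_symm _ ((hf.indicator hA).aemeasurable)]
  have key : ∀ y : ℝ, (∫⁻ x, ({p : ℝ × ℝ | p.1 ∈ Ioo 0 p.2}).indicator f (x, y))
      = ∫⁻ x in Ioo 0 y, f (x, y) := by
    intro y
    rw [← lintegral_indicator measurableSet_Ioo]
    apply lintegral_congr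
    intro x
    rfl
  simp_rw [key]
  rw [← lintegral_add_compl (fun y => ∫⁻ x in Ioo 0 y, f (x, y)) measurableSet_Ioi]
  have h0 : ∫⁻ y in (Ioi (0:ℝ))ᶜ, (∫⁻ x in Ioo 0 y, f (x, y)) = 0 := by
    rw [setLIntegral_congr_fun measurableSet_Ioi.compl
      (fun y hy => ?_), lintegral_zero]
    rw [Ioo_eq_empty (by simpa using hy)]
    simp
  rw [h0, add_zero]

lemma sliceB (f : ℝ × ℝ → ENNReal) (hf : Measurable f) :
    ∫⁻ p in {p : ℝ × ℝ | p.2 ∈ Ioc 0 p.1}, f p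
      = ∫⁻ x in Ioi (0:ℝ), ∫⁻ y in Ioo 0 x, f (x, y) := by
  have hB : MeasurableSet {p : ℝ × ℝ | p.2 ∈ Ioc 0 p.1} :=
    (measurableSet_lt measurable_const measurable_snd).inter
      (measurableSet_le measurable_snd measurable_fst)
  rw [← lintegral_indicator hB]
  rw [Measure.volume_eq_prod, lintegral_prod _ ((hf.indicator hB).aemeasurable)]
  have key : ∀ x : ℝ, (∫⁻ y, ({p : ℝ × ℝ | p.2 ∈ Ioc 0 p.1}).indicator f (x, y))
      = ∫⁻ y in Ioo 0 x, f (x, y) := by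
    intro x
    rw [setLIntegral_congr (Ioo_ae_eq_Ioc (a := (0:ℝ)) (b := x))]
    rw [← lintegral_indicator measurableSet_Ioc]
    apply lintegral_congr
    intro y
    rfl
  simp_rw [key]
  rw [← lintegral_add_compl (fun x => ∫⁻ y in Ioo 0 x, f (x, y)) measurableSet_Ioi]
  have h0 : ∫⁻ x in (Ioi (0:ℝ))ᶜ, (∫⁻ y in Ioo 0 x, f (x, y)) = 0 := by
    rw [setLIntegral_congr_fun measurableSet_Ioi.compl
      (fun x hx => ?_), lintegral_zero]
    rw [Ioo_eq_empty (by simpa using hx)]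
    simp
  rw [h0, add_zero]

lemma combineEval (a b τ : ℝ) (ha : -1 < a) (hτ : 0 < τ) {s k : ℝ} (hs : 0 < s) :
    ENNReal.ofReal (s ^ (a+1) / (a+1)) * ENNReal.ofReal (s ^ b * Real.exp (-(k*s)) / (τ * s))
      = ENNReal.ofReal ((1 / ((a+1) * τ)) * (s ^ (a+b) * Real.exp (-(k*s)))) := by
  have ha1 : (0:ℝ) < a + 1 := by linarith
  rw [← ENNReal.ofReal_mul (div_nonneg (Real.rpow_nonneg hs.le _) ha1.le)]
  congr 1
  have e1 : s ^ (a+1) * s ^ b = s ^ (a+b) * s := by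
    rw [← Real.rpow_add hs, ← Real.rpow_add_one hs.ne' (a+b)]
    congr 1
    ring
  have e0 : s ^ (a+1) / (a+1) * (s ^ b * Real.exp (-(k*s)) / (τ * s))
      = (s ^ (a+1) * s ^ b) * Real.exp (-(k*s)) * ((a+1)⁻¹ * τ⁻¹ * s⁻¹) := by
    ring
  rw [e0, e1]
  have e2 : s ^ (a+b) * s * Real.exp (-(k*s)) * ((a+1)⁻¹ * τ⁻¹ * s⁻¹)
      = s ^ (a+b) * Real.exp (-(k*s)) * ((a+1)⁻¹ * τ⁻¹) * (s * s⁻¹) := by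
    ring
  rw [e2, mul_inv_cancel₀ hs.ne', mul_one, one_div, mul_inv]
  ring

lemma halfFin (a b τa τb : ℝ) (ha : -1 < a) (hab : -1 < a + b) (hτa : 0 ≤ τa) (hτb : 0 < τb) :
    ∫⁻ s in Ioi (0:ℝ), ∫⁻ t in Ioo 0 s,
      ENNReal.ofReal (t ^ a * s ^ b * Real.exp (-t - s) / (τa * t + τb * s)) < ⊤ := by
  have key : ∀ s ∈ Ioi (0:ℝ), (∫⁻ t in Ioo 0 s,
      ENNReal.ofReal (t ^ a * s ^ b * Real.exp (-t - s) / (τa * t + τb * s)))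
      ≤ ENNReal.ofReal ((1 / ((a+1) * τb)) * (s ^ (a+b) * Real.exp (-(1*s)))) := by
    intro s hs
    rw [mem_Ioi] at hs
    have step1 : (∫⁻ t in Ioo 0 s,
        ENNReal.ofReal (t ^ a * s ^ b * Real.exp (-t - s) / (τa * t + τb * s)))
        ≤ ∫⁻ t in Ioo 0 s, ENNReal.ofReal (t ^ a) * ENNReal.ofReal (s ^ b * Real.exp (-(1*s)) / (τb * s)) := by
      refine setLIntegral_mono_ae (by fun_prop) ?_
      filter_upwards with t ht
      rw [← ENNReal.ofReal_mul (Real.rpow_nonneg ht.1.le a)]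
      apply ENNReal.ofReal_le_ofReal
      have hD : (0:ℝ) < τa * t + τb * s := by nlinarith [mul_nonneg hτa ht.1.le]
      have hdiv : Real.exp (-t - s) / (τa * t + τb * s) ≤ Real.exp (-(1*s)) / (τb * s) :=
        div_le_div₀ (Real.exp_nonneg _) (Real.exp_le_exp.2 (by linarith [ht.1])) (by positivity)
          (by nlinarith [mul_nonneg hτa ht.1.le])
      calc t ^ a * s ^ b * Real.exp (-t - s) / (τa * t + τb * s)
          = t ^ a * (s ^ b * (Real.exp (-t - s) / (τa * t + τb * s))) := by ring
        _ ≤ t ^ a * (s ^ b * (Real.exp (-(1*s)) / (τb * s))) :=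
            mul_le_mul_of_nonneg_left
              (mul_le_mul_of_nonneg_left hdiv (Real.rpow_nonneg hs.le b))
              (Real.rpow_nonneg ht.1.le a)
        _ = t ^ a * (s ^ b * Real.exp (-(1*s)) / (τb * s)) := by ring
    refine step1.trans (le_of_eq ?_)
    rw [lintegral_mul_const' _ _ ENNReal.ofReal_ne_top, innerEval a ha hs,
      combineEval a b τb ha hτb hs]
  calc (∫⁻ s in Ioi (0:ℝ), ∫⁻ t in Ioo 0 s,
        ENNReal.ofReal (t ^ a * s ^ b * Real.exp (-t - s) / (τa * t + τb * s)))
      ≤ ∫⁻ s in Ioi (0:ℝ),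
          ENNReal.ofReal ((1 / ((a+1) * τb)) * (s ^ (a+b) * Real.exp (-(1*s)))) := by
        refine setLIntegral_mono_ae (by fun_prop) ?_
        filter_upwards with s hs
        exact key s hs
    _ = ENNReal.ofReal (1 / ((a+1) * τb)) *
        ∫⁻ s in Ioi (0:ℝ), ENNReal.ofReal (s ^ (a+b) * Real.exp (-(1*s))) := by
        rw [← lintegral_const_mul' _ _ ENNReal.ofReal_ne_top]
        refine setLIntegral_congr_fun measurableSet_Ioi (fun s hs => ?_)
        rw [← ENNReal.ofReal_mul (le_of_lt (one_div_pos.mpr (mul_pos (by linarith : (0:ℝ) < a + 1) hτb)))]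
    _ < ⊤ := by
        refine ENNReal.mul_lt_top ENNReal.ofReal_lt_top ?_
        simpa using gammaFin (a+b) hab

lemma halfTop (a b τa τb : ℝ) (ha : -1 < a) (hab : a + b ≤ -1) (hτa : 0 ≤ τa) (hτb : 0 < τb) :
    ∫⁻ s in Ioi (0:ℝ), ∫⁻ t in Ioo 0 s,
      ENNReal.ofReal (t ^ a * s ^ b * Real.exp (-t - s) / (τa * t + τb * s)) = ⊤ := by
  have key : ∀ s ∈ Ioi (0:ℝ),
      ENNReal.ofReal ((1 / ((a+1) * (τa + τb))) * (s ^ (a+b) * Real.exp (-(2*s))))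
      ≤ (∫⁻ t in Ioo 0 s,
        ENNReal.ofReal (t ^ a * s ^ b * Real.exp (-t - s) / (τa * t + τb * s))) := by
    intro s hs
    rw [mem_Ioi] at hs
    have step1 : (∫⁻ t in Ioo 0 s,
        ENNReal.ofReal (t ^ a) * ENNReal.ofReal (s ^ b * Real.exp (-(2*s)) / ((τa + τb) * s)))
        ≤ ∫⁻ t in Ioo 0 s,
          ENNReal.ofReal (t ^ a * s ^ b * Real.exp (-t - s) / (τa * t + τb * s)) := by
      refine setLIntegral_mono_ae (by fun_prop) ?_
      filter_upwards with t ht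
      rw [← ENNReal.ofReal_mul (Real.rpow_nonneg ht.1.le a)]
      apply ENNReal.ofReal_le_ofReal
      have hD : (0:ℝ) < τa * t + τb * s := by nlinarith [mul_nonneg hτa ht.1.le]
      have hdiv : Real.exp (-(2*s)) / ((τa + τb) * s) ≤ Real.exp (-t - s) / (τa * t + τb * s) :=
        div_le_div₀ (Real.exp_nonneg _) (Real.exp_le_exp.2 (by linarith [ht.1, ht.2])) hD
          (by nlinarith [ht.2, hτa])
      calc t ^ a * (s ^ b * Real.exp (-(2*s)) / ((τa + τb) * s))
          = t ^ a * (s ^ b * (Real.exp (-(2*s)) / ((τa + τb) * s))) := by ring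
        _ ≤ t ^ a * (s ^ b * (Real.exp (-t - s) / (τa * t + τb * s))) :=
            mul_le_mul_of_nonneg_left
              (mul_le_mul_of_nonneg_left hdiv (Real.rpow_nonneg hs.le b))
              (Real.rpow_nonneg ht.1.le a)
        _ = t ^ a * s ^ b * Real.exp (-t - s) / (τa * t + τb * s) := by ring
    refine le_trans (le_of_eq ?_) step1
    rw [lintegral_mul_const' _ _ ENNReal.ofReal_ne_top, innerEval a ha hs,
      combineEval a b (τa + τb) ha (by linarith) hs]
  rw [eq_top_iff]
  calc (⊤ : ENNReal)
      = ∫⁻ s in Ioi (0:ℝ),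
          ENNReal.ofReal ((1 / ((a+1) * (τa + τb))) * (s ^ (a+b) * Real.exp (-(2*s)))) := by
        rw [expTop (a+b) _ 2 hab (one_div_pos.mpr (mul_pos (by linarith : (0:ℝ) < a + 1)
          (by linarith))) (by norm_num)]
    _ ≤ _ := by
        refine lintegral_mono_ae ((ae_restrict_iff' measurableSet_Ioi).mpr ?_)
        exact Filter.Eventually.of_forall key

lemma prodFact (a b : ℝ) :
    ∫⁻ p : ℝ × ℝ in Ioi (0:ℝ) ×ˢ Ioi (0:ℝ),
        ENNReal.ofReal (p.1 ^ a * p.2 ^ b * Real.exp (-p.1 - p.2))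
      = (∫⁻ x in Ioi (0:ℝ), ENNReal.ofReal (x ^ a * Real.exp (-x)))
        * (∫⁻ y in Ioi (0:ℝ), ENNReal.ofReal (y ^ b * Real.exp (-y))) := by
  have hres : (volume : Measure (ℝ × ℝ)).restrict (Ioi (0:ℝ) ×ˢ Ioi (0:ℝ))
      = (volume.restrict (Ioi (0:ℝ))).prod (volume.restrict (Ioi (0:ℝ))) := by
    rw [Measure.volume_eq_prod, Measure.prod_restrict]
  rw [hres, lintegral_prod _ (by fun_prop)]
  calc (∫⁻ x in Ioi (0:ℝ), ∫⁻ y in Ioi (0:ℝ),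
        ENNReal.ofReal (x ^ a * y ^ b * Real.exp (-x - y)))
      = ∫⁻ x in Ioi (0:ℝ), ENNReal.ofReal (x ^ a * Real.exp (-x))
          * ∫⁻ y in Ioi (0:ℝ), ENNReal.ofReal (y ^ b * Real.exp (-y)) := by
        refine setLIntegral_congr_fun measurableSet_Ioi
          (fun x hx => ?_)
        rw [← lintegral_const_mul' _ _ ENNReal.ofReal_ne_top]
        refine setLIntegral_congr_fun measurableSet_Ioi
          (fun y hy => ?_)
        rw [← ENNReal.ofReal_mul (mul_nonneg (Real.rpow_nonneg (le_of_lt hx) a)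
          (Real.exp_nonneg _))]
        congr 1
        rw [show -x - y = -x + -y by ring, Real.exp_add]
        ring
    _ = _ := lintegral_mul_const _ (by fun_prop)

/-- Recurrence criterion for the continuous-time QBD processes associated with the
product Laguerre polynomials on the quadrant: the Lebesgue integral of the weight
`x^α y^β e^{−x−y}` divided by `τ₁x + τ₂y` over `(0,∞)²` is infinite iff
`α + β ≤ −1` (for `τ₁, τ₂ > 0`); when `τ₁ = 0, τ₂ > 0` it is infinite iff `β ≤ 0`,
and when `τ₂ = 0, τ₁ > 0` it is infinite iff `α ≤ 0`. -/
theorem stmt_4 (α β : ℝ) (hα : -1 < α) (hβ : -1 < β) :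
    (∀ τ₁ τ₂ : ℝ, 0 < τ₁ → 0 < τ₂ →
      ((∫⁻ p : ℝ × ℝ in Ioi (0 : ℝ) ×ˢ Ioi (0 : ℝ),
          ENNReal.ofReal (p.1 ^ α * p.2 ^ β * Real.exp (-p.1 - p.2) /
            (τ₁ * p.1 + τ₂ * p.2))) = ⊤ ↔ α + β ≤ -1)) ∧
    ((∫⁻ p : ℝ × ℝ in Ioi (0 : ℝ) ×ˢ Ioi (0 : ℝ),
        ENNReal.ofReal (p.1 ^ α * p.2 ^ (β - 1) * Real.exp (-p.1 - p.2))) = ⊤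
      ↔ β ≤ 0) ∧
    ((∫⁻ p : ℝ × ℝ in Ioi (0 : ℝ) ×ˢ Ioi (0 : ℝ),
        ENNReal.ofReal (p.1 ^ (α - 1) * p.2 ^ β * Real.exp (-p.1 - p.2))) = ⊤
      ↔ α ≤ 0) := by
  refine ⟨?_, ?_, ?_⟩
  · intro τ₁ τ₂ hτ₁ hτ₂
    set f : ℝ × ℝ → ENNReal := fun p =>
      ENNReal.ofReal (p.1 ^ α * p.2 ^ β * Real.exp (-p.1 - p.2) / (τ₁ * p.1 + τ₂ * p.2))
      with hf_def
    have hf : Measurable f := by fun_prop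
    have hQ : (Ioi (0:ℝ) ×ˢ Ioi (0:ℝ))
        = {p : ℝ × ℝ | p.1 ∈ Ioo 0 p.2} ∪ {p : ℝ × ℝ | p.2 ∈ Ioc 0 p.1} := by
      ext ⟨x, y⟩
      simp only [Set.mem_prod, mem_Ioi, mem_Ioo, mem_Ioc, Set.mem_union, Set.mem_setOf_eq]
      constructor
      · rintro ⟨hx, hy⟩
        rcases lt_or_ge x y with h | h
        · exact Or.inl ⟨hx, h⟩
        · exact Or.inr ⟨hy, h⟩
      · rintro (⟨h1, h2⟩ | ⟨h1, h2⟩) <;> constructor <;> linarith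
    have hA : ∫⁻ p in {p : ℝ × ℝ | p.1 ∈ Ioo 0 p.2}, f p
        = ∫⁻ s in Ioi (0:ℝ), ∫⁻ t in Ioo 0 s,
            ENNReal.ofReal (t ^ α * s ^ β * Real.exp (-t - s) / (τ₁ * t + τ₂ * s)) := by
      rw [sliceA f hf]
    have hB : ∫⁻ p in {p : ℝ × ℝ | p.2 ∈ Ioc 0 p.1}, f p
        = ∫⁻ s in Ioi (0:ℝ), ∫⁻ t in Ioo 0 s,
            ENNReal.ofReal (t ^ β * s ^ α * Real.exp (-t - s) / (τ₂ * t + τ₁ * s)) := by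
      rw [sliceB f hf]
      refine lintegral_congr fun s => lintegral_congr fun t => ?_
      simp only [hf_def]
      congr 1
      rw [show -s - t = -t - s by ring]
      ring
    constructor
    · intro htop
      by_contra hc
      push_neg at hc
      have hfin : (∫⁻ p in Ioi (0:ℝ) ×ˢ Ioi (0:ℝ), f p) < ⊤ := by
        rw [hQ]
        refine lt_of_le_of_lt (lintegral_union_le f _ _) ?_
        rw [hA, hB]
        exact ENNReal.add_lt_top.mpr
          ⟨halfFin α β τ₁ τ₂ hα hc hτ₁.le hτ₂,
           halfFin β α τ₂ τ₁ hβ (by linarith) hτ₂.le hτ₁⟩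
      exact absurd htop hfin.ne
    · intro hab
      rw [eq_top_iff]
      calc (⊤ : ENNReal)
          = ∫⁻ p in {p : ℝ × ℝ | p.1 ∈ Ioo 0 p.2}, f p := by
            rw [hA, halfTop α β τ₁ τ₂ hα hab hτ₁.le hτ₂]
        _ ≤ _ := by
            rw [hQ]
            exact lintegral_mono_set subset_union_left
  · rw [prodFact α (β - 1), gammaEq α hα]
    have hX0 : ENNReal.ofReal (Real.Gamma (α + 1)) ≠ 0 :=
      (ENNReal.ofReal_pos.mpr (Real.Gamma_pos_of_pos (by linarith))).ne'
    constructor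
    · intro h
      by_contra hc
      push_neg at hc
      have hfin := gammaFin (β - 1) (by linarith)
      rw [ENNReal.mul_eq_top] at h
      rcases h with ⟨_, h2⟩ | ⟨h1, _⟩
      · exact absurd h2 hfin.ne
      · exact absurd h1 ENNReal.ofReal_ne_top
    · intro h
      rw [gammaTop (β - 1) (by linarith), ENNReal.mul_top hX0]
  · rw [prodFact (α - 1) β, gammaEq β hβ]
    have hX0 : ENNReal.ofReal (Real.Gamma (β + 1)) ≠ 0 :=
      (ENNReal.ofReal_pos.mpr (Real.Gamma_pos_of_pos (by linarith))).ne'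
    constructor
    · intro h
      by_contra hc
      push_neg at hc
      have hfin := gammaFin (α - 1) (by linarith)
      rw [ENNReal.mul_eq_top] at h
      rcases h with ⟨_, h2⟩ | ⟨h1, _⟩
      · exact absurd h2 ENNReal.ofReal_ne_top
      · exact absurd h1 hfin.ne
    · intro h
      rw [gammaTop (α - 1) (by linarith), ENNReal.top_mul hX0]
end

section
/- Let α > −1 and β > −1 be real numbers and let R = {(x,y) ∈ ℝ² : y² < x < 1}. (i) For every τ with 0 ≤ τ < 1, the integral ∫_R (1−x)^α (x−y²)^β / (1 − τx − (1−τ)y) dx dy is infinite if and only if α + β ≤ −1. (ii) For τ = 1, the integral ∫_R (1−x)^{α−1}(x−y²)^β dx dy is infinite if and only if α ≤ 0. -/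
open MeasureTheory Set

lemma lint_comp_affine (f : ℝ → ENNReal) (hf : Measurable f) (a b : ℝ) (hb : 0 < b) :
    ∫⁻ x : ℝ, f (a + b * x) = ENNReal.ofReal b⁻¹ * ∫⁻ x : ℝ, f x := by
  have hT : Measure.map (fun x : ℝ => a + b * x) volume = ENNReal.ofReal b⁻¹ • volume := by
    have : (fun x : ℝ => a + b * x) = (fun x => a + x) ∘ (fun x => b * x) := rfl
    rw [this, ← Measure.map_map (by fun_prop) (by fun_prop), Real.map_volume_mul_left hb.ne',
      Measure.map_smul, map_add_left_eq_self volume a, abs_of_pos (inv_pos.2 hb)]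
  calc ∫⁻ x : ℝ, f (a + b * x) = ∫⁻ x, f x ∂(Measure.map (fun x : ℝ => a + b * x) volume) := by
        rw [lintegral_map hf (by fun_prop)]
    _ = ENNReal.ofReal b⁻¹ * ∫⁻ x : ℝ, f x := by rw [hT, lintegral_smul_measure, smul_eq_mul]

lemma lint_Ioo_affine (f : ℝ → ENNReal) (hf : Measurable f) {u v : ℝ} (h : u < v) :
    ∫⁻ x in Ioo u v, f x
      = ENNReal.ofReal (v - u) * ∫⁻ z in Ioo (0:ℝ) 1, f (u + (v - u) * z) := by
  have hb : 0 < v - u := sub_pos.2 h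
  have key : ∀ z : ℝ, (Ioo (0:ℝ) 1).indicator (fun z => f (u + (v - u) * z)) z
      = (Ioo u v).indicator f (u + (v - u) * z) := by
    intro z
    have hmem : z ∈ Ioo (0:ℝ) 1 ↔ u + (v - u) * z ∈ Ioo u v := by
      simp only [mem_Ioo]
      constructor
      · rintro ⟨h1, h2⟩; constructor <;> nlinarith
      · rintro ⟨h1, h2⟩; constructor <;> nlinarith
    by_cases hz : z ∈ Ioo (0:ℝ) 1
    · rw [indicator_of_mem hz, indicator_of_mem (hmem.1 hz)]
    · rw [indicator_of_notMem hz, indicator_of_notMem (fun hc => hz (hmem.2 hc))]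
  rw [← lintegral_indicator measurableSet_Ioo, ← lintegral_indicator measurableSet_Ioo]
  simp_rw [key]
  rw [lint_comp_affine _ (hf.indicator measurableSet_Ioo) u (v - u) hb, ← mul_assoc,
    ← ENNReal.ofReal_mul hb.le, mul_inv_cancel₀ hb.ne', ENNReal.ofReal_one, one_mul]

lemma lint_Ioo_refl (f : ℝ → ENNReal) (hf : Measurable f) (c u v : ℝ) :
    ∫⁻ x in Ioo u v, f (c - x) = ∫⁻ x in Ioo (c - v) (c - u), f x := by
  have hmap : Measure.map (fun x : ℝ => c - x) volume = volume := by
    have : (fun x : ℝ => c - x) = (fun x => c + x) ∘ Neg.neg := by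
      funext x; simp [sub_eq_add_neg]
    rw [this, ← Measure.map_map (by fun_prop) (by fun_prop), Measure.map_neg_eq_self]
    exact map_add_left_eq_self volume c
  have key : ∀ x : ℝ, (Ioo u v).indicator (fun x => f (c - x)) x
      = (Ioo (c - v) (c - u)).indicator f (c - x) := by
    intro x
    have hmem : x ∈ Ioo u v ↔ c - x ∈ Ioo (c - v) (c - u) := by
      simp only [mem_Ioo]; constructor <;> (rintro ⟨h1, h2⟩; constructor <;> linarith)
    by_cases hx : x ∈ Ioo u v
    · rw [indicator_of_mem hx, indicator_of_mem (hmem.1 hx)]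
    · rw [indicator_of_notMem hx, indicator_of_notMem (fun hc => hx (hmem.2 hc))]
  rw [← lintegral_indicator measurableSet_Ioo, ← lintegral_indicator measurableSet_Ioo]
  simp_rw [key]
  calc ∫⁻ x : ℝ, (Ioo (c-v) (c-u)).indicator f (c - x)
      = ∫⁻ x, (Ioo (c-v) (c-u)).indicator f x ∂(Measure.map (fun x : ℝ => c - x) volume) := by
        rw [lintegral_map (hf.indicator measurableSet_Ioo) (by fun_prop)]
    _ = _ := by rw [hmap]

lemma rpow_fin {q c : ℝ} (hq : -1 < q) (hc : 0 < c) :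
    ∫⁻ t in Ioo (0:ℝ) c, ENNReal.ofReal (t ^ q) < ⊤ := by
  have hInt : IntegrableOn (fun t : ℝ => t ^ q) (Ioo 0 c) :=
    (intervalIntegral.integrableOn_Ioo_rpow_iff hc).2 hq
  have hnn : 0 ≤ᵐ[volume.restrict (Ioo (0:ℝ) c)] fun t : ℝ => t ^ q := by
    filter_upwards [ae_restrict_mem measurableSet_Ioo] with t ht
    exact Real.rpow_nonneg ht.1.le q
  exact (hasFiniteIntegral_iff_ofReal hnn).1 hInt.2

lemma rpow_top {p c : ℝ} (hp : p ≤ -1) (hc : 0 < c) :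
    ∫⁻ t in Ioo (0:ℝ) c, ENNReal.ofReal (t ^ p) = ⊤ := by
  by_contra h
  have hfin : ∫⁻ t in Ioo (0:ℝ) c, ENNReal.ofReal (t ^ p) < ⊤ := lt_top_iff_ne_top.2 h
  have hnn : 0 ≤ᵐ[volume.restrict (Ioo (0:ℝ) c)] fun t : ℝ => t ^ p := by
    filter_upwards [ae_restrict_mem measurableSet_Ioo] with t ht
    exact Real.rpow_nonneg ht.1.le p
  have hInt : IntegrableOn (fun t : ℝ => t ^ p) (Ioo 0 c) :=
    ⟨(by fun_prop : Measurable fun t : ℝ => t ^ p).aestronglyMeasurable,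
      (hasFiniteIntegral_iff_ofReal hnn).2 hfin⟩
  exact absurd ((intervalIntegral.integrableOn_Ioo_rpow_iff hc).1 hInt) (not_lt.2 hp)

/-- upper bound for `s ^ p` when `c ≤ s ≤ 1`. -/
lemma rpow_le_max {p c s : ℝ} (hc : 0 < c) (h1 : c ≤ s) (h2 : s ≤ 1) :
    s ^ p ≤ max 1 (c ^ p) := by
  rcases le_or_gt 0 p with hp | hp
  · exact le_max_of_le_left (Real.rpow_le_one (hc.le.trans h1) h2 hp)
  · refine le_max_of_le_right ?_
    exact Real.rpow_le_rpow_of_nonpos hc h1 hp.le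

/-- lower bound for `s ^ p` when `c ≤ s ≤ 1`. -/
lemma min_le_rpow {p c s : ℝ} (hc : 0 < c) (h1 : c ≤ s) (h2 : s ≤ 1) :
    min 1 (c ^ p) ≤ s ^ p := by
  rcases le_or_gt 0 p with hp | hp
  · exact le_trans (min_le_right _ _) (Real.rpow_le_rpow hc.le h1 hp)
  · refine le_trans (min_le_left _ _) ?_
    exact Real.one_le_rpow_of_pos_of_le_one_of_nonpos (hc.trans_le h1) h2 hp.le
lemma beta_fin {p q : ℝ} (hp : -1 < p) (hq : -1 < q) :
    ∫⁻ t in Ioo (0:ℝ) 1, ENNReal.ofReal ((1 - t) ^ p * t ^ q) < ⊤ := by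
  have hsub : Ioo (0:ℝ) 1 ⊆ Ioo 0 (2/3) ∪ Ioo (1/3) 1 := by
    intro x hx
    rcases lt_or_ge x (2/3) with h | h
    · exact Or.inl ⟨hx.1, h⟩
    · exact Or.inr ⟨by linarith, hx.2⟩
  have hle : ∫⁻ t in Ioo (0:ℝ) 1, ENNReal.ofReal ((1 - t) ^ p * t ^ q)
      ≤ (∫⁻ t in Ioo (0:ℝ) (2/3), ENNReal.ofReal ((1 - t) ^ p * t ^ q))
        + ∫⁻ t in Ioo (1/3:ℝ) 1, ENNReal.ofReal ((1 - t) ^ p * t ^ q) := by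
    refine le_trans (lintegral_mono_set hsub) ?_
    rw [← lintegral_add_measure]
    exact lintegral_mono' (Measure.restrict_union_le _ _) le_rfl
  have h1 : ∫⁻ t in Ioo (0:ℝ) (2/3), ENNReal.ofReal ((1 - t) ^ p * t ^ q) < ⊤ := by
    have hb : ∀ t ∈ Ioo (0:ℝ) (2/3), ENNReal.ofReal ((1 - t) ^ p * t ^ q)
        ≤ ENNReal.ofReal (max 1 ((1/3:ℝ) ^ p)) * ENNReal.ofReal (t ^ q) := by
      intro t ht
      rw [← ENNReal.ofReal_mul (le_max_of_le_left zero_le_one)]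
      apply ENNReal.ofReal_le_ofReal
      have h1t : (1 - t) ^ p ≤ max 1 ((1/3:ℝ) ^ p) :=
        rpow_le_max (by norm_num) (by linarith [ht.2]) (by linarith [ht.1])
      have htq : 0 ≤ t ^ q := Real.rpow_nonneg ht.1.le q
      exact mul_le_mul_of_nonneg_right h1t htq
    calc ∫⁻ t in Ioo (0:ℝ) (2/3), ENNReal.ofReal ((1 - t) ^ p * t ^ q)
        ≤ ∫⁻ t in Ioo (0:ℝ) (2/3), ENNReal.ofReal (max 1 ((1/3:ℝ) ^ p)) * ENNReal.ofReal (t ^ q) :=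
          setLIntegral_mono (by fun_prop) hb
      _ = ENNReal.ofReal (max 1 ((1/3:ℝ) ^ p)) * ∫⁻ t in Ioo (0:ℝ) (2/3), ENNReal.ofReal (t ^ q) :=
          lintegral_const_mul _ (by fun_prop)
      _ < ⊤ := ENNReal.mul_lt_top ENNReal.ofReal_lt_top (rpow_fin hq (by norm_num))
  have h2 : ∫⁻ t in Ioo (1/3:ℝ) 1, ENNReal.ofReal ((1 - t) ^ p * t ^ q) < ⊤ := by
    have hb : ∀ t ∈ Ioo (1/3:ℝ) 1, ENNReal.ofReal ((1 - t) ^ p * t ^ q)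
        ≤ ENNReal.ofReal (max 1 ((1/3:ℝ) ^ q)) * ENNReal.ofReal ((1 - t) ^ p) := by
      intro t ht
      rw [← ENNReal.ofReal_mul (le_max_of_le_left zero_le_one)]
      apply ENNReal.ofReal_le_ofReal
      have h1t : t ^ q ≤ max 1 ((1/3:ℝ) ^ q) := rpow_le_max (by norm_num) ht.1.le ht.2.le
      have htp : 0 ≤ (1 - t) ^ p := Real.rpow_nonneg (by linarith [ht.2]) p
      calc (1 - t) ^ p * t ^ q ≤ (1 - t) ^ p * max 1 ((1/3:ℝ) ^ q) :=
            mul_le_mul_of_nonneg_left h1t htp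
        _ = max 1 ((1/3:ℝ) ^ q) * (1 - t) ^ p := mul_comm _ _
    calc ∫⁻ t in Ioo (1/3:ℝ) 1, ENNReal.ofReal ((1 - t) ^ p * t ^ q)
        ≤ ∫⁻ t in Ioo (1/3:ℝ) 1, ENNReal.ofReal (max 1 ((1/3:ℝ) ^ q))
            * ENNReal.ofReal ((1 - t) ^ p) := setLIntegral_mono (by fun_prop) hb
      _ = ENNReal.ofReal (max 1 ((1/3:ℝ) ^ q))
            * ∫⁻ t in Ioo (1/3:ℝ) 1, ENNReal.ofReal ((1 - t) ^ p) :=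
          lintegral_const_mul _ (by fun_prop)
      _ < ⊤ := by
          have hrefl : ∫⁻ t in Ioo (1/3:ℝ) 1, ENNReal.ofReal ((1 - t) ^ p)
              = ∫⁻ t in Ioo (0:ℝ) (2/3), ENNReal.ofReal (t ^ p) := by
            have := lint_Ioo_refl (fun x => ENNReal.ofReal (x ^ p)) (by fun_prop) 1 (1/3) 1
            norm_num at this ⊢
            exact this
          rw [hrefl]
          exact ENNReal.mul_lt_top ENNReal.ofReal_lt_top (rpow_fin hp (by norm_num))
  exact lt_of_le_of_lt hle (ENNReal.add_lt_top.2 ⟨h1, h2⟩)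

lemma beta_top {p : ℝ} (q : ℝ) (hp : p ≤ -1) :
    ∫⁻ t in Ioo (0:ℝ) 1, ENNReal.ofReal ((1 - t) ^ p * t ^ q) = ⊤ := by
  have hsub : Ioo (1/2:ℝ) 1 ⊆ Ioo 0 1 := fun x hx => ⟨by linarith [hx.1], hx.2⟩
  refine top_le_iff.1 (le_trans ?_ (lintegral_mono_set hsub))
  have hb : ∀ t ∈ Ioo (1/2:ℝ) 1, ENNReal.ofReal (min 1 ((1/2:ℝ) ^ q))
        * ENNReal.ofReal ((1 - t) ^ p) ≤ ENNReal.ofReal ((1 - t) ^ p * t ^ q) := by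
    intro t ht
    rw [← ENNReal.ofReal_mul (le_min zero_le_one (Real.rpow_nonneg (by norm_num) q))]
    apply ENNReal.ofReal_le_ofReal
    have h1t : min 1 ((1/2:ℝ) ^ q) ≤ t ^ q := min_le_rpow (by norm_num) ht.1.le ht.2.le
    have htp : 0 ≤ (1 - t) ^ p := Real.rpow_nonneg (by linarith [ht.2]) p
    calc min 1 ((1/2:ℝ) ^ q) * (1 - t) ^ p = (1 - t) ^ p * min 1 ((1/2:ℝ) ^ q) := mul_comm _ _
      _ ≤ (1 - t) ^ p * t ^ q := mul_le_mul_of_nonneg_left h1t htp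
  have hmin : (0:ℝ) < min 1 ((1/2:ℝ) ^ q) :=
    lt_min one_pos (Real.rpow_pos_of_pos (by norm_num) q)
  calc (⊤ : ENNReal) = ENNReal.ofReal (min 1 ((1/2:ℝ) ^ q))
        * ∫⁻ t in Ioo (1/2:ℝ) 1, ENNReal.ofReal ((1 - t) ^ p) := by
        have hrefl : ∫⁻ t in Ioo (1/2:ℝ) 1, ENNReal.ofReal ((1 - t) ^ p)
            = ∫⁻ t in Ioo (0:ℝ) (1/2), ENNReal.ofReal (t ^ p) := by
          have := lint_Ioo_refl (fun x => ENNReal.ofReal (x ^ p)) (by fun_prop) 1 (1/2) 1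
          norm_num at this ⊢
          exact this
        rw [hrefl, rpow_top hp (by norm_num), ENNReal.mul_top (ENNReal.ofReal_pos.2 hmin).ne']
    _ = ∫⁻ t in Ioo (1/2:ℝ) 1, ENNReal.ofReal (min 1 ((1/2:ℝ) ^ q))
          * ENNReal.ofReal ((1 - t) ^ p) := (lintegral_const_mul _ (by fun_prop)).symm
    _ ≤ ∫⁻ t in Ioo (1/2:ℝ) 1, ENNReal.ofReal ((1 - t) ^ p * t ^ q) :=
          setLIntegral_mono (by fun_prop) hb

lemma beta_pos (p q : ℝ) :
    0 < ∫⁻ t in Ioo (0:ℝ) 1, ENNReal.ofReal ((1 - t) ^ p * t ^ q) := by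
  rw [lintegral_pos_iff_support (by fun_prop)]
  have hsupp : Ioo (0:ℝ) 1 ⊆ Function.support fun t => ENNReal.ofReal ((1 - t) ^ p * t ^ q) := by
    intro t ht
    have : 0 < (1 - t) ^ p * t ^ q :=
      mul_pos (Real.rpow_pos_of_pos (by linarith [ht.2]) p) (Real.rpow_pos_of_pos ht.1 q)
    simp [Function.mem_support, ENNReal.ofReal_eq_zero, not_le, this]
  calc (0:ENNReal) < volume (Ioo (0:ℝ) 1) := by simp [Real.volume_Ioo]
    _ = (volume.restrict (Ioo (0:ℝ) 1)) (Ioo (0:ℝ) 1) := by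
        rw [Measure.restrict_apply_self]
    _ ≤ _ := measure_mono hsupp
lemma Jint_eq (p q : ℝ) :
    ∫⁻ y in Ioo (-1:ℝ) 1, ENNReal.ofReal ((1 - y) ^ p * (1 + y) ^ q)
      = ENNReal.ofReal (2 ^ p * 2 ^ q * 2)
        * ∫⁻ t in Ioo (0:ℝ) 1, ENNReal.ofReal ((1 - t) ^ p * t ^ q) := by
  have h2 : (2:ℝ) ^ p * 2 ^ q * 2 = 2 ^ p * 2 ^ q * 2 := rfl
  rw [lint_Ioo_affine (fun y => ENNReal.ofReal ((1 - y) ^ p * (1 + y) ^ q)) (by fun_prop)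
    (by norm_num : (-1:ℝ) < 1)]
  have hcong : ∫⁻ z in Ioo (0:ℝ) 1,
        ENNReal.ofReal ((1 - (-1 + (1 - (-1)) * z)) ^ p * (1 + (-1 + (1 - (-1)) * z)) ^ q)
      = ∫⁻ z in Ioo (0:ℝ) 1,
        ENNReal.ofReal (2 ^ p * 2 ^ q) * ENNReal.ofReal ((1 - z) ^ p * z ^ q) := by
    refine setLIntegral_congr_fun measurableSet_Ioo (fun z hz => ?_)
    have hz0 : (0:ℝ) ≤ z := hz.1.le
    have hz1 : (0:ℝ) ≤ 1 - z := by linarith [hz.2]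
    have e1 : 1 - (-1 + (1 - (-1:ℝ)) * z) = 2 * (1 - z) := by ring
    have e2 : 1 + (-1 + (1 - (-1:ℝ)) * z) = 2 * z := by ring
    rw [e1, e2, Real.mul_rpow (by norm_num) hz1, Real.mul_rpow (by norm_num) hz0,
      ← ENNReal.ofReal_mul (by positivity)]
    ring_nf
  rw [hcong, lintegral_const_mul _ (by fun_prop), ← mul_assoc, ← ENNReal.ofReal_mul (by norm_num),
    show ((1:ℝ) - (-1)) = 2 by norm_num]
  congr 2
  ring
lemma fubini_R (F : ℝ × ℝ → ENNReal) (hF : Measurable F) :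
    ∫⁻ p in {p : ℝ × ℝ | p.2 ^ 2 < p.1 ∧ p.1 < 1}, F p
      = ∫⁻ y in Ioo (-1:ℝ) 1, ∫⁻ x in Ioo (y ^ 2) 1, F (x, y) := by
  have hRm : MeasurableSet {p : ℝ × ℝ | p.2 ^ 2 < p.1 ∧ p.1 < 1} := by
    apply MeasurableSet.inter
    · exact measurableSet_lt (by fun_prop : Measurable fun p : ℝ × ℝ => p.2 ^ 2)
        (by fun_prop : Measurable fun p : ℝ × ℝ => p.1)
    · exact measurableSet_lt (by fun_prop : Measurable fun p : ℝ × ℝ => p.1) measurable_const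
  rw [← lintegral_indicator hRm]
  rw [Measure.volume_eq_prod, lintegral_prod_symm _ (hF.indicator hRm).aemeasurable]
  have inner_eq : ∀ y : ℝ, ∫⁻ x, {p : ℝ × ℝ | p.2 ^ 2 < p.1 ∧ p.1 < 1}.indicator F (x, y)
      = ∫⁻ x in Ioo (y ^ 2) 1, F (x, y) := by
    intro y
    rw [← lintegral_indicator measurableSet_Ioo]
    refine lintegral_congr fun x => ?_
    by_cases hx : x ∈ Ioo (y ^ 2) 1
    · rw [indicator_of_mem hx, indicator_of_mem (by exact ⟨hx.1, hx.2⟩)]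
    · rw [indicator_of_notMem hx, indicator_of_notMem
        (fun hc => hx ⟨hc.1, hc.2⟩)]
  simp_rw [inner_eq]
  rw [← lintegral_indicator measurableSet_Ioo]
  congr 1
  funext y
  by_cases hy : y ∈ Ioo (-1:ℝ) 1
  · rw [indicator_of_mem hy]
  · rw [indicator_of_notMem hy]
    have h1 : ¬ y ^ 2 < 1 := by
      simp only [mem_Ioo, not_and_or, not_lt] at hy
      rcases hy with h | h <;> nlinarith
    rw [Ioo_eq_empty h1, Measure.restrict_empty, lintegral_zero_measure]
lemma identA {τ α β y z : ℝ} (hy : y ∈ Ioo (-1:ℝ) 1) (hz : z ∈ Ioo (0:ℝ) 1) :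
    (1 - y ^ 2) * ((1 - (y ^ 2 + (1 - y ^ 2) * z)) ^ α
        * ((y ^ 2 + (1 - y ^ 2) * z) - y ^ 2) ^ β
        / (1 - τ * (y ^ 2 + (1 - y ^ 2) * z) - (1 - τ) * y))
      = ((1 - y) ^ (α + β) * (1 + y) ^ (α + β + 1)) * ((1 - z) ^ α * z ^ β)
        / (τ * (1 + y) * (1 - z) + (1 - τ)) := by
  obtain ⟨hy1, hy2⟩ := hy
  obtain ⟨hz1, hz2⟩ := hz
  have hu : (0:ℝ) < 1 - y := by linarith
  have hv : (0:ℝ) < 1 + y := by linarith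
  have hw : (0:ℝ) < 1 - z := by linarith
  have hx1 : 1 - (y ^ 2 + (1 - y ^ 2) * z) = ((1 - y) * (1 + y)) * (1 - z) := by ring
  have hx2 : (y ^ 2 + (1 - y ^ 2) * z) - y ^ 2 = ((1 - y) * (1 + y)) * z := by ring
  have hx3 : 1 - τ * (y ^ 2 + (1 - y ^ 2) * z) - (1 - τ) * y
      = (1 - y) * (τ * (1 + y) * (1 - z) + (1 - τ)) := by ring
  have hy2' : 1 - y ^ 2 = (1 - y) * (1 + y) := by ring
  rw [hx1, hx2, hx3, hy2',
    Real.mul_rpow (by positivity) hw.le, Real.mul_rpow hu.le hv.le,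
    Real.mul_rpow (by positivity) hz1.le, Real.mul_rpow hu.le hv.le,
    Real.rpow_add hu, Real.rpow_add hv, Real.rpow_add hv, Real.rpow_one]
  by_cases hd : τ * (1 + y) * (1 - z) + (1 - τ) = 0
  · rw [hd]; simp
  · field_simp

lemma identB {α β y z : ℝ} (hy : y ∈ Ioo (-1:ℝ) 1) (hz : z ∈ Ioo (0:ℝ) 1) :
    (1 - y ^ 2) * ((1 - (y ^ 2 + (1 - y ^ 2) * z)) ^ (α - 1)
        * ((y ^ 2 + (1 - y ^ 2) * z) - y ^ 2) ^ β)
      = ((1 - y) ^ (α + β) * (1 + y) ^ (α + β)) * ((1 - z) ^ (α - 1) * z ^ β) := by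
  obtain ⟨hy1, hy2⟩ := hy
  obtain ⟨hz1, hz2⟩ := hz
  have hu : (0:ℝ) < 1 - y := by linarith
  have hv : (0:ℝ) < 1 + y := by linarith
  have hw : (0:ℝ) < 1 - z := by linarith
  have hx1 : 1 - (y ^ 2 + (1 - y ^ 2) * z) = ((1 - y) * (1 + y)) * (1 - z) := by ring
  have hx2 : (y ^ 2 + (1 - y ^ 2) * z) - y ^ 2 = ((1 - y) * (1 + y)) * z := by ring
  have hy2' : 1 - y ^ 2 = (1 - y) * (1 + y) := by ring
  have huv : (0:ℝ) < (1 - y) * (1 + y) := by positivity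
  have hab : α + β = (α - 1) + β + 1 := by ring
  rw [hx1, hx2, hy2',
    Real.mul_rpow huv.le hw.le, Real.mul_rpow huv.le hz1.le,
    ← Real.mul_rpow hu.le hv.le, hab, Real.rpow_add huv, Real.rpow_add huv, Real.rpow_one]
  ring
lemma innerA {τ α β : ℝ} (hτ0 : 0 ≤ τ) (hτ1 : τ < 1) {y : ℝ} (hy : y ∈ Ioo (-1:ℝ) 1) :
    ENNReal.ofReal ((1 - y) ^ (α + β) * (1 + y) ^ (α + β + 1))
        * (ENNReal.ofReal (1/2) * ∫⁻ z in Ioo (0:ℝ) 1, ENNReal.ofReal ((1 - z) ^ α * z ^ β))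
      ≤ (∫⁻ x in Ioo (y ^ 2) 1,
          ENNReal.ofReal ((1 - x) ^ α * (x - y ^ 2) ^ β / (1 - τ * x - (1 - τ) * y)))
    ∧ (∫⁻ x in Ioo (y ^ 2) 1,
          ENNReal.ofReal ((1 - x) ^ α * (x - y ^ 2) ^ β / (1 - τ * x - (1 - τ) * y)))
      ≤ ENNReal.ofReal ((1 - y) ^ (α + β) * (1 + y) ^ (α + β + 1))
        * (ENNReal.ofReal (1/(1-τ)) * ∫⁻ z in Ioo (0:ℝ) 1, ENNReal.ofReal ((1 - z) ^ α * z ^ β)) := by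
  obtain ⟨hy1, hy2⟩ := hy
  have hu : (0:ℝ) < 1 - y := by linarith
  have hv : (0:ℝ) < 1 + y := by linarith
  have hyy : y ^ 2 < 1 := by nlinarith
  have h1y2 : (0:ℝ) < 1 - y ^ 2 := by nlinarith
  have hG : (0:ℝ) ≤ (1 - y) ^ (α + β) * (1 + y) ^ (α + β + 1) := by positivity
  have h1τ : (0:ℝ) < 1 - τ := by linarith
  set G : ℝ := (1 - y) ^ (α + β) * (1 + y) ^ (α + β + 1) with hGdef
  have hrw : (∫⁻ x in Ioo (y ^ 2) 1,
        ENNReal.ofReal ((1 - x) ^ α * (x - y ^ 2) ^ β / (1 - τ * x - (1 - τ) * y)))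
      = ∫⁻ z in Ioo (0:ℝ) 1, ENNReal.ofReal ((1 - y ^ 2) *
          ((1 - (y ^ 2 + (1 - y ^ 2) * z)) ^ α * ((y ^ 2 + (1 - y ^ 2) * z) - y ^ 2) ^ β
            / (1 - τ * (y ^ 2 + (1 - y ^ 2) * z) - (1 - τ) * y))) := by
    rw [lint_Ioo_affine _ (by fun_prop) hyy, ← lintegral_const_mul _ (by fun_prop)]
    simp_rw [← ENNReal.ofReal_mul h1y2.le]
  have conv : ∀ c : ℝ, 0 ≤ c →
      (∫⁻ z in Ioo (0:ℝ) 1, ENNReal.ofReal ((c * G) * ((1 - z) ^ α * z ^ β)))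
        = ENNReal.ofReal G
          * (ENNReal.ofReal c * ∫⁻ z in Ioo (0:ℝ) 1, ENNReal.ofReal ((1 - z) ^ α * z ^ β)) := by
    intro c hc
    simp_rw [ENNReal.ofReal_mul (mul_nonneg hc hG)]
    rw [lintegral_const_mul _ (by fun_prop), ENNReal.ofReal_mul hc]
    ring
  constructor
  · rw [hrw, ← conv (1/2) (by norm_num)]
    refine setLIntegral_mono' measurableSet_Ioo fun z hz => ?_
    rw [identA ⟨hy1, hy2⟩ hz]
    apply ENNReal.ofReal_le_ofReal
    obtain ⟨hz1, hz2⟩ := hz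
    have hw : (0:ℝ) < 1 - z := by linarith
    set d : ℝ := τ * (1 + y) * (1 - z) + (1 - τ) with hddef
    have hd0 : (0:ℝ) < d := by nlinarith [mul_nonneg (mul_nonneg hτ0 hv.le) hw.le]
    have hvw : (1 + y) * (1 - z) ≤ 2 := by nlinarith
    have hd2 : d ≤ 2 := by nlinarith [mul_le_mul_of_nonneg_left hvw hτ0]
    have hF : (0:ℝ) ≤ (1 - z) ^ α * z ^ β := by positivity
    have key : G * ((1 - z) ^ α * z ^ β) / 2 ≤ G * ((1 - z) ^ α * z ^ β) / d := by
      gcongr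
    calc (1/2 * G) * ((1 - z) ^ α * z ^ β)
        = G * ((1 - z) ^ α * z ^ β) / 2 := by ring
      _ ≤ G * ((1 - z) ^ α * z ^ β) / d := key
  · rw [hrw, ← conv (1/(1-τ)) (by positivity)]
    refine setLIntegral_mono' measurableSet_Ioo fun z hz => ?_
    rw [identA ⟨hy1, hy2⟩ hz]
    apply ENNReal.ofReal_le_ofReal
    obtain ⟨hz1, hz2⟩ := hz
    have hw : (0:ℝ) < 1 - z := by linarith
    set d : ℝ := τ * (1 + y) * (1 - z) + (1 - τ) with hddef
    have hd1 : 1 - τ ≤ d := by nlinarith [mul_nonneg (mul_nonneg hτ0 hv.le) hw.le]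
    have hF : (0:ℝ) ≤ (1 - z) ^ α * z ^ β := by positivity
    have key : G * ((1 - z) ^ α * z ^ β) / d ≤ G * ((1 - z) ^ α * z ^ β) / (1 - τ) := by
      gcongr
    calc G * ((1 - z) ^ α * z ^ β) / d
        ≤ G * ((1 - z) ^ α * z ^ β) / (1 - τ) := key
      _ = (1/(1-τ) * G) * ((1 - z) ^ α * z ^ β) := by ring

lemma innerB {α β : ℝ} {y : ℝ} (hy : y ∈ Ioo (-1:ℝ) 1) :
    (∫⁻ x in Ioo (y ^ 2) 1, ENNReal.ofReal ((1 - x) ^ (α - 1) * (x - y ^ 2) ^ β))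
      = ENNReal.ofReal ((1 - y) ^ (α + β) * (1 + y) ^ (α + β))
        * ∫⁻ z in Ioo (0:ℝ) 1, ENNReal.ofReal ((1 - z) ^ (α - 1) * z ^ β) := by
  obtain ⟨hy1, hy2⟩ := hy
  have hu : (0:ℝ) < 1 - y := by linarith
  have hv : (0:ℝ) < 1 + y := by linarith
  have hyy : y ^ 2 < 1 := by nlinarith
  have h1y2 : (0:ℝ) < 1 - y ^ 2 := by nlinarith
  have hG : (0:ℝ) ≤ (1 - y) ^ (α + β) * (1 + y) ^ (α + β) := by positivity
  rw [lint_Ioo_affine _ (by fun_prop) hyy, ← lintegral_const_mul _ (by fun_prop)]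
  simp_rw [← ENNReal.ofReal_mul h1y2.le]
  rw [← lintegral_const_mul _ (by fun_prop)]
  refine setLIntegral_congr_fun measurableSet_Ioo (fun z hz => ?_)
  rw [identB ⟨hy1, hy2⟩ hz, ENNReal.ofReal_mul hG]


/-- Recurrence criterion for the discrete-time QBD processes associated with the
orthogonal polynomials on the parabolic domain `R = {(x,y) : y² < x < 1}` with weight
`(1−x)^α (x−y²)^β`: for `0 ≤ τ < 1` the Lebesgue integral of the weight divided by
`1 − τx − (1−τ)y` over `R` is infinite iff `α + β ≤ −1`; for `τ = 1` the integral of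
`(1−x)^{α−1}(x−y²)^β` over `R` is infinite iff `α ≤ 0`. -/
theorem stmt_5 (α β : ℝ) (hα : -1 < α) (hβ : -1 < β) :
    (∀ τ : ℝ, 0 ≤ τ → τ < 1 →
      ((∫⁻ p : ℝ × ℝ in {p : ℝ × ℝ | p.2 ^ 2 < p.1 ∧ p.1 < 1},
          ENNReal.ofReal ((1 - p.1) ^ α * (p.1 - p.2 ^ 2) ^ β /
            (1 - τ * p.1 - (1 - τ) * p.2))) = ⊤ ↔ α + β ≤ -1)) ∧
    ((∫⁻ p : ℝ × ℝ in {p : ℝ × ℝ | p.2 ^ 2 < p.1 ∧ p.1 < 1},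
        ENNReal.ofReal ((1 - p.1) ^ (α - 1) * (p.1 - p.2 ^ 2) ^ β)) = ⊤
      ↔ α ≤ 0) := by

  constructor
  · intro τ hτ0 hτ1
    have h1τ : (0:ℝ) < 1 - τ := by linarith
    have hT := fubini_R (fun p : ℝ × ℝ => ENNReal.ofReal ((1 - p.1) ^ α * (p.1 - p.2 ^ 2) ^ β /
      (1 - τ * p.1 - (1 - τ) * p.2))) (by fun_prop)
    rw [hT]
    set A := ∫⁻ z in Ioo (0:ℝ) 1, ENNReal.ofReal ((1 - z) ^ α * z ^ β) with hAdef
    set Bb := ∫⁻ t in Ioo (0:ℝ) 1,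
      ENNReal.ofReal ((1 - t) ^ (α + β) * t ^ (α + β + 1)) with hBbdef
    set J := ∫⁻ y in Ioo (-1:ℝ) 1,
      ENNReal.ofReal ((1 - y) ^ (α + β) * (1 + y) ^ (α + β + 1)) with hJdef
    have hJeq : J = ENNReal.ofReal (2 ^ (α + β) * 2 ^ (α + β + 1) * 2) * Bb :=
      Jint_eq (α + β) (α + β + 1)
    have hApos : 0 < A := beta_pos α β
    have hAfin : A < ⊤ := beta_fin hα hβ
    have hub : (∫⁻ y in Ioo (-1:ℝ) 1, ∫⁻ x in Ioo (y ^ 2) 1,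
          ENNReal.ofReal ((1 - x) ^ α * (x - y ^ 2) ^ β / (1 - τ * x - (1 - τ) * y)))
        ≤ J * (ENNReal.ofReal (1/(1-τ)) * A) := by
      calc (∫⁻ y in Ioo (-1:ℝ) 1, ∫⁻ x in Ioo (y ^ 2) 1,
            ENNReal.ofReal ((1 - x) ^ α * (x - y ^ 2) ^ β / (1 - τ * x - (1 - τ) * y)))
          ≤ ∫⁻ y in Ioo (-1:ℝ) 1, ENNReal.ofReal ((1 - y) ^ (α + β) * (1 + y) ^ (α + β + 1))
              * (ENNReal.ofReal (1/(1-τ)) * A) :=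
            setLIntegral_mono' measurableSet_Ioo fun y hy => (innerA hτ0 hτ1 hy).2
        _ = J * (ENNReal.ofReal (1/(1-τ)) * A) := lintegral_mul_const _ (by fun_prop)
    have hlb : J * (ENNReal.ofReal (1/2) * A)
        ≤ ∫⁻ y in Ioo (-1:ℝ) 1, ∫⁻ x in Ioo (y ^ 2) 1,
            ENNReal.ofReal ((1 - x) ^ α * (x - y ^ 2) ^ β / (1 - τ * x - (1 - τ) * y)) := by
      calc J * (ENNReal.ofReal (1/2) * A)
          = ∫⁻ y in Ioo (-1:ℝ) 1, ENNReal.ofReal ((1 - y) ^ (α + β) * (1 + y) ^ (α + β + 1))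
              * (ENNReal.ofReal (1/2) * A) := (lintegral_mul_const _ (by fun_prop)).symm
        _ ≤ _ := setLIntegral_mono' measurableSet_Ioo fun y hy => (innerA hτ0 hτ1 hy).1
    constructor
    · intro hTtop
      by_contra hcon
      push_neg at hcon
      have hBbfin : Bb < ⊤ := beta_fin hcon (by linarith)
      have hJfin : J < ⊤ := by
        rw [hJeq]; exact ENNReal.mul_lt_top ENNReal.ofReal_lt_top hBbfin
      have hfin : J * (ENNReal.ofReal (1/(1-τ)) * A) < ⊤ :=
        ENNReal.mul_lt_top hJfin (ENNReal.mul_lt_top ENNReal.ofReal_lt_top hAfin)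
      rw [hTtop] at hub
      exact absurd (top_le_iff.1 hub) hfin.ne
    · intro hle
      have hCpos : (0:ℝ) < 2 ^ (α + β) * 2 ^ (α + β + 1) * 2 := by positivity
      have hBbtop : Bb = ⊤ := beta_top _ hle
      have hJtop : J = ⊤ := by
        rw [hJeq, hBbtop]
        exact ENNReal.mul_top (ENNReal.ofReal_pos.2 hCpos).ne'
      have htop : J * (ENNReal.ofReal (1/2) * A) = ⊤ := by
        rw [hJtop]
        exact ENNReal.top_mul
          (mul_ne_zero (ENNReal.ofReal_pos.2 (by norm_num)).ne' hApos.ne')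
      rw [htop] at hlb
      exact top_le_iff.1 hlb
  · have hT := fubini_R (fun p : ℝ × ℝ =>
      ENNReal.ofReal ((1 - p.1) ^ (α - 1) * (p.1 - p.2 ^ 2) ^ β)) (by fun_prop)
    rw [hT]
    have hcong : (∫⁻ y in Ioo (-1:ℝ) 1, ∫⁻ x in Ioo (y ^ 2) 1,
          ENNReal.ofReal ((1 - x) ^ (α - 1) * (x - y ^ 2) ^ β))
        = ∫⁻ y in Ioo (-1:ℝ) 1, ENNReal.ofReal ((1 - y) ^ (α + β) * (1 + y) ^ (α + β))
            * ∫⁻ z in Ioo (0:ℝ) 1, ENNReal.ofReal ((1 - z) ^ (α - 1) * z ^ β) :=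
      setLIntegral_congr_fun measurableSet_Ioo
        (fun y hy => innerB hy)
    rw [hcong, lintegral_mul_const _ (by fun_prop)]
    set A' := ∫⁻ z in Ioo (0:ℝ) 1, ENNReal.ofReal ((1 - z) ^ (α - 1) * z ^ β) with hA'def
    set J2 := ∫⁻ y in Ioo (-1:ℝ) 1,
      ENNReal.ofReal ((1 - y) ^ (α + β) * (1 + y) ^ (α + β)) with hJ2def
    set Bb2 := ∫⁻ t in Ioo (0:ℝ) 1,
      ENNReal.ofReal ((1 - t) ^ (α + β) * t ^ (α + β)) with hBb2def
    have hJ2eq : J2 = ENNReal.ofReal (2 ^ (α + β) * 2 ^ (α + β) * 2) * Bb2 :=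
      Jint_eq (α + β) (α + β)
    have hC2pos : (0:ℝ) < 2 ^ (α + β) * 2 ^ (α + β) * 2 := by positivity
    have hA'pos : 0 < A' := beta_pos (α - 1) β
    have hJ2ne : J2 ≠ 0 := by
      rw [hJ2eq]
      exact mul_ne_zero (ENNReal.ofReal_pos.2 hC2pos).ne' (beta_pos (α + β) (α + β)).ne'
    rw [ENNReal.mul_eq_top]
    constructor
    · rintro (⟨hJ2ne', hA'top⟩ | ⟨hJ2top, hA'ne⟩)
      · by_contra hcon
        push_neg at hcon
        exact absurd hA'top (beta_fin (by linarith) hβ).ne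
      · by_contra hcon
        push_neg at hcon
        have hab : -1 < α + β := by linarith
        have : Bb2 < ⊤ := beta_fin hab hab
        have : J2 < ⊤ := by
          rw [hJ2eq]; exact ENNReal.mul_lt_top ENNReal.ofReal_lt_top this
        exact absurd hJ2top this.ne
    · intro hα0
      exact Or.inl ⟨hJ2ne, beta_top _ (by linarith : α - 1 ≤ -1)⟩
end

section
/- Let α > −1 and β > −1/2 be real numbers. For integers n ≥ 1 and 0 ≤ k ≤ n define a_{n,k} = (n−k+α+1)(n+α+β+3/2)/((2n−k+α+β+3/2)(2n−k+α+β+5/2)), c_{n,k} = (n−k)(n+β+1/2)/((2n−k+α+β+1/2)(2n−k+α+β+3/2)), and b_{n,k} = (n−k+1)(n−k+α+1)/((2n−k+α+β+3/2)(2n−k+α+β+5/2)) + (n+α+β+1/2)(n+β+1/2)/((2n−k+α+β+1/2)(2n−k+α+β+3/2)). Then for all n ≥ 1 and 0 ≤ k ≤ n: a_{n,k} ≥ 0, b_{n,k} ≥ 0, c_{n,k} ≥ 0 and a_{n,k} + b_{n,k} + c_{n,k} = 1. -/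
set_option maxHeartbeats 2000000 in
/-- The diagonal entries of the blocks of the first Jacobi matrix `J₁` of the
orthogonal polynomials on the parabolic domain (normalized at `(1,1)`) are
nonnegative and each row sums to one: `J₁` is a stochastic matrix. -/
theorem stmt_6 (α β : ℝ) (hα : -1 < α) (hβ : -(1 / 2 : ℝ) < β)
    (a b c : ℕ → ℕ → ℝ)
    (ha : ∀ n k, a n k = ((n : ℝ) - k + α + 1) * ((n : ℝ) + α + β + 3 / 2)
      / ((2 * (n : ℝ) - k + α + β + 3 / 2) * (2 * (n : ℝ) - k + α + β + 5 / 2)))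
    (hc : ∀ n k, c n k = ((n : ℝ) - k) * ((n : ℝ) + β + 1 / 2)
      / ((2 * (n : ℝ) - k + α + β + 1 / 2) * (2 * (n : ℝ) - k + α + β + 3 / 2)))
    (hb : ∀ n k, b n k = ((n : ℝ) - k + 1) * ((n : ℝ) - k + α + 1)
      / ((2 * (n : ℝ) - k + α + β + 3 / 2) * (2 * (n : ℝ) - k + α + β + 5 / 2))
      + ((n : ℝ) + α + β + 1 / 2) * ((n : ℝ) + β + 1 / 2)
      / ((2 * (n : ℝ) - k + α + β + 1 / 2) * (2 * (n : ℝ) - k + α + β + 3 / 2))) :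
    ∀ n k : ℕ, 1 ≤ n → k ≤ n →
      0 ≤ a n k ∧ 0 ≤ b n k ∧ 0 ≤ c n k ∧ a n k + b n k + c n k = 1 := by
  intro n k hn hk
  have hn1 : (1 : ℝ) ≤ (n : ℝ) := by exact_mod_cast hn
  have hkn : (k : ℝ) ≤ (n : ℝ) := by exact_mod_cast hk
  have hd1 : (0 : ℝ) < 2 * (n : ℝ) - k + α + β + 1 / 2 := by linarith
  have hd2 : (0 : ℝ) < 2 * (n : ℝ) - k + α + β + 3 / 2 := by linarith
  have hd3 : (0 : ℝ) < 2 * (n : ℝ) - k + α + β + 5 / 2 := by linarith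
  have ha0 : 0 ≤ a n k := by
    rw [ha]
    apply div_nonneg
    · nlinarith
    · positivity
  have hc0 : 0 ≤ c n k := by
    rw [hc]
    apply div_nonneg
    · nlinarith
    · positivity
  have hb0 : 0 ≤ b n k := by
    rw [hb]
    apply add_nonneg <;> apply div_nonneg
    · nlinarith
    · positivity
    · nlinarith
    · positivity
  refine ⟨ha0, hb0, hc0, ?_⟩
  have h1 := hd1.ne'
  have h2 := hd2.ne'
  have h3 := hd3.ne'
  have h23 := mul_ne_zero h2 h3
  have h12 := mul_ne_zero h1 h2
  rw [ha, hb, hc, div_add_div _ _ h23 h12, div_add_div _ _ h23 (mul_ne_zero h23 h12),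
    div_add_div _ _ (mul_ne_zero h23 (mul_ne_zero h23 h12)) h12,
    div_eq_one_iff_eq (mul_ne_zero (mul_ne_zero h23 (mul_ne_zero h23 h12)) h12)]
  ring
end

section
/- Let α > −1 and β > −1/2 be real numbers. For integers n ≥ 0 and 0 ≤ k ≤ n define a^{(3)}_{n,k} = (k+2β+1)(n+α+β+3/2)/((2k+2β+1)(2n−k+α+β+3/2)), b^{(1)}_{n,k} = k(n−k+α+1)/((2k+2β+1)(2n−k+α+β+3/2)), b^{(3)}_{n,k} = (k+2β+1)(n−k)/((2k+2β+1)(2n−k+α+β+3/2)), and c^{(1)}_{n,k} = k(n+β+1/2)/((2k+2β+1)(2n−k+α+β+3/2)). Then for all n ≥ 0 and 0 ≤ k ≤ n: each of these four quantities is nonnegative and a^{(3)}_{n,k} + b^{(1)}_{n,k} + b^{(3)}_{n,k} + c^{(1)}_{n,k} = 1. -/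
/-- The nonzero entries in row `(n,k)` of the second Jacobi matrix `J₂` of the
orthogonal polynomials on the parabolic domain (normalized at `(1,1)`) are
nonnegative and sum to one: `J₂` is a stochastic matrix. -/
theorem stmt_7 (α β : ℝ) (hα : -1 < α) (hβ : -(1 / 2 : ℝ) < β)
    (a3 b1 b3 c1 : ℕ → ℕ → ℝ)
    (ha3 : ∀ n k, a3 n k = ((k : ℝ) + 2 * β + 1) * ((n : ℝ) + α + β + 3 / 2)
      / ((2 * (k : ℝ) + 2 * β + 1) * (2 * (n : ℝ) - k + α + β + 3 / 2)))
    (hb1 : ∀ n k, b1 n k = (k : ℝ) * ((n : ℝ) - k + α + 1)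
      / ((2 * (k : ℝ) + 2 * β + 1) * (2 * (n : ℝ) - k + α + β + 3 / 2)))
    (hb3 : ∀ n k, b3 n k = ((k : ℝ) + 2 * β + 1) * ((n : ℝ) - k)
      / ((2 * (k : ℝ) + 2 * β + 1) * (2 * (n : ℝ) - k + α + β + 3 / 2)))
    (hc1 : ∀ n k, c1 n k = (k : ℝ) * ((n : ℝ) + β + 1 / 2)
      / ((2 * (k : ℝ) + 2 * β + 1) * (2 * (n : ℝ) - k + α + β + 3 / 2))) :
    ∀ n k : ℕ, k ≤ n →
      0 ≤ a3 n k ∧ 0 ≤ b1 n k ∧ 0 ≤ b3 n k ∧ 0 ≤ c1 n k ∧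
      a3 n k + b1 n k + b3 n k + c1 n k = 1 := by
  intro n k hkn
  have hkn' : (k : ℝ) ≤ n := by exact_mod_cast hkn
  have hk0 : (0 : ℝ) ≤ k := Nat.cast_nonneg k
  have hn0 : (0 : ℝ) ≤ n := Nat.cast_nonneg n
  have hd1 : (0 : ℝ) < 2 * (k : ℝ) + 2 * β + 1 := by linarith
  have hd2 : (0 : ℝ) < 2 * (n : ℝ) - k + α + β + 3 / 2 := by linarith
  have hd : (0 : ℝ) < (2 * (k : ℝ) + 2 * β + 1) * (2 * (n : ℝ) - k + α + β + 3 / 2) :=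
    mul_pos hd1 hd2
  refine ⟨?_, ?_, ?_, ?_, ?_⟩
  · rw [ha3]; exact div_nonneg (mul_nonneg (by linarith) (by linarith)) hd.le
  · rw [hb1]; exact div_nonneg (mul_nonneg hk0 (by linarith)) hd.le
  · rw [hb3]; exact div_nonneg (mul_nonneg (by linarith) (by linarith)) hd.le
  · rw [hc1]; exact div_nonneg (mul_nonneg hk0 (by linarith)) hd.le
  · rw [ha3, hb1, hb3, hc1]
    rw [← add_div, ← add_div, ← add_div, div_eq_one_iff_eq hd.ne']
    ring
end

section
/- Let α > −1 and β > −1/2 be real numbers. For integers n ≥ 0 and 0 ≤ k ≤ n define Π_{n,k} = √π·(2k+2β+1)(2n−k+α+β+3/2)·Γ(n+α+β+3/2)·Γ(k+2β+1)·Γ(n−k+α+1) / (2^{2β+1}·Γ(n+β+3/2)·Γ(α+β+5/2)·Γ(α+1)·Γ(β+1)·(n−k)!·k!), and define a_{n,k} = (n−k+α+1)(n+α+β+3/2)/((2n−k+α+β+3/2)(2n−k+α+β+5/2)), c_{n,k} = (n−k)(n+β+1/2)/((2n−k+α+β+1/2)(2n−k+α+β+3/2)), a^{(3)}_{n,k}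 = (k+2β+1)(n+α+β+3/2)/((2k+2β+1)(2n−k+α+β+3/2)), c^{(1)}_{n,k} = k(n+β+1/2)/((2k+2β+1)(2n−k+α+β+3/2)). Then for all n ≥ 0 and 0 ≤ k ≤ n: Π_{n,k}·a_{n,k} = c_{n+1,k}·Π_{n+1,k} and Π_{n,k}·a^{(3)}_{n,k} = c^{(1)}_{n+1,k+1}·Π_{n+1,k+1}. -/
open Real

set_option maxHeartbeats 1000000 in
/-- Componentwise symmetrization relations `Π_n A_{n,1} = C_{n+1,1}ᵀ Π_{n+1}` and
`Π_n A_{n,2} = C_{n+1,2}ᵀ Π_{n+1}` for the diagonal inverse norm matrices of the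
orthogonal polynomials on the parabolic domain (normalized at `(1,1)`). -/
theorem stmt_8 (α β : ℝ) (hα : -1 < α) (hβ : -(1 / 2 : ℝ) < β)
    (Pi a c a3 c1 : ℕ → ℕ → ℝ)
    (hPi : ∀ n k, Pi n k =
      Real.sqrt π * (2 * (k : ℝ) + 2 * β + 1) * (2 * (n : ℝ) - k + α + β + 3 / 2)
        * Real.Gamma ((n : ℝ) + α + β + 3 / 2) * Real.Gamma ((k : ℝ) + 2 * β + 1)
        * Real.Gamma ((n : ℝ) - k + α + 1)
      / ((2 : ℝ) ^ (2 * β + 1) * Real.Gamma ((n : ℝ) + β + 3 / 2)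
        * Real.Gamma (α + β + 5 / 2) * Real.Gamma (α + 1) * Real.Gamma (β + 1)
        * (Nat.factorial (n - k) : ℝ) * (Nat.factorial k : ℝ)))
    (ha : ∀ n k, a n k = ((n : ℝ) - k + α + 1) * ((n : ℝ) + α + β + 3 / 2)
      / ((2 * (n : ℝ) - k + α + β + 3 / 2) * (2 * (n : ℝ) - k + α + β + 5 / 2)))
    (hc : ∀ n k, c n k = ((n : ℝ) - k) * ((n : ℝ) + β + 1 / 2)
      / ((2 * (n : ℝ) - k + α + β + 1 / 2) * (2 * (n : ℝ) - k + α + β + 3 / 2)))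
    (ha3 : ∀ n k, a3 n k = ((k : ℝ) + 2 * β + 1) * ((n : ℝ) + α + β + 3 / 2)
      / ((2 * (k : ℝ) + 2 * β + 1) * (2 * (n : ℝ) - k + α + β + 3 / 2)))
    (hc1 : ∀ n k, c1 n k = (k : ℝ) * ((n : ℝ) + β + 1 / 2)
      / ((2 * (k : ℝ) + 2 * β + 1) * (2 * (n : ℝ) - k + α + β + 3 / 2))) :
    ∀ n k : ℕ, k ≤ n →
      Pi n k * a n k = c (n + 1) k * Pi (n + 1) k ∧
      Pi n k * a3 n k = c1 (n + 1) (k + 1) * Pi (n + 1) (k + 1) := by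
  intro n k hkn
  have hK : (k : ℝ) ≤ (n : ℝ) := by exact_mod_cast hkn
  have hn0 : (0:ℝ) ≤ (n:ℝ) := Nat.cast_nonneg n
  have hk0 : (0:ℝ) ≤ (k:ℝ) := Nat.cast_nonneg k
  have h1 : (0:ℝ) < (n:ℝ) + α + β + 3/2 := by linarith
  have h2 : (0:ℝ) < (n:ℝ) - k + α + 1 := by linarith
  have h3 : (0:ℝ) < (n:ℝ) + β + 3/2 := by linarith
  have h4 : (0:ℝ) < (k:ℝ) + 2*β + 1 := by linarith
  have h5 : (0:ℝ) < 2*(n:ℝ) - k + α + β + 3/2 := by linarith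
  have h6 : (0:ℝ) < 2*(n:ℝ) - k + α + β + 5/2 := by linarith
  have h7 : (0:ℝ) < 2*(n:ℝ) - k + α + β + 7/2 := by linarith
  have h8 : (0:ℝ) < 2*(k:ℝ) + 2*β + 1 := by linarith
  have h9 : (0:ℝ) < 2*(k:ℝ) + 2*β + 3 := by linarith
  have hG1 : (0:ℝ) < Real.Gamma ((n:ℝ) + α + β + 3/2) := Real.Gamma_pos_of_pos h1
  have hG2 : (0:ℝ) < Real.Gamma ((n:ℝ) - k + α + 1) := Real.Gamma_pos_of_pos h2
  have hG3 : (0:ℝ) < Real.Gamma ((n:ℝ) + β + 3/2) := Real.Gamma_pos_of_pos h3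
  have hG4 : (0:ℝ) < Real.Gamma ((k:ℝ) + 2*β + 1) := Real.Gamma_pos_of_pos h4
  have hGab : (0:ℝ) < Real.Gamma (α + β + 5/2) := Real.Gamma_pos_of_pos (by linarith)
  have hGa : (0:ℝ) < Real.Gamma (α + 1) := Real.Gamma_pos_of_pos (by linarith)
  have hGb : (0:ℝ) < Real.Gamma (β + 1) := Real.Gamma_pos_of_pos (by linarith)
  have hpow : (0:ℝ) < (2:ℝ) ^ (2*β + 1) := Real.rpow_pos_of_pos (by norm_num) _
  have hfnk : ((Nat.factorial (n - k) : ℝ)) ≠ 0 := by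
    exact_mod_cast Nat.factorial_ne_zero (n - k)
  have hfk : ((Nat.factorial k : ℝ)) ≠ 0 := by
    exact_mod_cast Nat.factorial_ne_zero k
  -- Gamma and factorial recurrences
  have e1 : Real.Gamma ((((n+1 : ℕ)) : ℝ) + α + β + 3/2)
      = ((n:ℝ) + α + β + 3/2) * Real.Gamma ((n:ℝ) + α + β + 3/2) := by
    push_cast
    rw [show (n:ℝ) + 1 + α + β + 3/2 = ((n:ℝ) + α + β + 3/2) + 1 by ring,
      Real.Gamma_add_one h1.ne']
  have e2 : Real.Gamma ((((n+1 : ℕ)) : ℝ) - (k:ℝ) + α + 1)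
      = ((n:ℝ) - k + α + 1) * Real.Gamma ((n:ℝ) - k + α + 1) := by
    push_cast
    rw [show (n:ℝ) + 1 - k + α + 1 = ((n:ℝ) - k + α + 1) + 1 by ring,
      Real.Gamma_add_one h2.ne']
  have e3 : Real.Gamma ((((n+1 : ℕ)) : ℝ) + β + 3/2)
      = ((n:ℝ) + β + 3/2) * Real.Gamma ((n:ℝ) + β + 3/2) := by
    push_cast
    rw [show (n:ℝ) + 1 + β + 3/2 = ((n:ℝ) + β + 3/2) + 1 by ring,
      Real.Gamma_add_one h3.ne']
  have e4 : Real.Gamma ((((k+1 : ℕ)) : ℝ) + 2*β + 1)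
      = ((k:ℝ) + 2*β + 1) * Real.Gamma ((k:ℝ) + 2*β + 1) := by
    push_cast
    rw [show (k:ℝ) + 1 + 2*β + 1 = ((k:ℝ) + 2*β + 1) + 1 by ring,
      Real.Gamma_add_one h4.ne']
  have e5 : Real.Gamma ((((n+1 : ℕ)) : ℝ) - (((k+1 : ℕ)) : ℝ) + α + 1)
      = Real.Gamma ((n:ℝ) - k + α + 1) := by
    congr 1; push_cast; ring
  have f1 : ((Nat.factorial ((n+1) - k) : ℕ) : ℝ)
      = ((n:ℝ) - k + 1) * (Nat.factorial (n - k) : ℝ) := by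
    rw [show (n+1) - k = (n - k) + 1 from by omega, Nat.factorial_succ]
    push_cast [Nat.cast_sub hkn]
    ring
  have f2 : (n+1) - (k+1) = n - k := by omega
  have hnk : ((n - k : ℕ) : ℝ) = (n:ℝ) - (k:ℝ) := Nat.cast_sub hkn
  have h6' : (0:ℝ) < 2*((n:ℝ)+1) - k + α + β + 1/2 := by linarith
  have h7' : (0:ℝ) < 2*((n:ℝ)+1) - k + α + β + 3/2 := by linarith
  have h8' : (0:ℝ) < 2*((k:ℝ)+1) + 2*β + 1 := by linarith
  have h5' : (0:ℝ) < 2*((n:ℝ)+1) - ((k:ℝ)+1) + α + β + 3/2 := by linarith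
  have hnk1 : (0:ℝ) < (n:ℝ) - k + 1 := by linarith
  have hk1 : (0:ℝ) < (k:ℝ) + 1 := by linarith
  have n1 := h1.ne'
  have n2 := h2.ne'
  have n3 := h3.ne'
  have n4 := h4.ne'
  have n5 := h5.ne'
  have n6 := h6.ne'
  have n7 := h7.ne'
  have n8 := h8.ne'
  have n9 := h9.ne'
  have n6' := h6'.ne'
  have n7' := h7'.ne'
  have n8' := h8'.ne'
  have n5' := h5'.ne'
  have nnk1 := hnk1.ne'
  have nk1 := hk1.ne'
  have nG1 := hG1.ne'
  have nG2 := hG2.ne'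
  have nG3 := hG3.ne'
  have nG4 := hG4.ne'
  have nGab := hGab.ne'
  have nGa := hGa.ne'
  have nGb := hGb.ne'
  have npow := hpow.ne'
  constructor
  · rw [hPi, hPi, ha, hc, e1, e2, e3, f1]
    push_cast
    rw [show 2*((n:ℝ)+1) - (k:ℝ) + α + β + 1/2 = 2*(n:ℝ) - (k:ℝ) + α + β + 5/2 by ring,
        show 2*((n:ℝ)+1) - (k:ℝ) + α + β + 3/2 = 2*(n:ℝ) - (k:ℝ) + α + β + 7/2 by ring,
        show (n:ℝ) + 1 + β + 1/2 = (n:ℝ) + β + 3/2 by ring,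
        show (n:ℝ) + 1 - (k:ℝ) = (n:ℝ) - (k:ℝ) + 1 by ring]
    rw [div_mul_div_comm, div_mul_div_comm, div_eq_div_iff (by
      repeat' apply mul_ne_zero
      all_goals assumption) (by
      repeat' apply mul_ne_zero
      all_goals assumption)]
    generalize (2*(n:ℝ) - (k:ℝ) + α + β + 3/2) = u1
    generalize (2*(n:ℝ) - (k:ℝ) + α + β + 5/2) = u2
    generalize (2*(n:ℝ) - (k:ℝ) + α + β + 7/2) = u3
    generalize (2*(k:ℝ) + 2*β + 1) = z
    generalize ((n:ℝ) + α + β + 3/2) = v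
    generalize ((n:ℝ) - (k:ℝ) + α + 1) = w
    generalize ((n:ℝ) + β + 3/2) = t
    generalize ((n:ℝ) - (k:ℝ) + 1) = m1
    ring
  · rw [hPi, hPi, ha3, hc1, e1, e4, e5, e3, f2, Nat.factorial_succ]
    push_cast
    rw [show 2*((k:ℝ)+1) + 2*β + 1 = 2*(k:ℝ) + 2*β + 3 by ring,
        show 2*((n:ℝ)+1) - ((k:ℝ)+1) + α + β + 3/2 = 2*(n:ℝ) - (k:ℝ) + α + β + 5/2 by ring,
        show (n:ℝ) + 1 + β + 1/2 = (n:ℝ) + β + 3/2 by ring]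
    rw [div_mul_div_comm, div_mul_div_comm, div_eq_div_iff (by
      repeat' apply mul_ne_zero
      all_goals assumption) (by
      repeat' apply mul_ne_zero
      all_goals assumption)]
    generalize (2*(n:ℝ) - (k:ℝ) + α + β + 3/2) = u1
    generalize (2*(n:ℝ) - (k:ℝ) + α + β + 5/2) = u2
    generalize (2*(k:ℝ) + 2*β + 3) = z3
    generalize (2*(k:ℝ) + 2*β + 1) = z
    generalize ((n:ℝ) + α + β + 3/2) = v
    generalize ((k:ℝ) + 2*β + 1) = w4
    generalize ((n:ℝ) + β + 3/2) = t
    generalize ((k:ℝ) + 1) = k1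
    ring
end

section
/- Let α, β, γ > −1 be real numbers. For integers n and 0 ≤ k ≤ n define a_{n,k} = (n−k+α+1)(n+k+α+β+γ+2)/((2n+α+β+γ+2)(2n+α+β+γ+3)), c_{n,k} = (n−k)(n+k+β+γ+1)/((2n+α+β+γ+1)(2n+α+β+γ+2)), b_{n,k} = −(a_{n,k}+c_{n,k}), D_k = (1/2)(1 + (β²−γ²)/((2k+β+γ+2)(2k+β+γ))), and the nine quantities a^{(1)}_{n,k} = (n−k+α+1)(n−k+α+2)·k(k+β)/((2n+α+β+γ+2)(2n+α+β+γ+3)(2k+β+γ)(2k+β+γ+1)), a^{(2)}_{n,k} = D_k·a_{n,k}, a^{(3)}_{n,k} = (n+k+α+β+γ+2)(n+k+α+β+γ+3)(k+γ+1)(k+β+γ+1)/((2n+α+β+γ+2)(2n+α+β+γ+3)(2k+β+γ+1)(2k+β+γ+2)), b^{(1)}_{n,k} = 2k(k+β)(n−k+α+1)(n+k+β+γ+1)/((2k+β+γ)(2k+β+γ+1)(2n+α+β+γ+1)(2n+α+β+γ+3)), b^{(2)}_{n,k} = D_k·(1+b_{n,k}), b^{(3)}_{n,k} = 2(n−k)(n+k+α+β+γ+2)(k+γ+1)(k+β+γ+1)/((2n+α+β+γ+1)(2n+α+β+γ+3)(2k+β+γ+1)(2k+β+γ+2)),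 c^{(1)}_{n,k} = (n+k+β+γ)(n+k+β+γ+1)·k(k+β)/((2n+α+β+γ+1)(2n+α+β+γ+2)(2k+β+γ)(2k+β+γ+1)), c^{(2)}_{n,k} = D_k·c_{n,k}, c^{(3)}_{n,k} = (n−k−1)(n−k)(k+β+γ+1)(k+γ+1)/((2n+α+β+γ+1)(2n+α+β+γ+2)(2k+β+γ+1)(2k+β+γ+2)). Then for all n ≥ 3 and 1 ≤ k ≤ n−2: a^{(1)}_{n,k} + a^{(2)}_{n,k} + a^{(3)}_{n,k} + b^{(1)}_{n,k} + b^{(2)}_{n,k} + b^{(3)}_{n,k} + c^{(1)}_{n,k} + c^{(2)}_{n,k} + c^{(3)}_{n,k} = 1. -/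
theorem grp1 (α β γ x y : ℝ)
    (d1 : (2 * x + α + β + γ + 1) ≠ 0) (d2 : (2 * x + α + β + γ + 2) ≠ 0)
    (d3 : (2 * x + α + β + γ + 3) ≠ 0) (e0 : (2 * y + β + γ) ≠ 0)
    (e1 : (2 * y + β + γ + 1) ≠ 0) :
    (x - y + α + 1) * (x - y + α + 2) * y * (y + β)
      / ((2 * x + α + β + γ + 2) * (2 * x + α + β + γ + 3)
        * (2 * y + β + γ) * (2 * y + β + γ + 1))
    + 2 * y * (y + β) * (x - y + α + 1) * (x + y + β + γ + 1)
      / ((2 * y + β + γ) * (2 * y + β + γ + 1)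
        * (2 * x + α + β + γ + 1) * (2 * x + α + β + γ + 3))
    + (x + y + β + γ) * (x + y + β + γ + 1) * y * (y + β)
      / ((2 * x + α + β + γ + 1) * (2 * x + α + β + γ + 2)
        * (2 * y + β + γ) * (2 * y + β + γ + 1))
    = y * (y + β) / ((2 * y + β + γ) * (2 * y + β + γ + 1)) := by
  have hp : x - y + α + 1 = x - y + α + 1 := rfl
  set p := x - y + α + 1 with hp'
  set q := x + y + β + γ + 1 with hq'
  set w := 2 * y + β + γ with hw'
  set t := y + β with ht'
  rw [show x - y + α + 2 = p + 1 by rw [hp']; ring,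
      show x + y + β + γ = q - 1 by rw [hq']; ring,
      show 2 * x + α + β + γ + 1 = p + q - 1 by rw [hp', hq']; ring,
      show 2 * x + α + β + γ + 2 = p + q by rw [hp', hq']; ring,
      show 2 * x + α + β + γ + 3 = p + q + 1 by rw [hp', hq']; ring]
  rw [show 2 * x + α + β + γ + 1 = p + q - 1 by rw [hp', hq']; ring] at d1
  rw [show 2 * x + α + β + γ + 2 = p + q by rw [hp', hq']; ring] at d2
  rw [show 2 * x + α + β + γ + 3 = p + q + 1 by rw [hp', hq']; ring] at d3
  clear_value p q w t
  field_simp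
  ring


theorem grp3 (α β γ x y : ℝ)
    (d1 : (2 * x + α + β + γ + 1) ≠ 0) (d2 : (2 * x + α + β + γ + 2) ≠ 0)
    (d3 : (2 * x + α + β + γ + 3) ≠ 0) (e1 : (2 * y + β + γ + 1) ≠ 0)
    (e2 : (2 * y + β + γ + 2) ≠ 0) :
    (x + y + α + β + γ + 2) * (x + y + α + β + γ + 3) * (y + γ + 1) * (y + β + γ + 1)
      / ((2 * x + α + β + γ + 2) * (2 * x + α + β + γ + 3)
        * (2 * y + β + γ + 1) * (2 * y + β + γ + 2))
    + 2 * (x - y) * (x + y + α + β + γ + 2) * (y + γ + 1) * (y + β + γ + 1)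
      / ((2 * x + α + β + γ + 1) * (2 * x + α + β + γ + 3)
        * (2 * y + β + γ + 1) * (2 * y + β + γ + 2))
    + (x - y - 1) * (x - y) * (y + β + γ + 1) * (y + γ + 1)
      / ((2 * x + α + β + γ + 1) * (2 * x + α + β + γ + 2)
        * (2 * y + β + γ + 1) * (2 * y + β + γ + 2))
    = (y + γ + 1) * (y + β + γ + 1) / ((2 * y + β + γ + 1) * (2 * y + β + γ + 2)) := by
  set u := x - y with hu'
  set v := x + y + α + β + γ + 2 with hv'
  set w := 2 * y + β + γ + 1 with hw'
  set r := y + γ + 1 with hr'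
  set s := y + β + γ + 1 with hs'
  rw [show x + y + α + β + γ + 3 = v + 1 by rw [hv']; ring,
      show 2 * y + β + γ + 2 = w + 1 by rw [hw']; ring,
      show 2 * x + α + β + γ + 1 = u + v - 1 by rw [hu', hv']; ring,
      show 2 * x + α + β + γ + 2 = u + v by rw [hu', hv']; ring,
      show 2 * x + α + β + γ + 3 = u + v + 1 by rw [hu', hv']; ring]
  rw [show 2 * x + α + β + γ + 1 = u + v - 1 by rw [hu', hv']; ring] at d1
  rw [show 2 * x + α + β + γ + 2 = u + v by rw [hu', hv']; ring] at d2
  rw [show 2 * x + α + β + γ + 3 = u + v + 1 by rw [hu', hv']; ring] at d3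
  rw [show 2 * y + β + γ + 2 = w + 1 by rw [hw']; ring] at e2
  clear_value u v w r s
  field_simp
  ring

theorem hsumkey (β γ y : ℝ) (e0 : (2 * y + β + γ) ≠ 0)
    (e1 : (2 * y + β + γ + 1) ≠ 0) (e2 : (2 * y + β + γ + 2) ≠ 0) :
    (1 / 2) * (1 + (β ^ 2 - γ ^ 2) / ((2 * y + β + γ + 2) * (2 * y + β + γ)))
      + y * (y + β) / ((2 * y + β + γ) * (2 * y + β + γ + 1))
      + (y + γ + 1) * (y + β + γ + 1) / ((2 * y + β + γ + 1) * (2 * y + β + γ + 2)) = 1 := by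
  field_simp
  ring



set_option maxHeartbeats 1000000 in
/-- Every interior row `(n,k)` (with `n ≥ 3`, `1 ≤ k ≤ n−2`) of the second Jacobi
matrix `J₂` of the orthogonal polynomials on the triangle (normalized at `(0,1)`)
sums to one, so `J₂` is the transition matrix of a discrete-time QBD process. -/
theorem stmt_10 (α β γ : ℝ) (hα : -1 < α) (hβ : -1 < β) (hγ : -1 < γ)
    (a c b D a1 a2 a3 b1 b2 b3 c1 c2 c3 : ℕ → ℕ → ℝ)
    (ha : ∀ n k, a n k = ((n : ℝ) - k + α + 1) * ((n : ℝ) + k + α + β + γ + 2)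
      / ((2 * (n : ℝ) + α + β + γ + 2) * (2 * (n : ℝ) + α + β + γ + 3)))
    (hc : ∀ n k, c n k = ((n : ℝ) - k) * ((n : ℝ) + k + β + γ + 1)
      / ((2 * (n : ℝ) + α + β + γ + 1) * (2 * (n : ℝ) + α + β + γ + 2)))
    (hb : ∀ n k, b n k = -(a n k + c n k))
    (hD : ∀ n k, D n k = (1 / 2) * (1 + (β ^ 2 - γ ^ 2)
      / ((2 * (k : ℝ) + β + γ + 2) * (2 * (k : ℝ) + β + γ))))
    (ha1 : ∀ n k, a1 n k = ((n : ℝ) - k + α + 1) * ((n : ℝ) - k + α + 2)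
        * (k : ℝ) * ((k : ℝ) + β)
      / ((2 * (n : ℝ) + α + β + γ + 2) * (2 * (n : ℝ) + α + β + γ + 3)
        * (2 * (k : ℝ) + β + γ) * (2 * (k : ℝ) + β + γ + 1)))
    (ha2 : ∀ n k, a2 n k = D n k * a n k)
    (ha3 : ∀ n k, a3 n k = ((n : ℝ) + k + α + β + γ + 2) * ((n : ℝ) + k + α + β + γ + 3)
        * ((k : ℝ) + γ + 1) * ((k : ℝ) + β + γ + 1)
      / ((2 * (n : ℝ) + α + β + γ + 2) * (2 * (n : ℝ) + α + β + γ + 3)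
        * (2 * (k : ℝ) + β + γ + 1) * (2 * (k : ℝ) + β + γ + 2)))
    (hb1 : ∀ n k, b1 n k = 2 * (k : ℝ) * ((k : ℝ) + β) * ((n : ℝ) - k + α + 1)
        * ((n : ℝ) + k + β + γ + 1)
      / ((2 * (k : ℝ) + β + γ) * (2 * (k : ℝ) + β + γ + 1)
        * (2 * (n : ℝ) + α + β + γ + 1) * (2 * (n : ℝ) + α + β + γ + 3)))
    (hb2 : ∀ n k, b2 n k = D n k * (1 + b n k))
    (hb3 : ∀ n k, b3 n k = 2 * ((n : ℝ) - k) * ((n : ℝ) + k + α + β + γ + 2)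
        * ((k : ℝ) + γ + 1) * ((k : ℝ) + β + γ + 1)
      / ((2 * (n : ℝ) + α + β + γ + 1) * (2 * (n : ℝ) + α + β + γ + 3)
        * (2 * (k : ℝ) + β + γ + 1) * (2 * (k : ℝ) + β + γ + 2)))
    (hc1 : ∀ n k, c1 n k = ((n : ℝ) + k + β + γ) * ((n : ℝ) + k + β + γ + 1)
        * (k : ℝ) * ((k : ℝ) + β)
      / ((2 * (n : ℝ) + α + β + γ + 1) * (2 * (n : ℝ) + α + β + γ + 2)
        * (2 * (k : ℝ) + β + γ) * (2 * (k : ℝ) + β + γ + 1)))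
    (hc2 : ∀ n k, c2 n k = D n k * c n k)
    (hc3 : ∀ n k, c3 n k = ((n : ℝ) - k - 1) * ((n : ℝ) - k)
        * ((k : ℝ) + β + γ + 1) * ((k : ℝ) + γ + 1)
      / ((2 * (n : ℝ) + α + β + γ + 1) * (2 * (n : ℝ) + α + β + γ + 2)
        * (2 * (k : ℝ) + β + γ + 1) * (2 * (k : ℝ) + β + γ + 2))) :
    ∀ n k : ℕ, 3 ≤ n → 1 ≤ k → k ≤ n - 2 →
      a1 n k + a2 n k + a3 n k + b1 n k + b2 n k + b3 n k
        + c1 n k + c2 n k + c3 n k = 1 := by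
  intro n k hn hk1 hk2
  have hn' : (3 : ℝ) ≤ (n : ℝ) := by exact_mod_cast hn
  have hk' : (1 : ℝ) ≤ (k : ℝ) := by exact_mod_cast hk1
  have d1 : (2 * (n : ℝ) + α + β + γ + 1) ≠ 0 := by nlinarith
  have d2 : (2 * (n : ℝ) + α + β + γ + 2) ≠ 0 := by nlinarith
  have d3 : (2 * (n : ℝ) + α + β + γ + 3) ≠ 0 := by nlinarith
  have e0 : (2 * (k : ℝ) + β + γ) ≠ 0 := by nlinarith
  have e1 : (2 * (k : ℝ) + β + γ + 1) ≠ 0 := by nlinarith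
  have e2 : (2 * (k : ℝ) + β + γ + 2) ≠ 0 := by nlinarith
  have h1 : a1 n k + b1 n k + c1 n k
      = (k : ℝ) * ((k : ℝ) + β) / ((2 * (k : ℝ) + β + γ) * (2 * (k : ℝ) + β + γ + 1)) := by
    rw [ha1, hb1, hc1]
    exact grp1 α β γ (n : ℝ) (k : ℝ) d1 d2 d3 e0 e1
  have h3 : a3 n k + b3 n k + c3 n k
      = ((k : ℝ) + γ + 1) * ((k : ℝ) + β + γ + 1)
        / ((2 * (k : ℝ) + β + γ + 1) * (2 * (k : ℝ) + β + γ + 2)) := by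
    rw [ha3, hb3, hc3]
    exact grp3 α β γ (n : ℝ) (k : ℝ) d1 d2 d3 e1 e2
  have h2 : a2 n k + b2 n k + c2 n k = D n k := by
    rw [ha2, hb2, hc2, hb]
    ring
  have hD' := hD n k
  have hsum := hsumkey β γ (k : ℝ) e0 e1 e2
  linarith [h1, h2, h3, hsum]
end

section
/- Let α, β, γ > −1 be real numbers, let T = {(x,y) ∈ ℝ² : x > 0, y > 0, x + y < 1}, and let τ ≥ 0. Then the integral ∫_T x^α y^β (1−x−y)^γ / (1 − y + τx) dx dy is infinite if and only if α + γ ≤ −1. -/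
open MeasureTheory Set
open scoped ENNReal

lemma aux_rpow_lower {a b x p : ℝ} (ha : 0 < a) (hax : a ≤ x) (hxb : x ≤ b) :
    min (a ^ p) (b ^ p) ≤ x ^ p := by
  rcases le_total 0 p with hp | hp
  · exact le_trans (min_le_left _ _) (Real.rpow_le_rpow ha.le hax hp)
  · exact le_trans (min_le_right _ _) (Real.rpow_le_rpow_of_nonpos (ha.trans_le hax) hxb hp)

lemma aux_rpow_upper {a b x p : ℝ} (ha : 0 < a) (hax : a ≤ x) (hxb : x ≤ b) :
    x ^ p ≤ a ^ p + b ^ p := by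
  rcases le_total 0 p with hp | hp
  · calc x ^ p ≤ b ^ p := Real.rpow_le_rpow (ha.le.trans hax) hxb hp
    _ ≤ a ^ p + b ^ p := le_add_of_nonneg_left (Real.rpow_nonneg ha.le p)
  · calc x ^ p ≤ a ^ p := Real.rpow_le_rpow_of_nonpos ha hax hp
    _ ≤ a ^ p + b ^ p := le_add_of_nonneg_right (Real.rpow_nonneg (ha.trans_le (hax.trans hxb)).le p)

lemma lint_rpow_Ioo {b q : ℝ} (hb : 0 < b) (hq : -1 < q) :
    ∫⁻ x in Ioo (0:ℝ) b, ENNReal.ofReal (x ^ q) = ENNReal.ofReal (b ^ (q+1) / (q+1)) := by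
  have hint : IntegrableOn (fun x : ℝ => x ^ q) (Ioo 0 b) := (intervalIntegral.integrableOn_Ioo_rpow_iff hb).2 hq
  rw [← ofReal_integral_eq_lintegral_ofReal hint ?pos]
  · congr 1
    have h1 : ∫ x in Ioo (0:ℝ) b, x ^ q = ∫ x in (0:ℝ)..b, x ^ q := by
      rw [intervalIntegral.integral_of_le hb.le, ← integral_Ioc_eq_integral_Ioo]
    rw [h1, integral_rpow (Or.inl hq), Real.zero_rpow (by linarith)]
    ring
  case pos =>
    filter_upwards [self_mem_ae_restrict measurableSet_Ioo] with x hx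
    exact Real.rpow_nonneg hx.1.le _

lemma lint_rpow_Ioo_top {b q : ℝ} (hb : 0 < b) (hq : q ≤ -1) :
    ∫⁻ x in Ioo (0:ℝ) b, ENNReal.ofReal (x ^ q) = ⊤ := by
  by_contra h
  have hm : AEStronglyMeasurable (fun x : ℝ => x ^ q) (volume.restrict (Ioo 0 b)) := by fun_prop
  have hnn : 0 ≤ᵐ[volume.restrict (Ioo (0:ℝ) b)] fun x => x ^ q := by
    filter_upwards [self_mem_ae_restrict measurableSet_Ioo] with x hx
    exact Real.rpow_nonneg hx.1.le _
  have : IntegrableOn (fun x : ℝ => x ^ q) (Ioo 0 b) :=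
    ⟨hm, (hasFiniteIntegral_iff_ofReal hnn).2 (lt_top_iff_ne_top.2 h)⟩
  exact absurd ((intervalIntegral.integrableOn_Ioo_rpow_iff hb).1 this) (by linarith)

lemma lint_const_sub (c : ℝ) (f : ℝ → ℝ≥0∞) (s : Set ℝ) :
    ∫⁻ x in s, f (c - x) = ∫⁻ t in (fun x => c - x) '' s, f t :=
  (Measure.measurePreserving_sub_left volume c).setLIntegral_comp_emb
    (Homeomorph.subLeft c).measurableEmbedding f s

lemma lint_slice {A : Set ℝ} (hA : MeasurableSet A) (g h : ℝ → ℝ)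
    (F : ℝ × ℝ → ℝ≥0∞) (hF : Measurable F)
    {S : Set (ℝ × ℝ)} (hSm : MeasurableSet S)
    (hin : ∀ y ∈ A, {x | (x, y) ∈ S} = Ioo (g y) (h y))
    (hout : ∀ y ∉ A, {x | (x, y) ∈ S} = ∅) :
    ∫⁻ p in S, F p = ∫⁻ y in A, ∫⁻ x in Ioo (g y) (h y), F (x, y) := by
  rw [← lintegral_indicator hSm, Measure.volume_eq_prod,
    lintegral_prod_symm' _ (hF.indicator hSm), ← lintegral_indicator hA]
  refine lintegral_congr fun y => ?_
  have key : ∀ x, S.indicator F (x, y) = ({x | (x, y) ∈ S}).indicator (fun x => F (x, y)) x :=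
    fun x => rfl
  by_cases hy : y ∈ A
  · rw [indicator_of_mem hy, ← lintegral_indicator measurableSet_Ioo]
    refine lintegral_congr fun x => ?_
    rw [key x, hin y hy]
  · rw [indicator_of_notMem hy]
    have h0 : ∀ x, S.indicator F (x, y) = 0 := fun x => by
      rw [key x, hout y hy]; simp
    simp [h0]

lemma lint_beta_lt_top {b p : ℝ} (hb : -1 < b) (hp : -1 < p) :
    ∫⁻ y in Ioo (0:ℝ) 1, ENNReal.ofReal (y ^ b * (1 - y) ^ p) < ⊤ := by
  have hsub : Ioo (0:ℝ) 1 ⊆ Ioo 0 (1/2) ∪ Ico (1/2) 1 := by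
    intro y hy
    rcases lt_or_ge y (1/2) with h | h
    · exact Or.inl ⟨hy.1, h⟩
    · exact Or.inr ⟨h, hy.2⟩
  have half : (0:ℝ) < 1/2 := by norm_num
  refine lt_of_le_of_lt ((lintegral_mono_set hsub).trans (lintegral_union_le _ _ _)) ?_
  have h1 : (∫⁻ y in Ioo (0:ℝ) (1/2), ENNReal.ofReal (y ^ b * (1 - y) ^ p))
      ≤ ENNReal.ofReal ((1/2) ^ p + 1) * ENNReal.ofReal ((1/2) ^ (b+1) / (b+1)) := by
    rw [← lint_rpow_Ioo half hb, ← lintegral_const_mul' _ _ ENNReal.ofReal_ne_top]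
    refine setLIntegral_mono (by fun_prop) fun y hy => ?_
    rw [← ENNReal.ofReal_mul (by positivity)]
    apply ENNReal.ofReal_le_ofReal
    have h2 : (1 - y) ^ p ≤ (1/2) ^ p + 1 := by
      have := aux_rpow_upper (a := 1/2) (b := 1) (x := 1 - y) (p := p) half
        (by linarith [hy.2]) (by linarith [hy.1])
      simpa [Real.one_rpow] using this
    have hy0 : (0:ℝ) ≤ y ^ b := Real.rpow_nonneg hy.1.le b
    calc y ^ b * (1 - y) ^ p ≤ y ^ b * ((1/2) ^ p + 1) :=
          mul_le_mul_of_nonneg_left h2 hy0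
      _ = ((1/2) ^ p + 1) * y ^ b := by ring
  have h2 : (∫⁻ y in Ico (1/2:ℝ) 1, ENNReal.ofReal (y ^ b * (1 - y) ^ p))
      ≤ ENNReal.ofReal ((1/2) ^ b + 1) * ENNReal.ofReal ((1/2) ^ (p+1) / (p+1)) := by
    have himg : (∫⁻ y in Ico (1/2:ℝ) 1, ENNReal.ofReal ((1 - y) ^ p))
        = ENNReal.ofReal ((1/2) ^ (p+1) / (p+1)) := by
      rw [lint_const_sub 1 (fun t => ENNReal.ofReal (t ^ p)) (Ico (1/2) 1)]
      have himg2 : (fun x : ℝ => 1 - x) '' Ico (1/2) 1 = Ioc 0 (1/2) := by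
        rw [image_const_sub_Ico]; congr 1 <;> norm_num
      rw [himg2, setLIntegral_congr (Ioo_ae_eq_Ioc (a := (0:ℝ)) (b := 1/2)).symm]
      exact lint_rpow_Ioo half hp
    rw [← himg, ← lintegral_const_mul' _ _ ENNReal.ofReal_ne_top]
    refine setLIntegral_mono (by fun_prop) fun y hy => ?_
    rw [← ENNReal.ofReal_mul (by positivity)]
    apply ENNReal.ofReal_le_ofReal
    have h3 : y ^ b ≤ (1/2) ^ b + 1 := by
      have := aux_rpow_upper (a := 1/2) (b := 1) (x := y) (p := b) half hy.1 hy.2.le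
      simpa [Real.one_rpow] using this
    have hy0 : (0:ℝ) ≤ (1 - y) ^ p := Real.rpow_nonneg (by linarith [hy.2]) p
    exact mul_le_mul_of_nonneg_right h3 hy0
  calc _ ≤ _ := add_le_add h1 h2
  _ < ⊤ := by
      apply ENNReal.add_lt_top.2
      constructor <;> exact ENNReal.mul_lt_top ENNReal.ofReal_lt_top ENNReal.ofReal_lt_top

lemma main_fin (α β γ τ : ℝ) (hα : -1 < α) (hβ : -1 < β) (hγ : -1 < γ) (hτ : 0 ≤ τ)
    (hp : -1 < α + γ) :
    (∫⁻ p : ℝ × ℝ in {p : ℝ × ℝ | 0 < p.1 ∧ 0 < p.2 ∧ p.1 + p.2 < 1},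
        ENNReal.ofReal (p.1 ^ α * p.2 ^ β * (1 - p.1 - p.2) ^ γ /
          (1 - p.2 + τ * p.1))) ≠ ⊤ := by
  set F : ℝ × ℝ → ℝ≥0∞ := fun p =>
    ENNReal.ofReal (p.1 ^ α * p.2 ^ β * (1 - p.1 - p.2) ^ γ / (1 - p.2 + τ * p.1)) with hFdef
  set T : Set (ℝ × ℝ) := {p : ℝ × ℝ | 0 < p.1 ∧ 0 < p.2 ∧ p.1 + p.2 < 1} with hTdef
  have hFm : Measurable F := by fun_prop
  have hTm : MeasurableSet T := by
    have : T = {p : ℝ × ℝ | 0 < p.1} ∩ ({p | 0 < p.2} ∩ {p | p.1 + p.2 < 1}) := rfl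
    rw [this]
    exact (measurableSet_lt measurable_const measurable_fst).inter
      ((measurableSet_lt measurable_const measurable_snd).inter
        (measurableSet_lt (measurable_fst.add measurable_snd) measurable_const))
  have hin : ∀ y ∈ Ioo (0:ℝ) 1, {x | (x, y) ∈ T} = Ioo 0 (1 - y) := by
    intro y hy
    ext x
    simp only [hTdef, mem_setOf_eq, mem_Ioo]
    constructor
    · rintro ⟨h1, _, h3⟩; exact ⟨h1, by linarith⟩
    · rintro ⟨h1, h2⟩; exact ⟨h1, hy.1, by linarith⟩
  have hout : ∀ y ∉ Ioo (0:ℝ) 1, {x | (x, y) ∈ T} = ∅ := by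
    intro y hy
    ext x
    simp only [hTdef, mem_setOf_eq, mem_empty_iff_false, iff_false, not_and]
    intro h1 h2
    intro h3
    exact hy ⟨h2, by linarith⟩
  rw [lint_slice measurableSet_Ioo (fun _ => 0) (fun y => 1 - y) F hFm hTm hin hout]
  -- the constant
  set c₁ : ℝ := ((2:ℝ)⁻¹ ^ γ + 1) * ((2:ℝ)⁻¹ ^ (α + 1) / (α + 1)) with hc₁
  set c₂ : ℝ := ((2:ℝ)⁻¹ ^ α + 1) * ((2:ℝ)⁻¹ ^ (γ + 1) / (γ + 1)) with hc₂
  set K : ℝ := c₁ + c₂ with hK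
  have hc₁pos : 0 < c₁ :=
    mul_pos (by positivity) (div_pos (by positivity) (by linarith))
  have hc₂pos : 0 < c₂ :=
    mul_pos (by positivity) (div_pos (by positivity) (by linarith))
  have hKpos : 0 < K := add_pos hc₁pos hc₂pos
  have key : ∀ y ∈ Ioo (0:ℝ) 1, (∫⁻ x in Ioo (0:ℝ) (1 - y), F (x, y))
      ≤ ENNReal.ofReal K * ENNReal.ofReal (y ^ β * (1 - y) ^ (α + γ)) := by
    intro y hy
    set s : ℝ := 1 - y with hsdef
    have hs : 0 < s := by simp only [hsdef]; linarith [hy.2]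
    have hs0 : s ≠ 0 := hs.ne'
    have hs2 : 0 < s / 2 := by linarith
    have hy0 : 0 < y := hy.1
    -- pointwise bound
    have step1 : ∀ x ∈ Ioo (0:ℝ) s, F (x, y) ≤
        ENNReal.ofReal (y ^ β / s) * ENNReal.ofReal (x ^ α * (s - x) ^ γ) := by
      intro x hx
      have hx0 : 0 < x := hx.1
      have hsx : 0 < s - x := by linarith [hx.2]
      have hFeq : F (x, y) =
          ENNReal.ofReal (x ^ α * y ^ β * (s - x) ^ γ / (s + τ * x)) := by
        have e1 : (1:ℝ) - x - y = s - x := by rw [hsdef]; ring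
        have e2 : (1:ℝ) - y + τ * x = s + τ * x := by rw [hsdef]
        show ENNReal.ofReal (x ^ α * y ^ β * (1 - x - y) ^ γ / (1 - y + τ * x)) = _
        rw [e1, e2]
      rw [hFeq, ← ENNReal.ofReal_mul (div_nonneg (Real.rpow_nonneg hy0.le β) hs.le)]
      apply ENNReal.ofReal_le_ofReal
      have hnum : (0:ℝ) ≤ x ^ α * y ^ β * (s - x) ^ γ :=
        mul_nonneg (mul_nonneg (Real.rpow_nonneg hx0.le α) (Real.rpow_nonneg hy0.le β))
          (Real.rpow_nonneg hsx.le γ)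
      have hden : s ≤ s + τ * x := by nlinarith
      calc x ^ α * y ^ β * (s - x) ^ γ / (s + τ * x)
          ≤ x ^ α * y ^ β * (s - x) ^ γ / s := div_le_div_of_nonneg_left hnum hs hden
        _ = y ^ β / s * (x ^ α * (s - x) ^ γ) := by ring
    have step2 : (∫⁻ x in Ioo (0:ℝ) s, F (x, y)) ≤
        ENNReal.ofReal (y ^ β / s) * ∫⁻ x in Ioo (0:ℝ) s, ENNReal.ofReal (x ^ α * (s - x) ^ γ) := by
      rw [← lintegral_const_mul' _ _ ENNReal.ofReal_ne_top]
      exact setLIntegral_mono (by fun_prop) step1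
    -- split the inner integral
    have hsplit : Ioo (0:ℝ) s ⊆ Ioo 0 (s/2) ∪ Ico (s/2) s := by
      intro x hx
      rcases lt_or_ge x (s/2) with h | h
      · exact Or.inl ⟨hx.1, h⟩
      · exact Or.inr ⟨h, hx.2⟩
    have J1 : (∫⁻ x in Ioo (0:ℝ) (s/2), ENNReal.ofReal (x ^ α * (s - x) ^ γ))
        ≤ ENNReal.ofReal ((s/2) ^ γ + s ^ γ) * ENNReal.ofReal ((s/2) ^ (α+1) / (α+1)) := by
      rw [← lint_rpow_Ioo hs2 hα, ← lintegral_const_mul' _ _ ENNReal.ofReal_ne_top]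
      refine setLIntegral_mono (by fun_prop) fun x hx => ?_
      rw [← ENNReal.ofReal_mul (add_nonneg (Real.rpow_nonneg hs2.le γ) (Real.rpow_nonneg hs.le γ))]
      apply ENNReal.ofReal_le_ofReal
      have h1 : (s - x) ^ γ ≤ (s/2) ^ γ + s ^ γ :=
        aux_rpow_upper hs2 (by linarith [hx.2]) (by linarith [hx.1])
      have hx0 : (0:ℝ) ≤ x ^ α := Real.rpow_nonneg hx.1.le α
      calc x ^ α * (s - x) ^ γ ≤ x ^ α * ((s/2) ^ γ + s ^ γ) :=
            mul_le_mul_of_nonneg_left h1 hx0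
        _ = ((s/2) ^ γ + s ^ γ) * x ^ α := by ring
    have J2 : (∫⁻ x in Ico (s/2) s, ENNReal.ofReal (x ^ α * (s - x) ^ γ))
        ≤ ENNReal.ofReal ((s/2) ^ α + s ^ α) * ENNReal.ofReal ((s/2) ^ (γ+1) / (γ+1)) := by
      have himg : (∫⁻ x in Ico (s/2) s, ENNReal.ofReal ((s - x) ^ γ))
          = ENNReal.ofReal ((s/2) ^ (γ+1) / (γ+1)) := by
        rw [lint_const_sub s (fun t => ENNReal.ofReal (t ^ γ)) (Ico (s/2) s)]
        have himg2 : (fun x : ℝ => s - x) '' Ico (s/2) s = Ioc 0 (s/2) := by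
          rw [image_const_sub_Ico]
          congr 1 <;> ring
        rw [himg2, setLIntegral_congr (Ioo_ae_eq_Ioc (a := (0:ℝ)) (b := s/2)).symm]
        exact lint_rpow_Ioo hs2 hγ
      rw [← himg, ← lintegral_const_mul' _ _ ENNReal.ofReal_ne_top]
      refine setLIntegral_mono (by fun_prop) fun x hx => ?_
      rw [← ENNReal.ofReal_mul (add_nonneg (Real.rpow_nonneg hs2.le α) (Real.rpow_nonneg hs.le α))]
      apply ENNReal.ofReal_le_ofReal
      have h1 : x ^ α ≤ (s/2) ^ α + s ^ α := aux_rpow_upper hs2 hx.1 hx.2.le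
      exact mul_le_mul_of_nonneg_right h1 (Real.rpow_nonneg (by linarith [hx.2.le]) γ)
    -- rpow algebra
    have h2 : ∀ q : ℝ, (s/2) ^ q = s ^ q * (2:ℝ)⁻¹ ^ q := fun q => by
      rw [show s/2 = s * 2⁻¹ by ring, Real.mul_rpow hs.le (by norm_num)]
    have hA1 : s ^ γ * s ^ (α+1) = s ^ (α+γ) * s := by
      rw [← Real.rpow_add hs, ← Real.rpow_add_one hs0]
      congr 1; ring
    have hA2 : s ^ α * s ^ (γ+1) = s ^ (α+γ) * s := by
      rw [← Real.rpow_add hs, ← Real.rpow_add_one hs0]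
      congr 1; ring
    have hfin' : ((s/2) ^ γ + s ^ γ) * ((s/2) ^ (α+1) / (α+1))
        + ((s/2) ^ α + s ^ α) * ((s/2) ^ (γ+1) / (γ+1)) = K * (s ^ (α+γ) * s) := by
      rw [hK, hc₁, hc₂, h2 γ, h2 (α+1), h2 α, h2 (γ+1)]
      linear_combination (((2:ℝ)⁻¹ ^ γ + 1) * ((2:ℝ)⁻¹ ^ (α+1) / (α+1))) * hA1
        + (((2:ℝ)⁻¹ ^ α + 1) * ((2:ℝ)⁻¹ ^ (γ+1) / (γ+1))) * hA2
    have hfin : y ^ β / s * (((s/2) ^ γ + s ^ γ) * ((s/2) ^ (α+1) / (α+1))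
        + ((s/2) ^ α + s ^ α) * ((s/2) ^ (γ+1) / (γ+1))) = K * (y ^ β * s ^ (α+γ)) := by
      rw [hfin']
      field_simp
    calc (∫⁻ x in Ioo (0:ℝ) (1 - y), F (x, y))
        ≤ ENNReal.ofReal (y ^ β / s) * ∫⁻ x in Ioo (0:ℝ) s, ENNReal.ofReal (x ^ α * (s - x) ^ γ) :=
          step2
      _ ≤ ENNReal.ofReal (y ^ β / s) * (ENNReal.ofReal (((s/2) ^ γ + s ^ γ) * ((s/2) ^ (α+1) / (α+1)))
            + ENNReal.ofReal (((s/2) ^ α + s ^ α) * ((s/2) ^ (γ+1) / (γ+1)))) := by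
          apply mul_le_mul_right
          refine le_trans (lintegral_mono_set hsplit) (le_trans (lintegral_union_le _ _ _) ?_)
          rw [ENNReal.ofReal_mul (add_nonneg (Real.rpow_nonneg hs2.le γ) (Real.rpow_nonneg hs.le γ)),
            ENNReal.ofReal_mul (add_nonneg (Real.rpow_nonneg hs2.le α) (Real.rpow_nonneg hs.le α))]
          exact add_le_add J1 J2
      _ = ENNReal.ofReal (K * (y ^ β * s ^ (α+γ))) := by
          rw [← ENNReal.ofReal_add
              (mul_nonneg (add_nonneg (Real.rpow_nonneg hs2.le γ) (Real.rpow_nonneg hs.le γ))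
                (div_nonneg (Real.rpow_nonneg hs2.le (α+1)) (by linarith)))
              (mul_nonneg (add_nonneg (Real.rpow_nonneg hs2.le α) (Real.rpow_nonneg hs.le α))
                (div_nonneg (Real.rpow_nonneg hs2.le (γ+1)) (by linarith))),
            ← ENNReal.ofReal_mul (div_nonneg (Real.rpow_nonneg hy0.le β) hs.le), hfin]
      _ = ENNReal.ofReal K * ENNReal.ofReal (y ^ β * (1 - y) ^ (α + γ)) := by
          rw [ENNReal.ofReal_mul hKpos.le]
  -- conclude
  have hbound : (∫⁻ y in Ioo (0:ℝ) 1, ∫⁻ x in Ioo (0:ℝ) (1 - y), F (x, y))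
      ≤ ENNReal.ofReal K * ∫⁻ y in Ioo (0:ℝ) 1, ENNReal.ofReal (y ^ β * (1 - y) ^ (α + γ)) := by
    rw [← lintegral_const_mul' _ _ ENNReal.ofReal_ne_top]
    apply lintegral_mono_ae
    filter_upwards [self_mem_ae_restrict (measurableSet_Ioo (a := (0:ℝ)) (b := 1))] with y hy
    exact key y hy
  exact (lt_of_le_of_lt hbound
    (ENNReal.mul_lt_top ENNReal.ofReal_lt_top (lint_beta_lt_top hβ hp))).ne

lemma main_div (α β γ τ : ℝ) (hα : -1 < α) (hβ : -1 < β) (hγ : -1 < γ) (hτ : 0 ≤ τ)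
    (hp : α + γ ≤ -1) :
    (∫⁻ p : ℝ × ℝ in {p : ℝ × ℝ | 0 < p.1 ∧ 0 < p.2 ∧ p.1 + p.2 < 1},
        ENNReal.ofReal (p.1 ^ α * p.2 ^ β * (1 - p.1 - p.2) ^ γ /
          (1 - p.2 + τ * p.1))) = ⊤ := by
  set F : ℝ × ℝ → ℝ≥0∞ := fun p =>
    ENNReal.ofReal (p.1 ^ α * p.2 ^ β * (1 - p.1 - p.2) ^ γ / (1 - p.2 + τ * p.1)) with hFdef
  have hFm : Measurable F := by fun_prop
  set R : Set (ℝ × ℝ) :=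
    {p : ℝ × ℝ | 1/2 < p.2 ∧ p.2 < 1 ∧ (1 - p.2)/4 < p.1 ∧ p.1 < (1 - p.2)/2} with hRdef
  have hRm : MeasurableSet R := by
    have : R = {p : ℝ × ℝ | 1/2 < p.2} ∩ ({p | p.2 < 1} ∩
        ({p | (1 - p.2)/4 < p.1} ∩ {p | p.1 < (1 - p.2)/2})) := rfl
    rw [this]
    exact (measurableSet_lt measurable_const measurable_snd).inter
      ((measurableSet_lt measurable_snd measurable_const).inter
        (((measurableSet_lt (((measurable_const.sub measurable_snd)).div_const 4) measurable_fst)).inter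
          ((measurableSet_lt measurable_fst ((measurable_const.sub measurable_snd).div_const 2)))))
  have hsub : R ⊆ {p : ℝ × ℝ | 0 < p.1 ∧ 0 < p.2 ∧ p.1 + p.2 < 1} := by
    rintro p ⟨h1, h2, h3, h4⟩
    exact ⟨by linarith, by linarith, by linarith⟩
  rw [eq_top_iff]
  refine le_trans ?_ (lintegral_mono_set hsub)
  have hin : ∀ y ∈ Ioo (1/2:ℝ) 1, {x | (x, y) ∈ R} = Ioo ((1 - y)/4) ((1 - y)/2) := by
    intro y hy
    ext x
    simp only [hRdef, mem_setOf_eq, mem_Ioo]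
    constructor
    · rintro ⟨_, _, h3, h4⟩; exact ⟨h3, h4⟩
    · rintro ⟨h3, h4⟩; exact ⟨hy.1, hy.2, h3, h4⟩
  have hout : ∀ y ∉ Ioo (1/2:ℝ) 1, {x | (x, y) ∈ R} = ∅ := by
    intro y hy
    ext x
    simp only [hRdef, mem_setOf_eq, mem_empty_iff_false, iff_false, not_and]
    intro h1 h2
    exact absurd ⟨h1, h2⟩ hy
  rw [lint_slice measurableSet_Ioo (fun y => (1 - y)/4) (fun y => (1 - y)/2) F hFm hRm hin hout]
  -- constants
  set c₁ : ℝ := min ((4:ℝ)⁻¹ ^ α) ((2:ℝ)⁻¹ ^ α) with hc₁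
  set c₂ : ℝ := min ((2:ℝ)⁻¹ ^ γ) (((3:ℝ)/4) ^ γ) with hc₂
  set c₃ : ℝ := min ((2:ℝ)⁻¹ ^ β) ((1:ℝ) ^ β) with hc₃
  have hc₁pos : 0 < c₁ := lt_min (Real.rpow_pos_of_pos (by norm_num) α)
    (Real.rpow_pos_of_pos (by norm_num) α)
  have hc₂pos : 0 < c₂ := lt_min (Real.rpow_pos_of_pos (by norm_num) γ)
    (Real.rpow_pos_of_pos (by norm_num) γ)
  have hc₃pos : 0 < c₃ := lt_min (Real.rpow_pos_of_pos (by norm_num) β)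
    (Real.rpow_pos_of_pos (by norm_num) β)
  set c : ℝ := c₁ * c₂ * c₃ / (1 + τ) with hc
  have hcpos : 0 < c := div_pos (mul_pos (mul_pos hc₁pos hc₂pos) hc₃pos) (by linarith)
  -- pointwise lower bound
  have key : ∀ y ∈ Ioo (1/2:ℝ) 1, ∀ x ∈ Ioo ((1 - y)/4) ((1 - y)/2),
      ENNReal.ofReal (c * (1 - y) ^ (α + γ - 1)) ≤ F (x, y) := by
    intro y hy x hx
    set s : ℝ := 1 - y with hsdef
    have hs : 0 < s := by simp only [hsdef]; linarith [hy.2]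
    have hs0 : s ≠ 0 := hs.ne'
    have hy0 : 0 < y := by linarith [hy.1]
    have hx1 : s/4 < x := hx.1
    have hx2 : x < s/2 := hx.2
    have hx0 : 0 < x := by linarith
    have hsx : 0 < s - x := by linarith
    have hFeq : F (x, y) =
        ENNReal.ofReal (x ^ α * y ^ β * (s - x) ^ γ / (s + τ * x)) := by
      have e1 : (1:ℝ) - x - y = s - x := by rw [hsdef]; ring
      have e2 : (1:ℝ) - y + τ * x = s + τ * x := by rw [hsdef]
      show ENNReal.ofReal (x ^ α * y ^ β * (1 - x - y) ^ γ / (1 - y + τ * x)) = _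
      rw [e1, e2]
    rw [hFeq]
    apply ENNReal.ofReal_le_ofReal
    -- lower bounds on factors
    have hxa : c₁ * s ^ α ≤ x ^ α := by
      have hq : x ^ α = s ^ α * (x/s) ^ α := by
        rw [← Real.mul_rpow hs.le (div_nonneg hx0.le hs.le)]
        congr 1
        field_simp
      have hb1 : (4:ℝ)⁻¹ ≤ x/s := by rw [le_div_iff₀ hs]; linarith
      have hb2 : x/s ≤ (2:ℝ)⁻¹ := by rw [div_le_iff₀ hs]; linarith
      have := aux_rpow_lower (a := (4:ℝ)⁻¹) (b := (2:ℝ)⁻¹) (p := α) (by norm_num) hb1 hb2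
      rw [hq]
      calc c₁ * s ^ α = s ^ α * c₁ := by ring
        _ ≤ s ^ α * (x/s) ^ α := mul_le_mul_of_nonneg_left this (Real.rpow_nonneg hs.le α)
    have hxg : c₂ * s ^ γ ≤ (s - x) ^ γ := by
      have hq : (s - x) ^ γ = s ^ γ * ((s - x)/s) ^ γ := by
        rw [← Real.mul_rpow hs.le (div_nonneg hsx.le hs.le)]
        congr 1
        field_simp
      have hb1 : (2:ℝ)⁻¹ ≤ (s - x)/s := by rw [le_div_iff₀ hs]; linarith
      have hb2 : (s - x)/s ≤ (3:ℝ)/4 := by rw [div_le_iff₀ hs]; linarith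
      have := aux_rpow_lower (a := (2:ℝ)⁻¹) (b := (3:ℝ)/4) (p := γ) (by norm_num) hb1 hb2
      rw [hq]
      calc c₂ * s ^ γ = s ^ γ * c₂ := by ring
        _ ≤ s ^ γ * ((s - x)/s) ^ γ := mul_le_mul_of_nonneg_left this (Real.rpow_nonneg hs.le γ)
    have hyb : c₃ ≤ y ^ β :=
      aux_rpow_lower (a := (2:ℝ)⁻¹) (b := (1:ℝ)) (p := β) (by norm_num)
        (by linarith [hy.1]) hy.2.le
    have hdenpos : 0 < s + τ * x := by nlinarith
    have hdenle : s + τ * x ≤ (1 + τ) * s := by nlinarith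
    have hss : s ^ α * s ^ γ = s ^ (α + γ - 1) * s := by
      rw [← Real.rpow_add hs, ← Real.rpow_add_one hs0]
      congr 1; ring
    have hid : c * s ^ (α + γ - 1) = ((c₁ * s ^ α) * c₃) * (c₂ * s ^ γ) / ((1 + τ) * s) := by
      rw [hc, show ((c₁ * s ^ α) * c₃) * (c₂ * s ^ γ) = c₁ * c₂ * c₃ * (s ^ α * s ^ γ) by ring,
        hss]
      field_simp
    have m1 : (c₁ * s ^ α) * c₃ ≤ x ^ α * y ^ β :=
      mul_le_mul hxa hyb hc₃pos.le (Real.rpow_nonneg hx0.le α)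
    have m2 : ((c₁ * s ^ α) * c₃) * (c₂ * s ^ γ) ≤ x ^ α * y ^ β * (s - x) ^ γ :=
      mul_le_mul m1 hxg (mul_nonneg hc₂pos.le (Real.rpow_nonneg hs.le γ))
        (mul_nonneg (Real.rpow_nonneg hx0.le α) (Real.rpow_nonneg hy0.le β))
    rw [hid]
    exact div_le_div₀ (mul_nonneg (mul_nonneg (Real.rpow_nonneg hx0.le α)
      (Real.rpow_nonneg hy0.le β)) (Real.rpow_nonneg hsx.le γ)) m2 hdenpos hdenle
  -- inner integral lower bound
  have inner : ∀ y ∈ Ioo (1/2:ℝ) 1,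
      ENNReal.ofReal ((c/4) * (1 - y) ^ (α + γ)) ≤ ∫⁻ x in Ioo ((1 - y)/4) ((1 - y)/2), F (x, y) := by
    intro y hy
    have hs : 0 < 1 - y := by linarith [hy.2]
    have hmono : (∫⁻ _ in Ioo ((1 - y)/4) ((1 - y)/2),
          ENNReal.ofReal (c * (1 - y) ^ (α + γ - 1)))
        ≤ ∫⁻ x in Ioo ((1 - y)/4) ((1 - y)/2), F (x, y) := by
      apply lintegral_mono_ae
      filter_upwards [self_mem_ae_restrict (measurableSet_Ioo (a := (1 - y)/4) (b := (1 - y)/2))]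
        with x hx
      exact key y hy x hx
    refine le_trans (le_of_eq ?_) hmono
    rw [setLIntegral_const, Real.volume_Ioo,
      ← ENNReal.ofReal_mul (mul_nonneg hcpos.le (Real.rpow_nonneg hs.le _))]
    congr 1
    have hpow : (1 - y) ^ (α + γ) = (1 - y) ^ (α + γ - 1) * (1 - y) := by
      rw [← Real.rpow_add_one hs.ne']
      congr 1; ring
    rw [hpow]; ring
  -- outer integral
  have houter : (∫⁻ y in Ioo (1/2:ℝ) 1, ENNReal.ofReal ((c/4) * (1 - y) ^ (α + γ))) = ⊤ := by
    have hre : ∀ y : ℝ, ENNReal.ofReal ((c/4) * (1 - y) ^ (α + γ))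
        = ENNReal.ofReal (c/4) * ENNReal.ofReal ((1 - y) ^ (α + γ)) := fun y =>
      ENNReal.ofReal_mul (by positivity)
    simp_rw [hre]
    rw [lintegral_const_mul' _ _ ENNReal.ofReal_ne_top]
    have himg : (∫⁻ y in Ioo (1/2:ℝ) 1, ENNReal.ofReal ((1 - y) ^ (α + γ))) = ⊤ := by
      rw [lint_const_sub 1 (fun t => ENNReal.ofReal (t ^ (α + γ))) (Ioo (1/2) 1)]
      have himg2 : (fun x : ℝ => 1 - x) '' Ioo (1/2) 1 = Ioo 0 (1/2) := by
        rw [image_const_sub_Ioo]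
        congr 1 <;> norm_num
      rw [himg2]
      exact lint_rpow_Ioo_top (by norm_num) hp
    rw [himg, ENNReal.mul_top (ENNReal.ofReal_pos.2 (by positivity)).ne']
  calc (⊤:ℝ≥0∞) = ∫⁻ y in Ioo (1/2:ℝ) 1, ENNReal.ofReal ((c/4) * (1 - y) ^ (α + γ)) :=
        houter.symm
    _ ≤ ∫⁻ y in Ioo (1/2:ℝ) 1, ∫⁻ x in Ioo ((1 - y)/4) ((1 - y)/2), F (x, y) := by
        apply lintegral_mono_ae
        filter_upwards [self_mem_ae_restrict (measurableSet_Ioo (a := (1/2:ℝ)) (b := 1))]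
          with y hy
        exact inner y hy

/-- Recurrence criterion for the discrete-time QBD processes `P = τJ₁ + J₂`
associated with the orthogonal polynomials on the triangle (normalized at `(0,1)`):
for every `τ ≥ 0`, the Lebesgue integral of `x^α y^β (1−x−y)^γ / (1 − y + τx)` over
the open triangle is infinite iff `α + γ ≤ −1`. -/
theorem stmt_11 (α β γ : ℝ) (hα : -1 < α) (hβ : -1 < β) (hγ : -1 < γ)
    (τ : ℝ) (hτ : 0 ≤ τ) :
    (∫⁻ p : ℝ × ℝ in {p : ℝ × ℝ | 0 < p.1 ∧ 0 < p.2 ∧ p.1 + p.2 < 1},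
        ENNReal.ofReal (p.1 ^ α * p.2 ^ β * (1 - p.1 - p.2) ^ γ /
          (1 - p.2 + τ * p.1))) = ⊤ ↔ α + γ ≤ -1 := by
  constructor
  · intro h
    by_contra hc
    push_neg at hc
    exact main_fin α β γ τ hα hβ hγ hτ hc h
  · exact main_div α β γ τ hα hβ hγ hτ
end

section
/- Let α, β, γ > −1 be real numbers and let T = {(x,y) ∈ ℝ² : x > 0, y > 0, x + y < 1}. (i) For every τ₁ > 0 and τ₂ > 0, the integral ∫_T x^α y^β (1−x−y)^γ / (τ₁x + τ₂y) dx dy is infinite if and only if α + β ≤ −1. (ii) For τ₂ = 0 and τ₁ > 0, the integral ∫_T x^{α−1} y^β (1−x−y)^γ dx dy is infinite if and only if α ≤ 0. -/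
open MeasureTheory Set
open scoped ENNReal

namespace Stmt12Aux

noncomputable def K (b c : ℝ) : ℝ≥0∞ :=
  ∫⁻ t in Ioo (0:ℝ) 1, ENNReal.ofReal (t ^ b * (1 - t) ^ c)

lemma lint_rpow_eq {a : ℝ} (ha : -1 < a) {r : ℝ} (hr : 0 < r) :
    ∫⁻ x in Ioo (0:ℝ) r, ENNReal.ofReal (x ^ a) = ENNReal.ofReal (r ^ (a + 1) / (a + 1)) := by
  have hint : IntegrableOn (fun x : ℝ => x ^ a) (Ioo 0 r) := (intervalIntegral.integrableOn_Ioo_rpow_iff hr).2 ha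
  have hnn : 0 ≤ᵐ[volume.restrict (Ioo (0:ℝ) r)] fun x : ℝ => x ^ a :=
    (ae_restrict_iff' measurableSet_Ioo).2 (ae_of_all _ fun x hx => Real.rpow_nonneg hx.1.le a)
  rw [← ofReal_integral_eq_lintegral_ofReal hint hnn, ← integral_Ioc_eq_integral_Ioo,
    ← intervalIntegral.integral_of_le hr.le, integral_rpow (Or.inl ha),
    Real.zero_rpow (by linarith : a + 1 ≠ 0), sub_zero]

lemma lint_rpow_ne_top {a : ℝ} (ha : -1 < a) {r : ℝ} (hr : 0 < r) :
    ∫⁻ x in Ioo (0:ℝ) r, ENNReal.ofReal (x ^ a) ≠ ⊤ := by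
  rw [lint_rpow_eq ha hr]; exact ENNReal.ofReal_ne_top

lemma lint_rpow_top {a : ℝ} (ha : a ≤ -1) {r : ℝ} (hr : 0 < r) :
    ∫⁻ x in Ioo (0:ℝ) r, ENNReal.ofReal (x ^ a) = ⊤ := by
  by_contra h
  have hm : AEStronglyMeasurable (fun x : ℝ => x ^ a) (volume.restrict (Ioo (0:ℝ) r)) := by
    apply Measurable.aestronglyMeasurable; fun_prop
  have hnn : 0 ≤ᵐ[volume.restrict (Ioo (0:ℝ) r)] fun x : ℝ => x ^ a :=
    (ae_restrict_iff' measurableSet_Ioo).2 (ae_of_all _ fun x hx => Real.rpow_nonneg hx.1.le a)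
  have h2 := (lintegral_ofReal_ne_top_iff_integrable hm hnn).1 h
  have h3 : (-1:ℝ) < a := (intervalIntegral.integrableOn_Ioo_rpow_iff hr).1 h2
  linarith

lemma rpow_mem_bounds {lo hi s c : ℝ} (hlo : 0 < lo) (h1 : lo ≤ s) (h2 : s ≤ hi) :
    min (lo ^ c) (hi ^ c) ≤ s ^ c ∧ s ^ c ≤ max (lo ^ c) (hi ^ c) := by
  rcases le_or_gt 0 c with hc | hc
  · exact ⟨(min_le_left _ _).trans (Real.rpow_le_rpow hlo.le h1 hc),
      (Real.rpow_le_rpow (hlo.trans_le h1).le h2 hc).trans (le_max_right _ _)⟩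
  · exact ⟨(min_le_right _ _).trans (Real.rpow_le_rpow_of_nonpos (hlo.trans_le h1) h2 hc.le),
      (Real.rpow_le_rpow_of_nonpos hlo h1 hc.le).trans (le_max_left _ _)⟩

lemma lint_scale (b c : ℝ) {r : ℝ} (hr : 0 < r) :
    ∫⁻ y in Ioo (0:ℝ) r, ENNReal.ofReal (y ^ b * (r - y) ^ c)
      = ENNReal.ofReal (r ^ (b + c + 1)) * K b c := by
  have hmg : Measurable fun t : ℝ => r * t := by fun_prop
  have hmf : Measurable fun y : ℝ => ENNReal.ofReal (y ^ b * (r - y) ^ c) := by fun_prop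
  have hpre : (fun t : ℝ => r * t) ⁻¹' Ioo 0 r = Ioo 0 1 := by
    ext t
    simp only [mem_preimage, mem_Ioo]
    constructor
    · rintro ⟨h1, h2⟩
      constructor <;> nlinarith
    · rintro ⟨h1, h2⟩
      constructor <;> nlinarith
  have key : ∫⁻ y in Ioo (0:ℝ) r, ENNReal.ofReal (y ^ b * (r - y) ^ c)
        ∂(Measure.map (fun t : ℝ => r * t) volume)
      = ∫⁻ t in Ioo (0:ℝ) 1, ENNReal.ofReal ((r * t) ^ b * (r - r * t) ^ c) := by
    rw [setLIntegral_map measurableSet_Ioo hmf hmg, hpre]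
  rw [Real.map_volume_mul_left (ne_of_gt hr), Measure.restrict_smul,
    lintegral_smul_measure] at key
  have h1 : ENNReal.ofReal r * ENNReal.ofReal |r⁻¹| = 1 := by
    rw [abs_of_pos (inv_pos.2 hr), ← ENNReal.ofReal_mul hr.le, mul_inv_cancel₀ hr.ne',
      ENNReal.ofReal_one]
  have e2 : ∀ t ∈ Ioo (0:ℝ) 1, ENNReal.ofReal ((r * t) ^ b * (r - r * t) ^ c)
      = ENNReal.ofReal (r ^ b * r ^ c) * ENNReal.ofReal (t ^ b * (1 - t) ^ c) := by
    intro t ht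
    rw [← ENNReal.ofReal_mul (by positivity)]
    congr 1
    rw [show r - r * t = r * (1 - t) by ring, Real.mul_rpow hr.le ht.1.le,
      Real.mul_rpow hr.le (by linarith [ht.2] : (0:ℝ) ≤ 1 - t)]
    ring
  calc ∫⁻ y in Ioo (0:ℝ) r, ENNReal.ofReal (y ^ b * (r - y) ^ c)
      = (ENNReal.ofReal r * ENNReal.ofReal |r⁻¹|) *
        ∫⁻ y in Ioo (0:ℝ) r, ENNReal.ofReal (y ^ b * (r - y) ^ c) := by rw [h1, one_mul]
    _ = ENNReal.ofReal r * (ENNReal.ofReal |r⁻¹| *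
        ∫⁻ y in Ioo (0:ℝ) r, ENNReal.ofReal (y ^ b * (r - y) ^ c)) := by rw [mul_assoc]
    _ = ENNReal.ofReal r * ∫⁻ t in Ioo (0:ℝ) 1,
          ENNReal.ofReal ((r * t) ^ b * (r - r * t) ^ c) := by rw [← key, smul_eq_mul]
    _ = ENNReal.ofReal r * ∫⁻ t in Ioo (0:ℝ) 1,
          ENNReal.ofReal (r ^ b * r ^ c) * ENNReal.ofReal (t ^ b * (1 - t) ^ c) := by
        rw [setLIntegral_congr_fun measurableSet_Ioo e2]
    _ = ENNReal.ofReal r * (ENNReal.ofReal (r ^ b * r ^ c) * K b c) := by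
        rw [lintegral_const_mul' _ _ ENNReal.ofReal_ne_top]; rfl
    _ = ENNReal.ofReal (r ^ (b + c + 1)) * K b c := by
        rw [← mul_assoc, ← ENNReal.ofReal_mul hr.le]
        congr 2
        rw [show b + c + 1 = (b + c) + 1 by ring, Real.rpow_add hr (b + c) 1,
          Real.rpow_add hr b c, Real.rpow_one]
        ring

lemma K_ne_top {b c : ℝ} (hb : -1 < b) (hc : -1 < c) : K b c ≠ ⊤ := by
  have hsub : Ioo (0:ℝ) 1 ⊆ Ioo 0 (1/2) ∪ Ico (1/2) 1 := by
    intro t ht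
    rcases lt_or_ge t (1/2) with h | h
    · exact Or.inl ⟨ht.1, h⟩
    · exact Or.inr ⟨h, ht.2⟩
  have hdisj : Disjoint (Ioo (0:ℝ) (1/2)) (Ico (1/2:ℝ) 1) := by
    apply Set.disjoint_left.2
    rintro t ⟨_, h2⟩ ⟨h3, _⟩
    linarith
  have hK : K b c ≤ (∫⁻ t in Ioo (0:ℝ) (1/2), ENNReal.ofReal (t ^ b * (1 - t) ^ c))
      + ∫⁻ t in Ico (1/2:ℝ) 1, ENNReal.ofReal (t ^ b * (1 - t) ^ c) := by
    rw [← lintegral_union measurableSet_Ico hdisj]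
    exact lintegral_mono_set hsub
  set M₁ : ℝ := max ((1/2:ℝ) ^ c) ((1:ℝ) ^ c) with hM₁
  set M₂ : ℝ := max ((1/2:ℝ) ^ b) ((1:ℝ) ^ b) with hM₂
  have hM₁0 : 0 ≤ M₁ := le_max_of_le_right (by rw [Real.one_rpow]; norm_num)
  have hM₂0 : 0 ≤ M₂ := le_max_of_le_right (by rw [Real.one_rpow]; norm_num)
  have p1 : ∫⁻ t in Ioo (0:ℝ) (1/2), ENNReal.ofReal (t ^ b * (1 - t) ^ c)
      ≤ ENNReal.ofReal M₁ * ∫⁻ t in Ioo (0:ℝ) (1/2), ENNReal.ofReal (t ^ b) := by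
    rw [← lintegral_const_mul' _ _ ENNReal.ofReal_ne_top]
    apply setLIntegral_mono' measurableSet_Ioo
    intro t ht
    rw [← ENNReal.ofReal_mul hM₁0]
    apply ENNReal.ofReal_le_ofReal
    rw [mul_comm M₁ _]
    exact mul_le_mul_of_nonneg_left
      ((rpow_mem_bounds (by norm_num) (by linarith [ht.2]) (by linarith [ht.1])).2)
      (Real.rpow_nonneg ht.1.le b)
  have p2 : ∫⁻ t in Ico (1/2:ℝ) 1, ENNReal.ofReal (t ^ b * (1 - t) ^ c)
      ≤ ENNReal.ofReal M₂ * ∫⁻ t in Ico (1/2:ℝ) 1, ENNReal.ofReal ((1 - t) ^ c) := by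
    rw [← lintegral_const_mul' _ _ ENNReal.ofReal_ne_top]
    apply setLIntegral_mono' measurableSet_Ico
    intro t ht
    rw [← ENNReal.ofReal_mul hM₂0]
    apply ENNReal.ofReal_le_ofReal
    exact mul_le_mul_of_nonneg_right
      ((rpow_mem_bounds (by norm_num) ht.1 ht.2.le).2)
      (Real.rpow_nonneg (by linarith [ht.2]) c)
  have p3 : ∫⁻ t in Ico (1/2:ℝ) 1, ENNReal.ofReal ((1 - t) ^ c)
      = ∫⁻ s in Ioc (0:ℝ) (1/2), ENNReal.ofReal (s ^ c) := by
    have hset : Ico (1/2:ℝ) 1 = (fun t : ℝ => 1 - t) ⁻¹' Ioc (0:ℝ) (1/2) := by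
      ext t
      simp only [mem_preimage, mem_Ico, mem_Ioc]
      constructor
      · rintro ⟨h1, h2⟩; exact ⟨by linarith, by linarith⟩
      · rintro ⟨h1, h2⟩; exact ⟨by linarith, by linarith⟩
    rw [hset]
    exact (Measure.measurePreserving_sub_left (volume : Measure ℝ) (1:ℝ)).setLIntegral_comp_preimage
      (f := fun s : ℝ => ENNReal.ofReal (s ^ c)) measurableSet_Ioc (by fun_prop)
  have p4 : ∫⁻ s in Ioc (0:ℝ) (1/2), ENNReal.ofReal (s ^ c)
      = ∫⁻ s in Ioo (0:ℝ) (1/2), ENNReal.ofReal (s ^ c) :=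
    (setLIntegral_congr Ioo_ae_eq_Ioc).symm
  apply ne_top_of_le_ne_top _ hK
  apply ENNReal.add_ne_top.2
  constructor
  · exact ne_top_of_le_ne_top
      (ENNReal.mul_ne_top ENNReal.ofReal_ne_top (lint_rpow_ne_top hb (by norm_num))) p1
  · rw [p3, p4] at p2
    exact ne_top_of_le_ne_top
      (ENNReal.mul_ne_top ENNReal.ofReal_ne_top (lint_rpow_ne_top hc (by norm_num))) p2

lemma K_ne_zero (b c : ℝ) : K b c ≠ 0 := by
  intro h
  have c1 : 0 < min ((1/4:ℝ) ^ b) ((1/2:ℝ) ^ b) :=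
    lt_min (Real.rpow_pos_of_pos (by norm_num) b) (Real.rpow_pos_of_pos (by norm_num) b)
  have c2 : 0 < min ((1/2:ℝ) ^ c) ((3/4:ℝ) ^ c) :=
    lt_min (Real.rpow_pos_of_pos (by norm_num) c) (Real.rpow_pos_of_pos (by norm_num) c)
  have hge : ENNReal.ofReal (min ((1/4:ℝ) ^ b) ((1/2:ℝ) ^ b) * min ((1/2:ℝ) ^ c) ((3/4:ℝ) ^ c))
      * volume (Ioo (1/4:ℝ) (1/2)) ≤ K b c := by
    calc ENNReal.ofReal (min ((1/4:ℝ) ^ b) ((1/2:ℝ) ^ b) * min ((1/2:ℝ) ^ c) ((3/4:ℝ) ^ c))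
        * volume (Ioo (1/4:ℝ) (1/2))
        = ∫⁻ _ in Ioo (1/4:ℝ) (1/2), ENNReal.ofReal
            (min ((1/4:ℝ) ^ b) ((1/2:ℝ) ^ b) * min ((1/2:ℝ) ^ c) ((3/4:ℝ) ^ c)) :=
          (setLIntegral_const _ _).symm
      _ ≤ ∫⁻ t in Ioo (1/4:ℝ) (1/2), ENNReal.ofReal (t ^ b * (1 - t) ^ c) := by
          apply setLIntegral_mono' measurableSet_Ioo
          intro t ht
          apply ENNReal.ofReal_le_ofReal
          have h1 := (rpow_mem_bounds (c := b) (by norm_num : (0:ℝ) < 1/4) ht.1.le ht.2.le).1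
          have h2 := (rpow_mem_bounds (c := c) (by norm_num : (0:ℝ) < 1/2)
            (by linarith [ht.2] : (1/2:ℝ) ≤ 1 - t) (by linarith [ht.1] : (1 - t : ℝ) ≤ 3/4)).1
          exact mul_le_mul h1 h2 c2.le (Real.rpow_nonneg (by linarith [ht.1]) b)
      _ ≤ K b c := lintegral_mono_set (fun t ht => ⟨by linarith [ht.1], by linarith [ht.2]⟩)
  rw [h] at hge
  have hpos : (0:ℝ≥0∞) < ENNReal.ofReal (min ((1/4:ℝ) ^ b) ((1/2:ℝ) ^ b)
      * min ((1/2:ℝ) ^ c) ((3/4:ℝ) ^ c)) * volume (Ioo (1/4:ℝ) (1/2)) := by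
    apply ENNReal.mul_pos
    · exact (ENNReal.ofReal_pos.2 (mul_pos c1 c2)).ne'
    · rw [Real.volume_Ioo]
      exact (ENNReal.ofReal_pos.2 (by norm_num)).ne'
  exact absurd (le_antisymm hge zero_le) hpos.ne'

lemma K_top {a c : ℝ} (ha : a ≤ -1) : K a c = ⊤ := by
  set m : ℝ := min ((1/2:ℝ) ^ c) ((1:ℝ) ^ c) with hm
  have hm0 : 0 < m := lt_min (Real.rpow_pos_of_pos (by norm_num) c)
    (Real.rpow_pos_of_pos (by norm_num) c)
  have hle : ENNReal.ofReal m * ∫⁻ t in Ioo (0:ℝ) (1/2), ENNReal.ofReal (t ^ a) ≤ K a c := by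
    rw [← lintegral_const_mul' _ _ ENNReal.ofReal_ne_top]
    refine le_trans (setLIntegral_mono' measurableSet_Ioo ?_)
      (lintegral_mono_set (fun t ht => ⟨ht.1, by linarith [ht.2]⟩))
    intro t ht
    rw [← ENNReal.ofReal_mul hm0.le]
    apply ENNReal.ofReal_le_ofReal
    rw [mul_comm m _]
    exact mul_le_mul_of_nonneg_left
      ((rpow_mem_bounds (by norm_num : (0:ℝ) < 1/2) (by linarith [ht.2]) (by linarith [ht.1])).1)
      (Real.rpow_nonneg ht.1.le a)
  rw [lint_rpow_top ha (by norm_num : (0:ℝ) < 1/2),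
    ENNReal.mul_top (ENNReal.ofReal_pos.2 hm0).ne'] at hle
  exact top_le_iff.1 hle

lemma tonelli (r : ℝ) (φ : ℝ → ℝ) (hφ : Measurable φ) (F : ℝ → ℝ → ℝ≥0∞)
    (hF : Measurable fun p : ℝ × ℝ => F p.1 p.2) :
    ∫⁻ p : ℝ × ℝ in {p : ℝ × ℝ | 0 < p.1 ∧ p.1 < r ∧ 0 < p.2 ∧ p.2 < φ p.1}, F p.1 p.2
      = ∫⁻ x in Ioo (0:ℝ) r, ∫⁻ y in Ioo (0:ℝ) (φ x), F x y := by
  set S : Set (ℝ × ℝ) := {p : ℝ × ℝ | 0 < p.1 ∧ p.1 < r ∧ 0 < p.2 ∧ p.2 < φ p.1} with hS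
  have hSm : MeasurableSet S := by
    have : S = ({p : ℝ × ℝ | 0 < p.1} ∩ {p : ℝ × ℝ | p.1 < r}) ∩
        ({p : ℝ × ℝ | 0 < p.2} ∩ {p : ℝ × ℝ | p.2 < φ p.1}) := by
      ext p; simp [hS, mem_setOf_eq, and_assoc]
    rw [this]
    exact (((measurableSet_lt measurable_const measurable_fst).inter
      (measurableSet_lt measurable_fst measurable_const)).inter
      ((measurableSet_lt measurable_const measurable_snd).inter
      (measurableSet_lt measurable_snd (hφ.comp measurable_fst))))
  rw [← lintegral_indicator hSm]
  rw [Measure.volume_eq_prod, lintegral_prod _ ((hF.indicator hSm).aemeasurable)]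
  have hsec : ∀ x : ℝ, (∫⁻ y, S.indicator (fun p : ℝ × ℝ => F p.1 p.2) (x, y))
      = (Ioo (0:ℝ) r).indicator (fun x => ∫⁻ y in Ioo (0:ℝ) (φ x), F x y) x := by
    intro x
    rcases em (x ∈ Ioo (0:ℝ) r) with hx | hx
    · have heq : ∀ y, S.indicator (fun p : ℝ × ℝ => F p.1 p.2) (x, y)
          = (Ioo (0:ℝ) (φ x)).indicator (F x) y := by
        intro y
        by_cases hy : y ∈ Ioo (0:ℝ) (φ x)
        · rw [indicator_of_mem hy,
            indicator_of_mem (show (x, y) ∈ S from ⟨hx.1, hx.2, hy.1, hy.2⟩)]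
        · rw [indicator_of_notMem hy,
            indicator_of_notMem (fun hmem => hy ⟨hmem.2.2.1, hmem.2.2.2⟩)]
      rw [indicator_of_mem hx]
      simp_rw [heq]
      exact lintegral_indicator measurableSet_Ioo _
    · have heq : ∀ y, S.indicator (fun p : ℝ × ℝ => F p.1 p.2) (x, y) = 0 := by
        intro y
        apply indicator_of_notMem
        intro hmem
        exact hx ⟨hmem.1, hmem.2.1⟩
      rw [indicator_of_notMem hx]
      simp [heq]
  simp_rw [hsec]
  exact lintegral_indicator measurableSet_Ioo _

def Tset : Set (ℝ × ℝ) := {p : ℝ × ℝ | 0 < p.1 ∧ 0 < p.2 ∧ p.1 + p.2 < 1}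

noncomputable def Jt (a b c : ℝ) : ℝ≥0∞ :=
  ∫⁻ p : ℝ × ℝ in Tset, ENNReal.ofReal (p.1 ^ a * p.2 ^ b * (1 - p.1 - p.2) ^ c)

lemma Tset_meas : MeasurableSet Tset := by
  have : Tset = {p : ℝ × ℝ | 0 < p.1} ∩ ({p : ℝ × ℝ | 0 < p.2} ∩
      {p : ℝ × ℝ | p.1 + p.2 < 1}) := by
    ext p; simp only [Tset, mem_setOf_eq, mem_inter_iff]
  rw [this]
  exact (measurableSet_lt measurable_const measurable_fst).inter
    ((measurableSet_lt measurable_const measurable_snd).inter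
    (measurableSet_lt (measurable_fst.add measurable_snd) measurable_const))

lemma Jt_eq (a : ℝ) {b c : ℝ} (hb : -1 < b) (hc : -1 < c) :
    Jt a b c = K b c * K a (b + c + 1) := by
  have hmF : Measurable fun p : ℝ × ℝ =>
      ENNReal.ofReal (p.1 ^ a * p.2 ^ b * (1 - p.1 - p.2) ^ c) := by fun_prop
  have hTeq : Tset = {p : ℝ × ℝ | 0 < p.1 ∧ p.1 < 1 ∧ 0 < p.2 ∧ p.2 < (fun x : ℝ => 1 - x) p.1} := by
    ext p
    simp only [Tset, mem_setOf_eq]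
    constructor
    · rintro ⟨h1, h2, h3⟩; exact ⟨h1, by linarith, h2, by linarith⟩
    · rintro ⟨h1, h2, h3, h4⟩
      have h4' : p.2 < 1 - p.1 := h4
      exact ⟨h1, h3, by linarith⟩
  rw [Jt, hTeq,
    tonelli 1 (fun x : ℝ => 1 - x) (by fun_prop)
      (fun x y => ENNReal.ofReal (x ^ a * y ^ b * (1 - x - y) ^ c)) hmF]
  have hinner : ∀ x ∈ Ioo (0:ℝ) 1,
      (∫⁻ y in Ioo (0:ℝ) ((fun x : ℝ => 1 - x) x), ENNReal.ofReal (x ^ a * y ^ b * (1 - x - y) ^ c))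
        = K b c * ENNReal.ofReal (x ^ a * (1 - x) ^ (b + c + 1)) := by
    intro x hx
    have h1x : 0 < 1 - x := by linarith [hx.2]
    have e1 : ∀ y ∈ Ioo (0:ℝ) (1 - x), ENNReal.ofReal (x ^ a * y ^ b * (1 - x - y) ^ c)
        = ENNReal.ofReal (x ^ a) * ENNReal.ofReal (y ^ b * (1 - x - y) ^ c) := by
      intro y hy
      rw [mul_assoc, ENNReal.ofReal_mul (Real.rpow_nonneg hx.1.le a)]
    rw [setLIntegral_congr_fun measurableSet_Ioo e1,
      lintegral_const_mul' _ _ ENNReal.ofReal_ne_top]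
    have : ∫⁻ y in Ioo (0:ℝ) (1 - x), ENNReal.ofReal (y ^ b * (1 - x - y) ^ c)
        = ENNReal.ofReal ((1 - x) ^ (b + c + 1)) * K b c := lint_scale b c h1x
    rw [this, ENNReal.ofReal_mul (Real.rpow_nonneg hx.1.le a)]
    ring
  rw [setLIntegral_congr_fun measurableSet_Ioo hinner,
    lintegral_const_mul' _ _ (K_ne_top hb hc)]
  rfl

lemma Jt_ne_top {a b c : ℝ} (ha : -1 < a) (hb : -1 < b) (hc : -1 < c) : Jt a b c ≠ ⊤ := by
  rw [Jt_eq a hb hc]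
  exact ENNReal.mul_ne_top (K_ne_top hb hc) (K_ne_top ha (by linarith))

lemma Jt_top_iff {a b c : ℝ} (hb : -1 < b) (hc : -1 < c) :
    Jt a b c = ⊤ ↔ a ≤ -1 := by
  constructor
  · intro h
    by_contra ha
    push_neg at ha
    exact Jt_ne_top ha hb hc h
  · intro ha
    rw [Jt_eq a hb hc, K_top ha, ENNReal.mul_top (K_ne_zero b c)]

end Stmt12Aux

open Stmt12Aux

/-- Recurrence criterion for the continuous-time QBD processes `𝒜 = τ₁J₁ + τ₂J₂`
associated with the orthogonal polynomials on the triangle (normalized at `(0,0)`):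
for `τ₁, τ₂ > 0` the Lebesgue integral of `x^α y^β (1−x−y)^γ / (τ₁x + τ₂y)` over the
open triangle is infinite iff `α + β ≤ −1`; for `τ₂ = 0 < τ₁` the integral of
`x^{α−1} y^β (1−x−y)^γ` is infinite iff `α ≤ 0`. -/
theorem stmt_12 (α β γ : ℝ) (hα : -1 < α) (hβ : -1 < β) (hγ : -1 < γ) :
    (∀ τ₁ τ₂ : ℝ, 0 < τ₁ → 0 < τ₂ →
      ((∫⁻ p : ℝ × ℝ in {p : ℝ × ℝ | 0 < p.1 ∧ 0 < p.2 ∧ p.1 + p.2 < 1},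
          ENNReal.ofReal (p.1 ^ α * p.2 ^ β * (1 - p.1 - p.2) ^ γ /
            (τ₁ * p.1 + τ₂ * p.2))) = ⊤ ↔ α + β ≤ -1)) ∧
    ((∫⁻ p : ℝ × ℝ in {p : ℝ × ℝ | 0 < p.1 ∧ 0 < p.2 ∧ p.1 + p.2 < 1},
        ENNReal.ofReal (p.1 ^ (α - 1) * p.2 ^ β * (1 - p.1 - p.2) ^ γ)) = ⊤
      ↔ α ≤ 0) := by
  have hTrfl : {p : ℝ × ℝ | 0 < p.1 ∧ 0 < p.2 ∧ p.1 + p.2 < 1} = Tset := rfl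
  constructor
  · intro τ₁ τ₂ hτ₁ hτ₂
    rw [hTrfl]
    have fin : -1 < α + β → (∫⁻ p : ℝ × ℝ in Tset,
        ENNReal.ofReal (p.1 ^ α * p.2 ^ β * (1 - p.1 - p.2) ^ γ /
          (τ₁ * p.1 + τ₂ * p.2))) ≠ ⊤ := by
      intro hab
      set b1 := min β ((α + β - 1) / 2) with hb1def
      set a1 := α + β - 1 - b1 with ha1def
      set b2 := min α ((α + β - 1) / 2) with hb2def
      set a2 := α + β - 1 - b2 with ha2def
      have hb1 : -1 < b1 := lt_min hβ (by linarith)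
      have hb1h : b1 ≤ (α + β - 1) / 2 := min_le_right _ _
      have hb1β : b1 ≤ β := min_le_left _ _
      have ha1 : -1 < a1 := by rw [ha1def]; linarith
      have hb2 : -1 < b2 := lt_min hα (by linarith)
      have hb2h : b2 ≤ (α + β - 1) / 2 := min_le_right _ _
      have hb2α : b2 ≤ α := min_le_left _ _
      have ha2 : -1 < a2 := by rw [ha2def]; linarith
      have hpt : ∀ p ∈ Tset,
          ENNReal.ofReal (p.1 ^ α * p.2 ^ β * (1 - p.1 - p.2) ^ γ / (τ₁ * p.1 + τ₂ * p.2))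
            ≤ ENNReal.ofReal (τ₁⁻¹ * (p.1 ^ a1 * p.2 ^ b1 * (1 - p.1 - p.2) ^ γ))
              + ENNReal.ofReal (τ₂⁻¹ * (p.1 ^ b2 * p.2 ^ a2 * (1 - p.1 - p.2) ^ γ)) := by
        rintro ⟨x, y⟩ ⟨hx, hy, hxy⟩
        simp only [Prod.fst, Prod.snd] at hx hy hxy ⊢
        have h1xy : (0:ℝ) < 1 - x - y := by linarith
        have hw : (0:ℝ) ≤ (1 - x - y) ^ γ := Real.rpow_nonneg h1xy.le γ
        rcases le_total y x with hyx | hxy'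
        · refine le_trans (ENNReal.ofReal_le_ofReal ?_) le_self_add
          have step1 : x ^ α * y ^ β * (1 - x - y) ^ γ / (τ₁ * x + τ₂ * y)
              ≤ x ^ α * y ^ β * (1 - x - y) ^ γ / (τ₁ * x) :=
            div_le_div₀ (by positivity) le_rfl (by positivity) (by nlinarith)
          refine step1.trans ?_
          have e : x ^ α * y ^ β * (1 - x - y) ^ γ / (τ₁ * x)
              = τ₁⁻¹ * (x ^ (α - 1) * y ^ β * (1 - x - y) ^ γ) := by
            rw [show x ^ α = x ^ (α - 1) * x by
              rw [← Real.rpow_add_one hx.ne' (α - 1)]; ring_nf]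
            field_simp
          rw [e]
          apply mul_le_mul_of_nonneg_left _ (inv_nonneg.2 hτ₁.le)
          apply mul_le_mul_of_nonneg_right _ hw
          have h3 : y ^ β ≤ y ^ b1 * x ^ (β - b1) := by
            rw [show y ^ β = y ^ b1 * y ^ (β - b1) by rw [← Real.rpow_add hy]; ring_nf]
            exact mul_le_mul_of_nonneg_left
              (Real.rpow_le_rpow hy.le hyx (by linarith)) (Real.rpow_nonneg hy.le _)
          calc x ^ (α - 1) * y ^ β ≤ x ^ (α - 1) * (y ^ b1 * x ^ (β - b1)) :=
                mul_le_mul_of_nonneg_left h3 (Real.rpow_nonneg hx.le _)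
            _ = x ^ a1 * y ^ b1 := by
                rw [show a1 = (α - 1) + (β - b1) by rw [ha1def]; ring, Real.rpow_add hx]
                ring
        · refine le_trans (ENNReal.ofReal_le_ofReal ?_) le_add_self
          have step1 : x ^ α * y ^ β * (1 - x - y) ^ γ / (τ₁ * x + τ₂ * y)
              ≤ x ^ α * y ^ β * (1 - x - y) ^ γ / (τ₂ * y) :=
            div_le_div₀ (by positivity) le_rfl (by positivity) (by nlinarith)
          refine step1.trans ?_
          have e : x ^ α * y ^ β * (1 - x - y) ^ γ / (τ₂ * y)
              = τ₂⁻¹ * (x ^ α * y ^ (β - 1) * (1 - x - y) ^ γ) := by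
            rw [show y ^ β = y ^ (β - 1) * y by
              rw [← Real.rpow_add_one hy.ne' (β - 1)]; ring_nf]
            field_simp
          rw [e]
          apply mul_le_mul_of_nonneg_left _ (inv_nonneg.2 hτ₂.le)
          apply mul_le_mul_of_nonneg_right _ hw
          have h3 : x ^ α ≤ x ^ b2 * y ^ (α - b2) := by
            rw [show x ^ α = x ^ b2 * x ^ (α - b2) by rw [← Real.rpow_add hx]; ring_nf]
            exact mul_le_mul_of_nonneg_left
              (Real.rpow_le_rpow hx.le hxy' (by linarith)) (Real.rpow_nonneg hx.le _)
          calc x ^ α * y ^ (β - 1) ≤ (x ^ b2 * y ^ (α - b2)) * y ^ (β - 1) :=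
                mul_le_mul_of_nonneg_right h3 (Real.rpow_nonneg hy.le _)
            _ = x ^ b2 * y ^ a2 := by
                rw [show a2 = (α - b2) + (β - 1) by rw [ha2def]; ring, Real.rpow_add hy]
                ring
      have hmono := setLIntegral_mono' (μ := volume) Tset_meas hpt
      have hadd : ∫⁻ p : ℝ × ℝ in Tset,
          (ENNReal.ofReal (τ₁⁻¹ * (p.1 ^ a1 * p.2 ^ b1 * (1 - p.1 - p.2) ^ γ))
            + ENNReal.ofReal (τ₂⁻¹ * (p.1 ^ b2 * p.2 ^ a2 * (1 - p.1 - p.2) ^ γ)))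
          = (∫⁻ p : ℝ × ℝ in Tset,
              ENNReal.ofReal (τ₁⁻¹ * (p.1 ^ a1 * p.2 ^ b1 * (1 - p.1 - p.2) ^ γ)))
            + ∫⁻ p : ℝ × ℝ in Tset,
              ENNReal.ofReal (τ₂⁻¹ * (p.1 ^ b2 * p.2 ^ a2 * (1 - p.1 - p.2) ^ γ)) :=
        lintegral_add_left (by fun_prop) _
      have he1 : ∫⁻ p : ℝ × ℝ in Tset,
          ENNReal.ofReal (τ₁⁻¹ * (p.1 ^ a1 * p.2 ^ b1 * (1 - p.1 - p.2) ^ γ))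
          = ENNReal.ofReal τ₁⁻¹ * Jt a1 b1 γ := by
        rw [Jt, ← lintegral_const_mul' _ _ ENNReal.ofReal_ne_top]
        exact lintegral_congr fun p => ENNReal.ofReal_mul (inv_nonneg.2 hτ₁.le)
      have he2 : ∫⁻ p : ℝ × ℝ in Tset,
          ENNReal.ofReal (τ₂⁻¹ * (p.1 ^ b2 * p.2 ^ a2 * (1 - p.1 - p.2) ^ γ))
          = ENNReal.ofReal τ₂⁻¹ * Jt b2 a2 γ := by
        rw [Jt, ← lintegral_const_mul' _ _ ENNReal.ofReal_ne_top]
        exact lintegral_congr fun p => ENNReal.ofReal_mul (inv_nonneg.2 hτ₂.le)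
      apply ne_top_of_le_ne_top _ hmono
      rw [hadd, he1, he2]
      exact ENNReal.add_ne_top.2
        ⟨ENNReal.mul_ne_top ENNReal.ofReal_ne_top (Jt_ne_top ha1 hb1 hγ),
         ENNReal.mul_ne_top ENNReal.ofReal_ne_top (Jt_ne_top hb2 ha2 hγ)⟩
    have inf : α + β ≤ -1 → (∫⁻ p : ℝ × ℝ in Tset,
        ENNReal.ofReal (p.1 ^ α * p.2 ^ β * (1 - p.1 - p.2) ^ γ /
          (τ₁ * p.1 + τ₂ * p.2))) = ⊤ := by
      intro hab
      set m := min ((1/2:ℝ) ^ γ) ((1:ℝ) ^ γ) with hmdef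
      have hm0 : 0 < m := lt_min (Real.rpow_pos_of_pos (by norm_num) γ)
        (Real.rpow_pos_of_pos one_pos γ)
      have hτ12 : (0:ℝ) < τ₁ + τ₂ := by linarith
      have h1 : ∫⁻ p : ℝ × ℝ in
          {p : ℝ × ℝ | 0 < p.1 ∧ p.1 < 1/4 ∧ 0 < p.2 ∧ p.2 < (fun x : ℝ => x) p.1},
          ENNReal.ofReal (m / (τ₁ + τ₂) * (p.1 ^ (α - 1) * p.2 ^ β)) = ⊤ := by
        rw [tonelli (1/4) (fun x : ℝ => x) measurable_id
          (fun x y => ENNReal.ofReal (m / (τ₁ + τ₂) * (x ^ (α - 1) * y ^ β))) (by fun_prop)]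
        have hin : ∀ x ∈ Ioo (0:ℝ) (1/4),
            (∫⁻ y in Ioo (0:ℝ) ((fun x : ℝ => x) x),
              ENNReal.ofReal (m / (τ₁ + τ₂) * (x ^ (α - 1) * y ^ β)))
              = ENNReal.ofReal (m / (τ₁ + τ₂) / (β + 1)) * ENNReal.ofReal (x ^ (α + β)) := by
          intro x hx
          have e : ∀ y ∈ Ioo (0:ℝ) x,
              ENNReal.ofReal (m / (τ₁ + τ₂) * (x ^ (α - 1) * y ^ β))
                = ENNReal.ofReal (m / (τ₁ + τ₂) * x ^ (α - 1)) * ENNReal.ofReal (y ^ β) := by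
            intro y hy
            rw [show m / (τ₁ + τ₂) * (x ^ (α - 1) * y ^ β)
                = (m / (τ₁ + τ₂) * x ^ (α - 1)) * y ^ β from by ring,
              ENNReal.ofReal_mul
                (mul_nonneg (div_nonneg hm0.le hτ12.le) (Real.rpow_nonneg hx.1.le _))]
          rw [setLIntegral_congr_fun measurableSet_Ioo e,
            lintegral_const_mul' _ _ ENNReal.ofReal_ne_top, lint_rpow_eq hβ hx.1,
            ← ENNReal.ofReal_mul
              (mul_nonneg (div_nonneg hm0.le hτ12.le) (Real.rpow_nonneg hx.1.le _)),
            ← ENNReal.ofReal_mul (div_nonneg (div_nonneg hm0.le hτ12.le) (by linarith))]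
          congr 1
          rw [show x ^ (α + β) = x ^ (α - 1) * x ^ (β + 1) from by
            rw [← Real.rpow_add hx.1]; ring_nf]
          field_simp
        rw [setLIntegral_congr_fun measurableSet_Ioo hin,
          lintegral_const_mul' _ _ ENNReal.ofReal_ne_top, lint_rpow_top hab (by norm_num),
          ENNReal.mul_top
            (ENNReal.ofReal_pos.2 (div_pos (div_pos hm0 hτ12) (by linarith))).ne']
      have hlow : ∀ p ∈ {p : ℝ × ℝ | 0 < p.1 ∧ p.1 < 1/4 ∧ 0 < p.2 ∧ p.2 < (fun x : ℝ => x) p.1},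
          ENNReal.ofReal (m / (τ₁ + τ₂) * (p.1 ^ (α - 1) * p.2 ^ β))
            ≤ ENNReal.ofReal (p.1 ^ α * p.2 ^ β * (1 - p.1 - p.2) ^ γ /
              (τ₁ * p.1 + τ₂ * p.2)) := by
        rintro ⟨x, y⟩ ⟨h1', h2', h3', h4'⟩
        simp only [Prod.fst, Prod.snd] at h1' h2' h3' h4' ⊢
        have h4'' : y < x := h4'
        apply ENNReal.ofReal_le_ofReal
        have hwlo : m ≤ (1 - x - y) ^ γ :=
          (rpow_mem_bounds (c := γ) (by norm_num : (0:ℝ) < 1/2)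
            (by linarith) (by linarith)).1
        have e : m / (τ₁ + τ₂) * (x ^ (α - 1) * y ^ β)
            = (x ^ α * y ^ β * m) / ((τ₁ + τ₂) * x) := by
          rw [show x ^ α = x ^ (α - 1) * x from by
            rw [← Real.rpow_add_one h1'.ne' (α - 1)]; ring_nf]
          field_simp
        rw [e]
        have h5 : (0:ℝ) < 1 - x - y := by linarith
        have hnum : (0:ℝ) ≤ x ^ α * y ^ β * (1 - x - y) ^ γ :=
          mul_nonneg (mul_nonneg (Real.rpow_nonneg h1'.le _) (Real.rpow_nonneg h3'.le _))
            (Real.rpow_nonneg h5.le _)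
        apply div_le_div₀ hnum ?_ (by positivity) (by nlinarith)
        exact mul_le_mul_of_nonneg_left hwlo (by positivity)
      rw [eq_top_iff]
      calc (⊤ : ℝ≥0∞) = ∫⁻ p : ℝ × ℝ in
            {p : ℝ × ℝ | 0 < p.1 ∧ p.1 < 1/4 ∧ 0 < p.2 ∧ p.2 < (fun x : ℝ => x) p.1},
            ENNReal.ofReal (m / (τ₁ + τ₂) * (p.1 ^ (α - 1) * p.2 ^ β)) := h1.symm
        _ ≤ ∫⁻ p : ℝ × ℝ in
            {p : ℝ × ℝ | 0 < p.1 ∧ p.1 < 1/4 ∧ 0 < p.2 ∧ p.2 < (fun x : ℝ => x) p.1},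
            ENNReal.ofReal (p.1 ^ α * p.2 ^ β * (1 - p.1 - p.2) ^ γ /
              (τ₁ * p.1 + τ₂ * p.2)) := setLIntegral_mono (by fun_prop) hlow
        _ ≤ ∫⁻ p : ℝ × ℝ in Tset,
            ENNReal.ofReal (p.1 ^ α * p.2 ^ β * (1 - p.1 - p.2) ^ γ /
              (τ₁ * p.1 + τ₂ * p.2)) := by
            apply lintegral_mono_set
            rintro ⟨x, y⟩ ⟨h1', h2', h3', h4'⟩
            have h4'' : y < x := h4'
            exact ⟨h1', h3', by linarith⟩
    exact ⟨fun h => by by_contra hab; push_neg at hab; exact fin hab h, inf⟩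
  · rw [hTrfl]
    have h2 : (∫⁻ p : ℝ × ℝ in Tset,
        ENNReal.ofReal (p.1 ^ (α - 1) * p.2 ^ β * (1 - p.1 - p.2) ^ γ)) = Jt (α - 1) β γ := rfl
    rw [h2, Jt_top_iff hβ hγ]
    constructor <;> intro h <;> linarith
end

section
/- Let β, γ ≥ 0 be real numbers with β + γ > 0, and for k ∈ ℕ define D_k = (1/2)·(1 + (β²−γ²)/((2k+β+γ+2)(2k+β+γ))). (i) If β ≥ γ, then D_k ≥ 1/2 for all k and the infimum of the sequence (D_k)_{k∈ℕ} equals 1/2. (ii) If β < γ, then D_k ≥ (β+1)/(β+γ+2) for all k and D_0 = (β+1)/(β+γ+2), so the minimum of the sequence (D_k)_{k∈ℕ} equals (β+1)/(β+γ+2). -/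
/-- Infimum of the sequence `D_k = (1/2)(1 + (β²−γ²)/((2k+β+γ+2)(2k+β+γ)))`:
if `β ≥ γ` the infimum is `1/2` (and `D_k ≥ 1/2` for all `k`); if `β < γ` the
minimum is `(β+1)/(β+γ+2)`, attained at `k = 0`. -/
theorem stmt_13 (β γ : ℝ) (hβ : 0 ≤ β) (hγ : 0 ≤ γ) (hβγ : 0 < β + γ)
    (D : ℕ → ℝ)
    (hD : ∀ k, D k = (1 / 2) * (1 + (β ^ 2 - γ ^ 2)
      / ((2 * (k : ℝ) + β + γ + 2) * (2 * (k : ℝ) + β + γ)))) :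
    (γ ≤ β → (∀ k, 1 / 2 ≤ D k) ∧ (⨅ k, D k) = 1 / 2) ∧
    (β < γ → (∀ k, (β + 1) / (β + γ + 2) ≤ D k) ∧ D 0 = (β + 1) / (β + γ + 2) ∧
      (⨅ k, D k) = (β + 1) / (β + γ + 2)) := by
  have hden : ∀ k : ℕ, 0 < (2 * (k : ℝ) + β + γ + 2) * (2 * (k : ℝ) + β + γ) := by
    intro k
    have hk : (0:ℝ) ≤ k := Nat.cast_nonneg k
    nlinarith
  constructor
  · intro hle
    have hlb : ∀ k, 1 / 2 ≤ D k := by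
      intro k
      rw [hD k]
      have h1 := hden k
      have h2 : 0 ≤ (β ^ 2 - γ ^ 2) / ((2 * (k : ℝ) + β + γ + 2) * (2 * (k : ℝ) + β + γ)) :=
        div_nonneg (by nlinarith) h1.le
      linarith
    refine ⟨hlb, le_antisymm ?_ (le_ciInf hlb)⟩
    have hbdd : BddBelow (Set.range D) := ⟨1 / 2, by rintro x ⟨k, rfl⟩; exact hlb k⟩
    have h1 : Filter.Tendsto (fun k : ℕ => (2 * (k : ℝ) + β + γ + 2) * (2 * (k : ℝ) + β + γ))
        Filter.atTop Filter.atTop := by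
      have hb : Filter.Tendsto (fun k : ℕ => 2 * (k : ℝ)) Filter.atTop Filter.atTop :=
        (tendsto_natCast_atTop_atTop).const_mul_atTop two_pos
      have ha : Filter.Tendsto (fun k : ℕ => 2 * (k : ℝ) + β + γ + 2) Filter.atTop Filter.atTop :=
        Filter.tendsto_atTop_add_const_right _ 2
          (Filter.tendsto_atTop_add_const_right _ γ
            (Filter.tendsto_atTop_add_const_right _ β hb))
      have hc : Filter.Tendsto (fun k : ℕ => 2 * (k : ℝ) + β + γ) Filter.atTop Filter.atTop :=
        Filter.tendsto_atTop_add_const_right _ γ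
          (Filter.tendsto_atTop_add_const_right _ β hb)
      exact ha.atTop_mul_atTop₀ hc
    have h2 : Filter.Tendsto D Filter.atTop (nhds (1 / 2)) := by
      have h3 := Filter.Tendsto.const_mul ((β ^ 2 - γ ^ 2) / 2) h1.inv_tendsto_atTop
      rw [mul_zero] at h3
      have h4 := h3.const_add (1 / 2 : ℝ)
      rw [add_zero] at h4
      refine Filter.Tendsto.congr (fun k => ?_) h4
      simp only [Pi.inv_apply]
      rw [hD k, div_eq_mul_inv]
      ring
    exact ge_of_tendsto' h2 (fun k => ciInf_le hbdd k)
  · intro hlt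
    have hN : β ^ 2 - γ ^ 2 ≤ 0 := by nlinarith
    have hD0 : D 0 = (β + 1) / (β + γ + 2) := by
      rw [hD 0]
      have h1 : (0:ℝ) < β + γ + 2 := by linarith
      have h1' : β + γ ≠ 0 := by linarith
      simp only [Nat.cast_zero, mul_zero, zero_add]
      field_simp
      ring
    have hlb : ∀ k, (β + 1) / (β + γ + 2) ≤ D k := by
      intro k
      rw [← hD0, hD 0, hD k]
      have h0 := hden 0
      have hk := hden k
      have hkn : (0:ℝ) ≤ k := Nat.cast_nonneg k
      have hmono : (2 * ((0:ℕ) : ℝ) + β + γ + 2) * (2 * ((0:ℕ) : ℝ) + β + γ)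
          ≤ (2 * (k : ℝ) + β + γ + 2) * (2 * (k : ℝ) + β + γ) := by
        push_cast
        nlinarith
      have hdiv : (β ^ 2 - γ ^ 2) / ((2 * ((0:ℕ) : ℝ) + β + γ + 2) * (2 * ((0:ℕ) : ℝ) + β + γ))
          ≤ (β ^ 2 - γ ^ 2) / ((2 * (k : ℝ) + β + γ + 2) * (2 * (k : ℝ) + β + γ)) := by
        rw [div_le_div_iff₀ h0 hk]
        nlinarith
      linarith
    refine ⟨hlb, hD0, le_antisymm ?_ (le_ciInf hlb)⟩
    have hbdd : BddBelow (Set.range D) := ⟨_, by rintro x ⟨k, rfl⟩; exact hlb k⟩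
    calc (⨅ k, D k) ≤ D 0 := ciInf_le hbdd 0
      _ = (β + 1) / (β + γ + 2) := hD0
end

section
/- Let α, β, γ > −1 be real numbers with α² ≤ (β+γ+1)². For integers n ≥ 1 and 0 ≤ k ≤ n define a_{n,k} = (n−k+α+1)(n+k+α+β+γ+2)/((2n+α+β+γ+2)(2n+α+β+γ+3)) and c_{n,k} = (n−k)(n+k+β+γ+1)/((2n+α+β+γ+1)(2n+α+β+γ+2)). Then a_{n,k} + c_{n,k} ≤ 1/2 for all n ≥ 1 and 0 ≤ k ≤ n, and the supremum of a_{n,k} + c_{n,k} over all pairs (n,k) with n ≥ 1 and 0 ≤ k ≤ n equals 1/2. -/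
open Filter Topology

/-- In the regime `α² ≤ (β+γ+1)²`, the sums `a_{n,k} + c_{n,k}` of the diagonal
recurrence coefficients of the triangle polynomials (normalized at `(0,1)`) are all
at most `1/2`, and `1/2` is their supremum. -/
theorem stmt_14 (α β γ : ℝ) (hα : -1 < α) (hβ : -1 < β) (hγ : -1 < γ)
    (hreg : α ^ 2 ≤ (β + γ + 1) ^ 2)
    (a c : ℕ → ℕ → ℝ)
    (ha : ∀ n k, a n k = ((n : ℝ) - k + α + 1) * ((n : ℝ) + k + α + β + γ + 2)
      / ((2 * (n : ℝ) + α + β + γ + 2) * (2 * (n : ℝ) + α + β + γ + 3)))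
    (hc : ∀ n k, c n k = ((n : ℝ) - k) * ((n : ℝ) + k + β + γ + 1)
      / ((2 * (n : ℝ) + α + β + γ + 1) * (2 * (n : ℝ) + α + β + γ + 2))) :
    (∀ n k : ℕ, 1 ≤ n → k ≤ n → a n k + c n k ≤ 1 / 2) ∧
    sSup {x : ℝ | ∃ n k : ℕ, 1 ≤ n ∧ k ≤ n ∧ x = a n k + c n k} = 1 / 2 := by
  -- Denominator positivity for `n ≥ 1`
  have hD : ∀ n : ℕ, 1 ≤ n → ∀ i : ℝ, 1 ≤ i →
      0 < 2 * (n : ℝ) + α + β + γ + i := by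
    intro n hn i hi
    have : (1 : ℝ) ≤ (n : ℝ) := by exact_mod_cast hn
    nlinarith
  -- Key identity
  have key : ∀ n k : ℕ, 1 ≤ n →
      a n k + c n k = 1 / 2 -
        (((β + γ + 1) ^ 2 - α ^ 2) + 4 * (k : ℝ) * ((k : ℝ) + β + γ + 1)) /
          (2 * ((2 * (n : ℝ) + α + β + γ + 1) * (2 * (n : ℝ) + α + β + γ + 3))) := by
    intro n k hn
    have h1 := hD n hn 1 le_rfl
    have h2 := hD n hn 2 one_le_two
    have h3 := hD n hn 3 (by norm_num)
    rw [ha, hc]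
    rw [div_add_div _ _ (mul_ne_zero h2.ne' h3.ne') (mul_ne_zero h1.ne' h2.ne'), div_sub_div _ _ two_ne_zero (mul_ne_zero two_ne_zero (mul_ne_zero h1.ne' h3.ne')), div_eq_div_iff (mul_ne_zero (mul_ne_zero h2.ne' h3.ne') (mul_ne_zero h1.ne' h2.ne')) (mul_ne_zero two_ne_zero (mul_ne_zero two_ne_zero (mul_ne_zero h1.ne' h3.ne')))]
    ring
  -- Nonnegativity of the correction term
  have hE : ∀ k : ℕ, 0 ≤ ((β + γ + 1) ^ 2 - α ^ 2) + 4 * (k : ℝ) * ((k : ℝ) + β + γ + 1) := by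
    intro k
    have hk : 0 ≤ (k : ℝ) * ((k : ℝ) + β + γ + 1) := by
      rcases Nat.eq_zero_or_pos k with h | h
      · simp [h]
      · have : (1 : ℝ) ≤ (k : ℝ) := by exact_mod_cast h
        nlinarith
    nlinarith
  have part1 : ∀ n k : ℕ, 1 ≤ n → k ≤ n → a n k + c n k ≤ 1 / 2 := by
    intro n k hn _
    rw [key n k hn]
    have h1 := hD n hn 1 le_rfl
    have h3 := hD n hn 3 (by norm_num)
    have : 0 ≤ (((β + γ + 1) ^ 2 - α ^ 2) + 4 * (k : ℝ) * ((k : ℝ) + β + γ + 1)) /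
        (2 * ((2 * (n : ℝ) + α + β + γ + 1) * (2 * (n : ℝ) + α + β + γ + 3))) := by
      apply div_nonneg (hE k)
      positivity
    linarith
  refine ⟨part1, ?_⟩
  set S : Set ℝ := {x : ℝ | ∃ n k : ℕ, 1 ≤ n ∧ k ≤ n ∧ x = a n k + c n k} with hS
  have hne : S.Nonempty := ⟨a 1 0 + c 1 0, 1, 0, le_rfl, Nat.zero_le _, rfl⟩
  have hbdd : BddAbove S := by
    refine ⟨1 / 2, ?_⟩
    rintro x ⟨n, k, hn, hk, rfl⟩
    exact part1 n k hn hk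
  refine le_antisymm (csSup_le hne ?_) ?_
  · rintro x ⟨n, k, hn, hk, rfl⟩
    exact part1 n k hn hk
  · -- `a n 0 + c n 0 → 1/2`
    have hlim : Tendsto (fun n : ℕ => a n 0 + c n 0) atTop (𝓝 (1 / 2)) := by
      have hdiv : Tendsto (fun n : ℕ =>
          (((β + γ + 1) ^ 2 - α ^ 2) + 4 * ((0 : ℕ) : ℝ) * (((0 : ℕ) : ℝ) + β + γ + 1)) /
            (2 * ((2 * (n : ℝ) + α + β + γ + 1) * (2 * (n : ℝ) + α + β + γ + 3))))
          atTop (𝓝 0) := by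
        apply Tendsto.div_atTop tendsto_const_nhds
        apply Tendsto.const_mul_atTop two_pos
        apply Tendsto.atTop_mul_atTop₀
        · exact (tendsto_atTop_add_const_right _ (α + β + γ + 1)
            (tendsto_natCast_atTop_atTop.const_mul_atTop two_pos)).congr (fun n => by ring)
        · exact (tendsto_atTop_add_const_right _ (α + β + γ + 3)
            (tendsto_natCast_atTop_atTop.const_mul_atTop two_pos)).congr (fun n => by ring)
      have := (tendsto_const_nhds (x := (1 : ℝ) / 2) (f := atTop)).sub hdiv
      rw [sub_zero] at this
      refine this.congr' ?_
      filter_upwards [eventually_ge_atTop 1] with n hn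
      exact (key n 0 hn).symm
    refine le_of_tendsto hlim ?_
    filter_upwards [eventually_ge_atTop 1] with n hn
    exact le_csSup hbdd ⟨n, 0, hn, Nat.zero_le _, rfl⟩
end
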